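/- arXiv:2404.11693 — 3 statements merged into one kernel-verified Lean document; each statement's English description precedes it below -/
import Mathlib

section
/- Assume (φ1)–(φ3) and (V1)–(V5). Then problem (P) has exactly one heteroclinic solution: there exists a heteroclinic solution q of (P), and every heteroclinic solution of (P) is equal to q. -/
open Real Filter Set MeasureTheory Topology

noncomputable def Phi (φ : ℝ → ℝ) (t : ℝ) : ℝ := ∫ s in (0:ℝ)..|t|, s * φ s

def IsClassicalSolution (φ V q : ℝ → ℝ) : Prop :=
  Differentiable ℝ q ∧
  ∀ t : ℝ, HasDerivAt
    (fun s => if deriv q s = 0 then 0 else φ |deriv q s| * deriv q s)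
    (deriv V (q t)) t

def IsHeteroclinic (φ V : ℝ → ℝ) (α : ℝ) (q : ℝ → ℝ) : Prop :=
  IsClassicalSolution φ V q ∧ Differentiable ℝ (deriv q) ∧ Continuous (deriv q) ∧
  q 0 = 0 ∧ Tendsto q atTop (nhds α) ∧ Tendsto q atBot (nhds (-α))

namespace Het

noncomputable def psi (φ : ℝ → ℝ) : ℝ → ℝ := fun s => φ s * s

noncomputable def Phi0 (φ : ℝ → ℝ) : ℝ → ℝ := fun u => ∫ x in (0:ℝ)..u, psi φ x

noncomputable def Ham (φ : ℝ → ℝ) : ℝ → ℝ := fun s => psi φ s * s - Phi0 φ s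

open Classical in
noncomputable def Hinv (φ : ℝ → ℝ) (y : ℝ) : ℝ :=
  if h : ∃ s, 0 ≤ s ∧ Ham φ s = y then h.choose else 0

noncomputable def gf (φ V : ℝ → ℝ) : ℝ → ℝ := fun u => Hinv φ (V u)

noncomputable def Tf (φ V : ℝ → ℝ) : ℝ → ℝ := fun u => ∫ v in (0:ℝ)..u, (gf φ V v)⁻¹

open Classical in
noncomputable def qh (φ V : ℝ → ℝ) (α : ℝ) (t : ℝ) : ℝ :=
  if h : ∃ u, (u ∈ Ioo (-α) α ∧ Tf φ V u = t) then h.choose else 0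

lemma Phi_eq (φ : ℝ → ℝ) (x : ℝ) : Phi φ x = Phi0 φ |x| := by
  simp only [Phi, Phi0, psi, abs_abs]
  exact intervalIntegral.integral_congr (fun s _ => mul_comm s (φ s))

structure Ctx (φ V : ℝ → ℝ) (α : ℝ) : Type where
  l : ℝ
  c₁ : ℝ
  c₂ : ℝ
  δ₀ : ℝ
  r : ℝ
  a₂ : ℝ
  a₄ : ℝ
  δ : ℝ
  hl : 1 < l
  hφC1 : ContDiffOn ℝ 1 φ (Set.Ioi 0)
  hφpos : ∀ t > 0, 0 < φ t
  hφ1 : ∀ t > 0, 0 < deriv (fun s => φ s * s) t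
  hφ2l : ∀ t > 0, l - 1 ≤ deriv (fun s => φ s * s) t / φ t
  hc₁ : 0 < c₁
  hc₂ : 0 < c₂
  hδ₀ : 0 < δ₀
  hr : 1 < r
  hφ3 : ∀ t : ℝ, 0 < t → t ≤ δ₀ → c₁ * t ^ (r - 1) ≤ φ t * t ∧ φ t * t ≤ c₂ * t ^ (r - 1)
  hα : 0 < α
  hV1 : ContDiff ℝ 1 V
  hVnn : ∀ t, 0 ≤ V t
  hVα : V α = 0
  hVmα : V (-α) = 0
  hVpos : ∀ t, -α < t → t < α → 0 < V t
  ha₂ : 0 < a₂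
  ha₄ : 0 < a₄
  hδ : 0 < δ
  hδα : δ < α
  hV3r : ∀ t, α - δ < t → t ≤ α → V t ≤ a₂ * Phi0 φ (α - t)
  hV3l : ∀ t, -α ≤ t → t < -α + δ → V t ≤ a₄ * Phi0 φ (t + α)

namespace Ctx

variable {φ V : ℝ → ℝ} {α : ℝ}

lemma hr0 (c : Ctx φ V α) : (0:ℝ) < c.r := lt_trans zero_lt_one c.hr

lemma φcontAt (c : Ctx φ V α) {s : ℝ} (hs : 0 < s) : ContinuousAt φ s :=
  (c.hφC1.continuousOn.continuousAt (Ioi_mem_nhds hs))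

lemma φdiffAt (c : Ctx φ V α) {s : ℝ} (hs : 0 < s) : DifferentiableAt ℝ φ s :=
  ((c.hφC1.differentiableOn one_ne_zero).differentiableAt (Ioi_mem_nhds hs))

lemma psi_diffAt (c : Ctx φ V α) {s : ℝ} (hs : 0 < s) : DifferentiableAt ℝ (psi φ) s :=
  (c.φdiffAt hs).mul differentiableAt_id

lemma psi_hasDerivAt (c : Ctx φ V α) {s : ℝ} (hs : 0 < s) :
    HasDerivAt (psi φ) (deriv (psi φ) s) s :=
  (c.psi_diffAt hs).hasDerivAt

lemma dpsi_pos (c : Ctx φ V α) {s : ℝ} (hs : 0 < s) : 0 < deriv (psi φ) s := c.hφ1 s hs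

lemma dpsi_ge (c : Ctx φ V α) {s : ℝ} (hs : 0 < s) : (c.l - 1) * φ s ≤ deriv (psi φ) s := by
  have h := c.hφ2l s hs
  have hφp := c.hφpos s hs
  calc (c.l - 1) * φ s ≤ (deriv (fun s => φ s * s) s / φ s) * φ s :=
        mul_le_mul_of_nonneg_right h hφp.le
    _ = deriv (psi φ) s := by
        have hde : deriv (psi φ) s = deriv (fun s => φ s * s) s := rfl
        rw [hde]; field_simp

lemma psi_zero : psi φ 0 = 0 := by simp [psi]

lemma psi_pos (c : Ctx φ V α) {s : ℝ} (hs : 0 < s) : 0 < psi φ s := mul_pos (c.hφpos s hs) hs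

lemma psi_nonneg (c : Ctx φ V α) {s : ℝ} (hs : 0 ≤ s) : 0 ≤ psi φ s := by
  rcases hs.eq_or_lt with h | h
  · simp [← h, psi]
  · exact (c.psi_pos h).le

lemma psi_contOn (c : Ctx φ V α) : ContinuousOn (psi φ) (Ici 0) := by
  intro s hs
  rcases (mem_Ici.1 hs).eq_or_lt with h | h
  · subst h
    have hev : ∀ᶠ t in 𝓝[Ici (0:ℝ)] 0, t ∈ Icc (0:ℝ) c.δ₀ := by
      have : Icc (0:ℝ) c.δ₀ ∈ 𝓝[Ici (0:ℝ)] 0 := by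
        apply mem_nhdsWithin.2
        exact ⟨Iio c.δ₀, isOpen_Iio, by simpa using c.hδ₀, fun x hx => ⟨hx.2, le_of_lt hx.1⟩⟩
      exact this
    have hb : Tendsto (fun t : ℝ => c.c₂ * t ^ (c.r - 1)) (𝓝[Ici (0:ℝ)] 0) (𝓝 0) := by
      have hco : ContinuousAt (fun t : ℝ => t ^ (c.r - 1)) 0 :=
        Real.continuousAt_rpow_const 0 _ (Or.inr (by linarith [c.hr]))
      have := (hco.tendsto).const_mul c.c₂
      rw [Real.zero_rpow (by linarith [c.hr] : c.r - 1 ≠ 0), mul_zero] at this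
      exact this.mono_left nhdsWithin_le_nhds
    have : Tendsto (psi φ) (𝓝[Ici (0:ℝ)] 0) (𝓝 0) := by
      apply squeeze_zero' ?_ ?_ hb
      · filter_upwards [hev] with t ht
        exact c.psi_nonneg ht.1
      · filter_upwards [hev] with t ht
        rcases ht.1.eq_or_lt with h0 | h0
        · simp [← h0, psi, Real.zero_rpow (by linarith [c.hr] : c.r - 1 ≠ 0)]
        · exact (c.hφ3 t h0 ht.2).2
    have hz : psi φ 0 = 0 := psi_zero
    unfold ContinuousWithinAt
    rwa [hz]
  · exact ((c.φcontAt h).mul continuousAt_id).continuousWithinAt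

lemma psi_mono (c : Ctx φ V α) : StrictMonoOn (psi φ) (Ici 0) := by
  apply strictMonoOn_of_deriv_pos (convex_Ici 0) c.psi_contOn
  rw [interior_Ici]
  exact fun x hx => c.hφ1 x hx

lemma psi_intInt (c : Ctx φ V α) {a b : ℝ} (ha : 0 ≤ a) (hb : 0 ≤ b) :
    IntervalIntegrable (psi φ) volume a b := by
  apply ContinuousOn.intervalIntegrable
  apply c.psi_contOn.mono
  intro x hx
  rcases hx with ⟨h1, _⟩
  exact le_trans (le_min ha hb) h1

lemma Phi0_hasDerivAt (c : Ctx φ V α) {u : ℝ} (hu : 0 < u) :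
    HasDerivAt (Phi0 φ) (psi φ u) u := by
  apply intervalIntegral.integral_hasDerivAt_right (c.psi_intInt le_rfl hu.le)
  · exact (c.psi_contOn.mono (Ioi_subset_Ici le_rfl)).stronglyMeasurableAtFilter isOpen_Ioi u hu
  · exact (c.φcontAt hu).mul continuousAt_id

lemma Phi0_zero : Phi0 φ 0 = 0 := intervalIntegral.integral_same

lemma Phi0_contOn (c : Ctx φ V α) : ContinuousOn (Phi0 φ) (Ici 0) := by
  intro s hs
  have hs0 : (0:ℝ) ≤ s := mem_Ici.1 hs
  have hint : IntegrableOn (psi φ) (uIcc 0 (s+1)) volume := by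
    rw [uIcc_of_le (by linarith)]
    apply (c.psi_contOn.mono ?_).integrableOn_compact isCompact_Icc
    exact fun x hx => hx.1
  have h := (intervalIntegral.continuousOn_primitive_interval hint) s
    (by rw [uIcc_of_le (by linarith : (0:ℝ) ≤ s + 1)]; exact ⟨hs0, by linarith⟩)
  apply h.mono_of_mem_nhdsWithin
  have h1 : Ici (0:ℝ) ∩ Iic (s+1) ∈ 𝓝[Ici 0] s :=
    inter_mem_nhdsWithin _ (Iic_mem_nhds (by linarith))
  apply mem_of_superset h1
  intro x hx
  rw [uIcc_of_le (by linarith : (0:ℝ) ≤ s + 1)]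
  exact ⟨hx.1, hx.2⟩

lemma Phi0_mono (c : Ctx φ V α) : StrictMonoOn (Phi0 φ) (Ici 0) := by
  apply strictMonoOn_of_deriv_pos (convex_Ici 0) c.Phi0_contOn
  rw [interior_Ici]
  intro x hx
  rw [(c.Phi0_hasDerivAt hx).deriv]
  exact c.psi_pos hx

lemma Phi0_nonneg (c : Ctx φ V α) {u : ℝ} (hu : 0 ≤ u) : 0 ≤ Phi0 φ u := by
  rcases hu.eq_or_lt with h | h
  · simp [← h, Phi0_zero]
  · have h2 := c.Phi0_mono self_mem_Ici (mem_Ici.2 hu) h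
    rw [Phi0_zero] at h2
    exact h2.le

lemma Phi0_pos (c : Ctx φ V α) {u : ℝ} (hu : 0 < u) : 0 < Phi0 φ u := by
  have h2 := c.Phi0_mono self_mem_Ici (mem_Ici.2 hu.le) hu
  rwa [Phi0_zero] at h2


lemma mono_aid {f f' : ℝ → ℝ} {a b : ℝ} (hab : a ≤ b) (hf : ContinuousOn f (Icc a b))
    (hd : ∀ x ∈ Ioo a b, HasDerivAt f (f' x) x) (h0 : ∀ x ∈ Ioo a b, 0 ≤ f' x) :
    f a ≤ f b := by
  have hm := monotoneOn_of_hasDerivWithinAt_nonneg (convex_Icc a b) hf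
    (fun x hx => ((hd x (by rwa [interior_Icc] at hx)).hasDerivWithinAt))
    (fun x hx => h0 x (by rwa [interior_Icc] at hx))
  exact hm ⟨le_rfl, hab⟩ ⟨hab, le_rfl⟩ hab

lemma Phi0_le (c : Ctx φ V α) {u : ℝ} (hu : 0 ≤ u) (hu2 : u ≤ c.δ₀) :
    Phi0 φ u ≤ c.c₂ / c.r * u ^ c.r := by
  have hr0 : (0:ℝ) < c.r := c.hr0
  have key : (fun x => c.c₂ / c.r * x ^ c.r - Phi0 φ x) 0 ≤
      (fun x => c.c₂ / c.r * x ^ c.r - Phi0 φ x) u := by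
    refine mono_aid (f := fun x => c.c₂ / c.r * x ^ c.r - Phi0 φ x)
      (f' := fun x => c.c₂ * x ^ (c.r - 1) - psi φ x) hu ?_ ?_ ?_
    · apply ContinuousOn.sub
      · exact fun x _ => (continuousAt_const.mul
          (Real.continuousAt_rpow_const x c.r (Or.inr hr0.le))).continuousWithinAt
      · exact c.Phi0_contOn.mono (fun x hx => hx.1)
    · intro x hx
      have h1 := (Real.hasDerivAt_rpow_const (p := c.r) (Or.inl hx.1.ne')).const_mul (c.c₂ / c.r)
      have h2 := c.Phi0_hasDerivAt hx.1
      exact (h1.sub h2).congr_deriv (by rw [← mul_assoc, div_mul_cancel₀ _ hr0.ne'])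
    · intro x hx
      have := (c.hφ3 x hx.1 (le_trans hx.2.le hu2)).2
      simp only [psi, sub_nonneg]
      exact this
  simp only [Real.zero_rpow hr0.ne', mul_zero, Phi0_zero, sub_zero, zero_sub] at key
  linarith [key]

lemma Phi0_ge (c : Ctx φ V α) {u : ℝ} (hu : 0 ≤ u) (hu2 : u ≤ c.δ₀) :
    c.c₁ / c.r * u ^ c.r ≤ Phi0 φ u := by
  have hr0 : (0:ℝ) < c.r := c.hr0
  have key : (fun x => Phi0 φ x - c.c₁ / c.r * x ^ c.r) 0 ≤
      (fun x => Phi0 φ x - c.c₁ / c.r * x ^ c.r) u := by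
    refine mono_aid (f := fun x => Phi0 φ x - c.c₁ / c.r * x ^ c.r)
      (f' := fun x => psi φ x - c.c₁ * x ^ (c.r - 1)) hu ?_ ?_ ?_
    · apply ContinuousOn.sub
      · exact c.Phi0_contOn.mono (fun x hx => hx.1)
      · exact fun x _ => (continuousAt_const.mul
          (Real.continuousAt_rpow_const x c.r (Or.inr hr0.le))).continuousWithinAt
    · intro x hx
      have h1 := (Real.hasDerivAt_rpow_const (p := c.r) (Or.inl hx.1.ne')).const_mul (c.c₁ / c.r)
      have h2 := c.Phi0_hasDerivAt hx.1
      exact (h2.sub h1).congr_deriv (by rw [← mul_assoc, div_mul_cancel₀ _ hr0.ne'])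
    · intro x hx
      have := (c.hφ3 x hx.1 (le_trans hx.2.le hu2)).1
      simp only [psi, sub_nonneg]
      exact this
  simp only [Real.zero_rpow hr0.ne', mul_zero, Phi0_zero, sub_zero, zero_sub] at key
  linarith [key]

lemma Ham_zero : Ham φ 0 = 0 := by simp [Ham, psi, Phi0_zero]

lemma Ham_hasDerivAt (c : Ctx φ V α) {s : ℝ} (hs : 0 < s) :
    HasDerivAt (Ham φ) (deriv (psi φ) s * s) s := by
  have h1 := (c.psi_hasDerivAt hs).mul (hasDerivAt_id s)
  have h2 := c.Phi0_hasDerivAt hs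
  exact (h1.sub h2).congr_deriv (by simp [mul_comm])

lemma Ham_contOn (c : Ctx φ V α) : ContinuousOn (Ham φ) (Ici 0) :=
  (c.psi_contOn.mul continuousOn_id).sub c.Phi0_contOn

lemma Ham_mono (c : Ctx φ V α) : StrictMonoOn (Ham φ) (Ici 0) := by
  apply strictMonoOn_of_deriv_pos (convex_Ici 0) c.Ham_contOn
  rw [interior_Ici]
  intro x hx
  rw [(c.Ham_hasDerivAt hx).deriv]
  exact mul_pos (c.dpsi_pos hx) hx

lemma Ham_nonneg (c : Ctx φ V α) {s : ℝ} (hs : 0 ≤ s) : 0 ≤ Ham φ s := by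
  rcases hs.eq_or_lt with h | h
  · simp [← h, Ham_zero]
  · have h2 := c.Ham_mono self_mem_Ici (mem_Ici.2 hs) h
    rw [Ham_zero] at h2
    exact h2.le

lemma Ham_le_le (c : Ctx φ V α) {x y : ℝ} (hx : 0 ≤ x) (hy : 0 ≤ y)
    (h : Ham φ x ≤ Ham φ y) : x ≤ y := by
  by_contra hlt
  push_neg at hlt
  exact absurd h (not_le.2 (c.Ham_mono (mem_Ici.2 hy) (mem_Ici.2 hx) hlt))

lemma Ham_ge (c : Ctx φ V α) {s : ℝ} (hs : 0 ≤ s) :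
    (c.l - 1) * Phi0 φ s ≤ Ham φ s := by
  have key : (fun x => Ham φ x - (c.l - 1) * Phi0 φ x) 0 ≤
      (fun x => Ham φ x - (c.l - 1) * Phi0 φ x) s := by
    refine mono_aid (f := fun x => Ham φ x - (c.l - 1) * Phi0 φ x)
      (f' := fun x => deriv (psi φ) x * x - (c.l - 1) * psi φ x) hs ?_ ?_ ?_
    · exact (c.Ham_contOn.mono (fun x hx => hx.1)).sub
        ((c.Phi0_contOn.mono (fun x hx => hx.1)).const_smul (c.l - 1))
    · intro x hx
      exact (c.Ham_hasDerivAt hx.1).sub ((c.Phi0_hasDerivAt hx.1).const_mul _)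
    · intro x hx
      have h1 := c.dpsi_ge hx.1
      have h2 : (c.l - 1) * φ x * x ≤ deriv (psi φ) x * x :=
        mul_le_mul_of_nonneg_right h1 hx.1.le
      simp only [sub_nonneg, psi]
      calc (c.l - 1) * (φ x * x) = (c.l - 1) * φ x * x := by ring
        _ ≤ _ := h2
  simp only [Ham_zero, Phi0_zero, mul_zero, sub_zero, zero_sub] at key
  linarith [key]

lemma Phi0_top (c : Ctx φ V α) : Tendsto (Phi0 φ) atTop atTop := by
  have hψ1 : 0 < psi φ 1 := c.psi_pos one_pos
  have key : ∀ u : ℝ, 1 ≤ u → Phi0 φ 1 - psi φ 1 + psi φ 1 * u ≤ Phi0 φ u := by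
    intro u hu
    have h := mono_aid (f := fun x => Phi0 φ x - psi φ 1 * x)
      (f' := fun x => psi φ x - psi φ 1) (a := 1) (b := u) hu
      (ContinuousOn.sub (c.Phi0_contOn.mono (fun x hx => le_trans zero_le_one hx.1))
        ((continuous_const.mul continuous_id).continuousOn))
      (fun x hx => by
        exact ((c.Phi0_hasDerivAt (lt_trans one_pos hx.1)).sub
          ((hasDerivAt_id' x).const_mul (psi φ 1))).congr_deriv (by ring))
      (fun x hx => by
        simp only [sub_nonneg]
        exact (c.psi_mono (mem_Ici.2 zero_le_one)
          (mem_Ici.2 (by linarith [hx.1.le] : (0:ℝ) ≤ x)) hx.1).le)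
    linarith [h]
  have hlin : Tendsto (fun u : ℝ => Phi0 φ 1 - psi φ 1 + psi φ 1 * u) atTop atTop :=
    tendsto_atTop_add_const_left _ _ (Tendsto.const_mul_atTop hψ1 tendsto_id)
  apply tendsto_atTop_mono' atTop _ hlin
  filter_upwards [eventually_ge_atTop (1:ℝ)] with u hu using key u hu

lemma Ham_top (c : Ctx φ V α) : Tendsto (Ham φ) atTop atTop := by
  have hl1 : 0 < c.l - 1 := by linarith [c.hl]
  apply tendsto_atTop_mono' atTop _ (Tendsto.const_mul_atTop hl1 c.Phi0_top)
  filter_upwards [eventually_ge_atTop (0:ℝ)] with u hu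
  exact c.Ham_ge hu

lemma Hinv_ex (c : Ctx φ V α) {y : ℝ} (hy : 0 ≤ y) : ∃ s, 0 ≤ s ∧ Ham φ s = y := by
  obtain ⟨b, hb1, hb2⟩ : ∃ b, y ≤ Ham φ b ∧ 0 ≤ b := by
    have h1 := (c.Ham_top.eventually (eventually_ge_atTop y)).and (eventually_ge_atTop (0:ℝ))
    exact h1.exists
  have hIcc : y ∈ Icc (Ham φ 0) (Ham φ b) := by
    rw [Ham_zero]; exact ⟨hy, hb1⟩
  obtain ⟨s, hs, hs2⟩ := intermediate_value_Icc hb2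
    (c.Ham_contOn.mono (fun x hx => hx.1)) hIcc
  exact ⟨s, hs.1, hs2⟩

lemma Hinv_spec (c : Ctx φ V α) {y : ℝ} (hy : 0 ≤ y) :
    0 ≤ Hinv φ y ∧ Ham φ (Hinv φ y) = y := by
  have hex := c.Hinv_ex hy
  rw [Hinv, dif_pos hex]
  exact hex.choose_spec

lemma Hinv_unique (c : Ctx φ V α) {y s : ℝ} (hs : 0 ≤ s) (h : Ham φ s = y) :
    Hinv φ y = s := by
  have hy : 0 ≤ y := h ▸ c.Ham_nonneg hs
  have hsp := c.Hinv_spec hy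
  exact c.Ham_mono.injOn (mem_Ici.2 hsp.1) (mem_Ici.2 hs) (by rw [hsp.2, h])

lemma Hinv_zero (c : Ctx φ V α) : Hinv φ 0 = 0 :=
  c.Hinv_unique le_rfl Ham_zero

lemma Hinv_pos (c : Ctx φ V α) {y : ℝ} (hy : 0 < y) : 0 < Hinv φ y := by
  have hsp := c.Hinv_spec hy.le
  rcases hsp.1.eq_or_lt with h | h
  · exfalso
    rw [← h, Ham_zero] at hsp
    exact absurd hsp.2 (by linarith)
  · exact h

lemma Hinv_le (c : Ctx φ V α) {y s : ℝ} (hs : 0 ≤ s) (hy : 0 ≤ y)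
    (h : y ≤ Ham φ s) : Hinv φ y ≤ s := by
  have hsp := c.Hinv_spec hy
  exact c.Ham_le_le hsp.1 hs (by rw [hsp.2]; exact h)

lemma Hinv_contAt (c : Ctx φ V α) {y₀ : ℝ} (hy₀ : 0 < y₀) :
    ContinuousAt (Hinv φ) y₀ := by
  have hs₀ : 0 < Hinv φ y₀ := c.Hinv_pos hy₀
  have hspec := c.Hinv_spec hy₀.le
  rw [ContinuousAt]
  apply tendsto_order.2
  constructor
  · intro a ha
    set a' := max a (Hinv φ y₀ / 2) with ha'
    have ha'1 : 0 < a' := lt_max_of_lt_right (by linarith)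
    have ha'2 : a' < Hinv φ y₀ := max_lt ha (by linarith)
    have hHa' : Ham φ a' < y₀ := by
      have := c.Ham_mono (mem_Ici.2 ha'1.le) (mem_Ici.2 hspec.1) ha'2
      rwa [hspec.2] at this
    filter_upwards [eventually_gt_nhds hHa', eventually_gt_nhds hy₀] with y h1 h2
    by_contra hle
    push_neg at hle
    have : Ham φ (Hinv φ y) ≤ Ham φ a' := by
      rcases (c.Hinv_spec h2.le).1.eq_or_lt with he | he
      · rw [← he, Ham_zero]; exact c.Ham_nonneg ha'1.le
      · rcases lt_or_ge (Hinv φ y) a' with hc | hc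
        · exact (c.Ham_mono (mem_Ici.2 he.le) (mem_Ici.2 ha'1.le) hc).le
        · have hle2 : Hinv φ y ≤ a' := le_trans hle (le_max_left a _)
          rw [le_antisymm hle2 hc]
    rw [(c.Hinv_spec h2.le).2] at this
    exact absurd h1 (not_lt.2 this)
  · intro b hb
    have hb0 : 0 < b := lt_trans hs₀ hb
    have hHb : y₀ < Ham φ b := by
      have := c.Ham_mono (mem_Ici.2 hspec.1) (mem_Ici.2 hb0.le) hb
      rwa [hspec.2] at this
    filter_upwards [eventually_lt_nhds hHb, eventually_gt_nhds hy₀] with y h1 h2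
    by_contra hle
    push_neg at hle
    have : Ham φ b ≤ Ham φ (Hinv φ y) := by
      rcases hle.eq_or_lt with he | he
      · rw [he]
      · exact (c.Ham_mono (mem_Ici.2 hb0.le)
          (mem_Ici.2 (le_trans hb0.le hle)) he).le
    rw [(c.Hinv_spec h2.le).2] at this
    exact absurd h1 (not_lt.2 this)

lemma Hinv_hasDerivAt (c : Ctx φ V α) {y₀ : ℝ} (hy₀ : 0 < y₀) :
    HasDerivAt (Hinv φ) ((deriv (psi φ) (Hinv φ y₀) * Hinv φ y₀)⁻¹) y₀ := by
  have hs₀ : 0 < Hinv φ y₀ := c.Hinv_pos hy₀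
  apply HasDerivAt.of_local_left_inverse (c.Hinv_contAt hy₀) (c.Ham_hasDerivAt hs₀)
    (ne_of_gt (mul_pos (c.dpsi_pos hs₀) hs₀))
  filter_upwards [eventually_gt_nhds hy₀] with y hy
  exact (c.Hinv_spec hy.le).2


lemma Vcont (c : Ctx φ V α) : Continuous V := c.hV1.continuous

lemma V_hasDerivAt (c : Ctx φ V α) (u : ℝ) : HasDerivAt V (deriv V u) u :=
  ((c.hV1.differentiable one_ne_zero) u).hasDerivAt

lemma gf_nonneg (c : Ctx φ V α) (u : ℝ) : 0 ≤ gf φ V u :=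
  (c.Hinv_spec (c.hVnn u)).1

lemma gf_spec (c : Ctx φ V α) (u : ℝ) : Ham φ (gf φ V u) = V u :=
  (c.Hinv_spec (c.hVnn u)).2

lemma gf_pos (c : Ctx φ V α) {u : ℝ} (hu : u ∈ Ioo (-α) α) : 0 < gf φ V u :=
  c.Hinv_pos (c.hVpos u hu.1 hu.2)

lemma gf_contAt (c : Ctx φ V α) {u : ℝ} (hu : u ∈ Ioo (-α) α) :
    ContinuousAt (gf φ V) u :=
  (c.Hinv_contAt (c.hVpos u hu.1 hu.2)).comp (c.Vcont.continuousAt)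

lemma gf_hasDerivAt (c : Ctx φ V α) {u : ℝ} (hu : u ∈ Ioo (-α) α) :
    HasDerivAt (gf φ V)
      ((deriv (psi φ) (gf φ V u) * gf φ V u)⁻¹ * deriv V u) u := by
  have h := (c.Hinv_hasDerivAt (c.hVpos u hu.1 hu.2)).comp u (c.V_hasDerivAt u)
  exact h

noncomputable def CC (c : Ctx φ V α) : ℝ :=
  max 1 ((max c.a₂ c.a₄ * c.c₂ / ((c.l - 1) * c.c₁)) ^ (1 / c.r))

noncomputable def dd (c : Ctx φ V α) : ℝ := min (c.δ / 2) (c.δ₀ / c.CC)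

lemma CC_one (c : Ctx φ V α) : 1 ≤ c.CC := le_max_left _ _

lemma CC_pos (c : Ctx φ V α) : 0 < c.CC := lt_of_lt_of_le one_pos c.CC_one

lemma dd_pos (c : Ctx φ V α) : 0 < c.dd :=
  lt_min (by linarith [c.hδ]) (div_pos c.hδ₀ c.CC_pos)

lemma dd_lt_δ (c : Ctx φ V α) : c.dd < c.δ :=
  lt_of_le_of_lt (min_le_left _ _) (by linarith [c.hδ])

lemma dd_lt_α (c : Ctx φ V α) : c.dd < α := lt_trans c.dd_lt_δ c.hδα

lemma core_bound (c : Ctx φ V α) {e : ℝ} (he : 0 < e) (he2 : e ≤ c.δ₀ / c.CC) :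
    max c.a₂ c.a₄ * Phi0 φ e ≤ Ham φ (c.CC * e) := by
  have hl1 : (0:ℝ) < c.l - 1 := by linarith [c.hl]
  have hr0 := c.hr0
  have hA : (0:ℝ) < max c.a₂ c.a₄ := lt_max_of_lt_left c.ha₂
  set A := max c.a₂ c.a₄ with hAdef
  set B := A * c.c₂ / ((c.l - 1) * c.c₁) with hBdef
  have hB : 0 < B := div_pos (mul_pos hA c.hc₂) (mul_pos hl1 c.hc₁)
  have hCCr : B ≤ c.CC ^ c.r := by
    have h1 : (B ^ (1 / c.r)) ^ c.r = B := by
      rw [← Real.rpow_mul hB.le, one_div, inv_mul_cancel₀ hr0.ne', Real.rpow_one]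
    calc B = (B ^ (1 / c.r)) ^ c.r := h1.symm
      _ ≤ c.CC ^ c.r := Real.rpow_le_rpow (Real.rpow_nonneg hB.le _)
            (le_max_right _ _) hr0.le
  have hCCe : c.CC * e ≤ c.δ₀ := by
    rw [mul_comm]
    exact (le_div_iff₀ c.CC_pos).1 he2
  have heδ₀ : e ≤ c.δ₀ := le_trans (by nlinarith [c.CC_one] : e ≤ c.CC * e) hCCe
  have step1 : A * Phi0 φ e ≤ A * (c.c₂ / c.r * e ^ c.r) :=
    mul_le_mul_of_nonneg_left (c.Phi0_le he.le heδ₀) hA.le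
  have step2 : A * (c.c₂ / c.r * e ^ c.r) ≤ (c.l - 1) * (c.c₁ / c.r * (c.CC * e) ^ c.r) := by
    rw [Real.mul_rpow c.CC_pos.le he.le]
    have her : (0:ℝ) ≤ e ^ c.r := Real.rpow_nonneg he.le _
    have hkey : A * c.c₂ ≤ (c.l - 1) * c.c₁ * c.CC ^ c.r := by
      have h2 : (c.l - 1) * c.c₁ * B ≤ (c.l - 1) * c.c₁ * c.CC ^ c.r :=
        mul_le_mul_of_nonneg_left hCCr (mul_pos hl1 c.hc₁).le
      calc A * c.c₂ = (c.l - 1) * c.c₁ * B := by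
            rw [hBdef, mul_comm ((c.l - 1) * c.c₁), div_mul_cancel₀ _ (mul_pos hl1 c.hc₁).ne']
        _ ≤ _ := h2
    calc A * (c.c₂ / c.r * e ^ c.r) = (A * c.c₂) * (e ^ c.r / c.r) := by ring
      _ ≤ ((c.l - 1) * c.c₁ * c.CC ^ c.r) * (e ^ c.r / c.r) := by
          apply mul_le_mul_of_nonneg_right hkey
          positivity
      _ = (c.l - 1) * (c.c₁ / c.r * (c.CC ^ c.r * e ^ c.r)) := by ring
  have hCCe0 : (0:ℝ) ≤ c.CC * e := mul_nonneg c.CC_pos.le he.le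
  have step3 : (c.l - 1) * (c.c₁ / c.r * (c.CC * e) ^ c.r) ≤ (c.l - 1) * Phi0 φ (c.CC * e) :=
    mul_le_mul_of_nonneg_left (c.Phi0_ge hCCe0 hCCe) hl1.le
  have step4 : (c.l - 1) * Phi0 φ (c.CC * e) ≤ Ham φ (c.CC * e) :=
    c.Ham_ge hCCe0
  linarith

lemma boundR (c : Ctx φ V α) {u : ℝ} (h1 : α - c.dd ≤ u) (h2 : u < α) :
    V u ≤ Ham φ (c.CC * (α - u)) := by
  have he : 0 < α - u := by linarith
  have hddle : c.dd ≤ c.δ₀ / c.CC := min_le_right _ _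
  have he2 : α - u ≤ c.δ₀ / c.CC := le_trans (by linarith) hddle
  have hVu : V u ≤ c.a₂ * Phi0 φ (α - u) :=
    c.hV3r u (by linarith [c.dd_lt_δ]) h2.le
  calc V u ≤ c.a₂ * Phi0 φ (α - u) := hVu
    _ ≤ max c.a₂ c.a₄ * Phi0 φ (α - u) :=
        mul_le_mul_of_nonneg_right (le_max_left _ _) (c.Phi0_nonneg he.le)
    _ ≤ Ham φ (c.CC * (α - u)) := c.core_bound he he2

lemma boundL (c : Ctx φ V α) {u : ℝ} (h1 : -α < u) (h2 : u ≤ -α + c.dd) :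
    V u ≤ Ham φ (c.CC * (u + α)) := by
  have he : 0 < u + α := by linarith
  have hddle : c.dd ≤ c.δ₀ / c.CC := min_le_right _ _
  have he2 : u + α ≤ c.δ₀ / c.CC := le_trans (by linarith) hddle
  have hVu : V u ≤ c.a₄ * Phi0 φ (u + α) :=
    c.hV3l u (by linarith) (by linarith [c.dd_lt_δ])
  calc V u ≤ c.a₄ * Phi0 φ (u + α) := hVu
    _ ≤ max c.a₂ c.a₄ * Phi0 φ (u + α) :=
        mul_le_mul_of_nonneg_right (le_max_right _ _) (c.Phi0_nonneg he.le)
    _ ≤ Ham φ (c.CC * (u + α)) := c.core_bound he he2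

lemma gf_leR (c : Ctx φ V α) {u : ℝ} (h1 : α - c.dd ≤ u) (h2 : u < α) :
    gf φ V u ≤ c.CC * (α - u) := by
  have he : (0:ℝ) < α - u := by linarith
  exact c.Hinv_le (mul_nonneg c.CC_pos.le he.le) (c.hVnn u) (c.boundR h1 h2)

lemma gf_leL (c : Ctx φ V α) {u : ℝ} (h1 : -α < u) (h2 : u ≤ -α + c.dd) :
    gf φ V u ≤ c.CC * (u + α) := by
  have he : (0:ℝ) < u + α := by linarith
  exact c.Hinv_le (mul_nonneg c.CC_pos.le he.le) (c.hVnn u) (c.boundL h1 h2)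

lemma mem0 (c : Ctx φ V α) : (0:ℝ) ∈ Ioo (-α) α := ⟨by linarith [c.hα], c.hα⟩

lemma subIoo (c : Ctx φ V α) {u : ℝ} (hu : u ∈ Ioo (-α) α) :
    uIcc 0 u ⊆ Ioo (-α) α := by
  intro x hx
  rcases hx with ⟨hx1, hx2⟩
  constructor
  · exact lt_of_lt_of_le (lt_min c.mem0.1 hu.1) hx1
  · exact lt_of_le_of_lt hx2 (max_lt c.mem0.2 hu.2)

lemma gf_inv_contOn (c : Ctx φ V α) :
    ContinuousOn (fun v => (gf φ V v)⁻¹) (Ioo (-α) α) :=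
  fun v hv => ((c.gf_contAt hv).continuousWithinAt).inv₀ (ne_of_gt (c.gf_pos hv))

lemma Tf_hasDerivAt (c : Ctx φ V α) {u : ℝ} (hu : u ∈ Ioo (-α) α) :
    HasDerivAt (Tf φ V) ((gf φ V u)⁻¹) u := by
  apply intervalIntegral.integral_hasDerivAt_right
  · exact (c.gf_inv_contOn.mono (c.subIoo hu)).intervalIntegrable
  · exact c.gf_inv_contOn.stronglyMeasurableAtFilter isOpen_Ioo u hu
  · exact ((c.gf_contAt hu).inv₀ (ne_of_gt (c.gf_pos hu)))

lemma Tf_zero : Tf φ V 0 = 0 := intervalIntegral.integral_same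

lemma Tf_contOn (c : Ctx φ V α) : ContinuousOn (Tf φ V) (Ioo (-α) α) :=
  fun u hu => (c.Tf_hasDerivAt hu).continuousAt.continuousWithinAt

lemma Tf_mono (c : Ctx φ V α) : StrictMonoOn (Tf φ V) (Ioo (-α) α) := by
  apply strictMonoOn_of_deriv_pos (convex_Ioo _ _) c.Tf_contOn
  rw [interior_Ioo]
  intro x hx
  rw [(c.Tf_hasDerivAt hx).deriv]
  exact inv_pos.2 (c.gf_pos hx)

lemma Tf_lowR (c : Ctx φ V α) {u : ℝ} (hu : u ∈ Ico (α - c.dd) α) :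
    Tf φ V (α - c.dd) + (1 / c.CC) * Real.log (α - (α - c.dd))
      + (1 / c.CC) * (- Real.log (α - u)) ≤ Tf φ V u := by
  set u₁ := α - c.dd with hu₁
  have hu₁m : u₁ ∈ Ioo (-α) α := by
    constructor
    · have := c.dd_lt_α; have := c.hα; simp only [hu₁]; linarith
    · simp only [hu₁]; linarith [c.dd_pos]
  have hIcc : Icc u₁ u ⊆ Ioo (-α) α := by
    intro x hx
    exact ⟨lt_of_lt_of_le hu₁m.1 hx.1, lt_of_le_of_lt hx.2 hu.2⟩
  have h := mono_aid (f := fun v => Tf φ V v + (1 / c.CC) * Real.log (α - v))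
    (f' := fun v => (gf φ V v)⁻¹ + (1 / c.CC) * ((α - v)⁻¹ * (-1)))
    (a := u₁) (b := u) hu.1 ?_ ?_ ?_
  · linarith [h]
  · apply ContinuousOn.add (c.Tf_contOn.mono hIcc)
    apply ContinuousOn.mul continuousOn_const
    intro v hv
    have hvα : α - v ≠ 0 := by
      have := hv.2; have := hu.2; intro hc; linarith [lt_of_le_of_lt hv.2 hu.2]
    exact ((Real.continuousAt_log hvα).comp
      ((continuous_const.sub continuous_id).continuousAt)).continuousWithinAt
  · intro v hv
    have hvm : v ∈ Ioo (-α) α := hIcc ⟨hv.1.le, hv.2.le⟩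
    have hvα : (0:ℝ) < α - v := by linarith [hvm.2]
    exact (c.Tf_hasDerivAt hvm).add
      (((Real.hasDerivAt_log hvα.ne').comp v ((hasDerivAt_id v).const_sub α)).const_mul (1 / c.CC))
  · intro v hv
    have hvm : v ∈ Ioo (-α) α := hIcc ⟨hv.1.le, hv.2.le⟩
    have hvα : (0:ℝ) < α - v := by linarith [hvm.2]
    have hgb : gf φ V v ≤ c.CC * (α - v) := c.gf_leR (by linarith [hv.1]) hvm.2
    have hinv : (c.CC * (α - v))⁻¹ ≤ (gf φ V v)⁻¹ := inv_anti₀ (c.gf_pos hvm) hgb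
    rw [mul_inv] at hinv
    have hCC := c.CC_pos
    have h1 : (0:ℝ) < (α - v)⁻¹ := inv_pos.2 hvα
    simp only [one_div]
    nlinarith [hinv]

lemma Tf_top (c : Ctx φ V α) : Tendsto (Tf φ V) (𝓝[<] α) atTop := by
  have hsub : Tendsto (fun u => α - u) (𝓝[<] α) (𝓝[>] (0:ℝ)) := by
    apply tendsto_nhdsWithin_of_tendsto_nhds_of_eventually_within
    · have : Tendsto (fun u : ℝ => α - u) (𝓝 α) (𝓝 (α - α)) :=
        (continuous_const.sub continuous_id).tendsto α
      rw [sub_self] at this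
      exact this.mono_left nhdsWithin_le_nhds
    · exact eventually_mem_nhdsWithin.mono (fun u hu => mem_Ioi.2 (sub_pos.2 hu))
  have hlog : Tendsto (fun u => Real.log (α - u)) (𝓝[<] α) atBot :=
    Real.tendsto_log_nhdsGT_zero.comp hsub
  have hCC := c.CC_pos
  have hlin : Tendsto (fun u => Tf φ V (α - c.dd) + (1 / c.CC) * Real.log (α - (α - c.dd))
      + (1 / c.CC) * (- Real.log (α - u))) (𝓝[<] α) atTop := by
    apply tendsto_atTop_add_const_left
    exact Tendsto.const_mul_atTop (by positivity) (tendsto_neg_atBot_atTop.comp hlog)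
  apply tendsto_atTop_mono' (𝓝[<] α) _ hlin
  have hev1 : ∀ᶠ u in 𝓝[<] α, α - c.dd < u :=
    (eventually_gt_nhds (by linarith [c.dd_pos] : α - c.dd < α)).filter_mono nhdsWithin_le_nhds
  filter_upwards [hev1, eventually_mem_nhdsWithin] with u h1 h2
  exact c.Tf_lowR ⟨h1.le, h2⟩

lemma Tf_highL (c : Ctx φ V α) {u : ℝ} (hu : u ∈ Ioc (-α) (-α + c.dd)) :
    Tf φ V u ≤ Tf φ V (-α + c.dd) - (1 / c.CC) * Real.log ((-α + c.dd) + α)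
      + (1 / c.CC) * Real.log (u + α) := by
  set u₂ := -α + c.dd with hu₂
  have hu₂m : u₂ ∈ Ioo (-α) α := by
    constructor
    · simp only [hu₂]; linarith [c.dd_pos]
    · have := c.dd_lt_α; have := c.hα; simp only [hu₂]; linarith
  have hIcc : Icc u u₂ ⊆ Ioo (-α) α := by
    intro x hx
    exact ⟨lt_of_lt_of_le hu.1 hx.1, lt_of_le_of_lt hx.2 hu₂m.2⟩
  have h := mono_aid (f := fun v => Tf φ V v - (1 / c.CC) * Real.log (v + α))
    (f' := fun v => (gf φ V v)⁻¹ - (1 / c.CC) * ((v + α)⁻¹ * 1))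
    (a := u) (b := u₂) hu.2 ?_ ?_ ?_
  · linarith [h]
  · apply ContinuousOn.sub (c.Tf_contOn.mono hIcc)
    apply ContinuousOn.mul continuousOn_const
    intro v hv
    have hvα : v + α ≠ 0 := by
      have h3 := lt_of_lt_of_le hu.1 hv.1
      intro hc; linarith
    have h5 : ContinuousAt (fun x : ℝ => x + α) v := by fun_prop
    exact (ContinuousAt.comp (g := Real.log) (f := fun x : ℝ => x + α) (x := v)
      (Real.continuousAt_log hvα) h5).continuousWithinAt
  · intro v hv
    have hvm : v ∈ Ioo (-α) α := hIcc ⟨hv.1.le, hv.2.le⟩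
    have hvα : (0:ℝ) < v + α := by linarith [hvm.1]
    exact (c.Tf_hasDerivAt hvm).sub
      (((Real.hasDerivAt_log hvα.ne').comp v ((hasDerivAt_id v).add_const α)).const_mul (1 / c.CC))
  · intro v hv
    have hvm : v ∈ Ioo (-α) α := hIcc ⟨hv.1.le, hv.2.le⟩
    have hvα : (0:ℝ) < v + α := by linarith [hvm.1]
    have hgb : gf φ V v ≤ c.CC * (v + α) := c.gf_leL hvm.1 (by linarith [hv.2])
    have hinv : (c.CC * (v + α))⁻¹ ≤ (gf φ V v)⁻¹ := inv_anti₀ (c.gf_pos hvm) hgb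
    rw [mul_inv] at hinv
    have hCC := c.CC_pos
    have h1 : (0:ℝ) < (v + α)⁻¹ := inv_pos.2 hvα
    simp only [one_div, mul_one]
    nlinarith [hinv]

lemma Tf_bot (c : Ctx φ V α) : Tendsto (Tf φ V) (𝓝[>] (-α)) atBot := by
  have hsub : Tendsto (fun u => u + α) (𝓝[>] (-α)) (𝓝[>] (0:ℝ)) := by
    apply tendsto_nhdsWithin_of_tendsto_nhds_of_eventually_within
    · have : Tendsto (fun u : ℝ => u + α) (𝓝 (-α)) (𝓝 (-α + α)) :=
        (continuous_id.add continuous_const).tendsto (-α)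
      rw [neg_add_cancel] at this
      exact this.mono_left nhdsWithin_le_nhds
    · exact eventually_mem_nhdsWithin.mono (fun u hu => by
        simp only [mem_Ioi] at *; linarith)
  have hlog : Tendsto (fun u => Real.log (u + α)) (𝓝[>] (-α)) atBot :=
    Real.tendsto_log_nhdsGT_zero.comp hsub
  have hCC := c.CC_pos
  have hlin : Tendsto (fun u => Tf φ V (-α + c.dd) - (1 / c.CC) * Real.log ((-α + c.dd) + α)
      + (1 / c.CC) * Real.log (u + α)) (𝓝[>] (-α)) atBot := by
    apply tendsto_atBot_add_const_left
    exact Tendsto.const_mul_atBot (by positivity) hlog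
  apply tendsto_atBot_mono' (𝓝[>] (-α)) _ hlin
  have hev1 : ∀ᶠ u in 𝓝[>] (-α), u < -α + c.dd :=
    (eventually_lt_nhds (by linarith [c.dd_pos] : -α < -α + c.dd)).filter_mono nhdsWithin_le_nhds
  filter_upwards [hev1, eventually_mem_nhdsWithin] with u h1 h2
  exact c.Tf_highL ⟨h2, h1.le⟩


lemma qh_ex (c : Ctx φ V α) (t : ℝ) : ∃ u, u ∈ Ioo (-α) α ∧ Tf φ V u = t := by
  obtain ⟨u₂, hu₂⟩ : ∃ u₂, u₂ ∈ Ioo (-α) α ∧ t ≤ Tf φ V u₂ := by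
    have h1 := (c.Tf_top.eventually (eventually_ge_atTop t)).and
      (eventually_mem_nhdsWithin.and
        (((eventually_gt_nhds (by linarith [c.hα] : -α < α)).filter_mono
          (nhdsWithin_le_nhds (s := Iio α)))))
    obtain ⟨u, hu⟩ := h1.exists
    exact ⟨u, ⟨hu.2.2, hu.2.1⟩, hu.1⟩
  obtain ⟨u₁, hu₁⟩ : ∃ u₁, u₁ ∈ Ioo (-α) α ∧ Tf φ V u₁ ≤ t := by
    have h1 := (c.Tf_bot.eventually (eventually_le_atBot t)).and
      (eventually_mem_nhdsWithin.and
        (((eventually_lt_nhds (by linarith [c.hα] : -α < α)).filter_mono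
          (nhdsWithin_le_nhds (s := Ioi (-α))))))
    obtain ⟨u, hu⟩ := h1.exists
    exact ⟨u, ⟨hu.2.1, hu.2.2⟩, hu.1⟩
  rcases le_or_gt u₂ u₁ with hc | hc
  · rcases hc.eq_or_lt with he | he
    · exact ⟨u₁, hu₁.1, le_antisymm hu₁.2 (he ▸ hu₂.2)⟩
    · have := c.Tf_mono hu₂.1 hu₁.1 he
      exact ⟨u₁, hu₁.1, le_antisymm hu₁.2 (le_trans hu₂.2 this.le)⟩
  · have hsub : Icc u₁ u₂ ⊆ Ioo (-α) α := fun x hx =>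
      ⟨lt_of_lt_of_le hu₁.1.1 hx.1, lt_of_le_of_lt hx.2 hu₂.1.2⟩
    obtain ⟨u, hu, hu2⟩ := intermediate_value_Icc hc.le
      (c.Tf_contOn.mono hsub) ⟨hu₁.2, hu₂.2⟩
    exact ⟨u, hsub hu, hu2⟩

lemma qh_spec (c : Ctx φ V α) (t : ℝ) :
    qh φ V α t ∈ Ioo (-α) α ∧ Tf φ V (qh φ V α t) = t := by
  have hex := c.qh_ex t
  rw [qh, dif_pos hex]
  exact hex.choose_spec

lemma qh_mem (c : Ctx φ V α) (t : ℝ) : qh φ V α t ∈ Ioo (-α) α := (c.qh_spec t).1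

lemma qh_T (c : Ctx φ V α) (t : ℝ) : Tf φ V (qh φ V α t) = t := (c.qh_spec t).2

lemma qh_eq (c : Ctx φ V α) {u : ℝ} (hu : u ∈ Ioo (-α) α) : qh φ V α (Tf φ V u) = u :=
  c.Tf_mono.injOn (c.qh_mem _) hu (c.qh_T _)

lemma qh_zero (c : Ctx φ V α) : qh φ V α 0 = 0 := by
  have h := c.qh_eq c.mem0
  rwa [Tf_zero] at h

lemma qh_contAt (c : Ctx φ V α) (t₀ : ℝ) : ContinuousAt (qh φ V α) t₀ := by
  have hm := c.qh_mem t₀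
  have hT := c.qh_T t₀
  rw [ContinuousAt]
  apply tendsto_order.2
  constructor
  · intro a ha
    set a' := max a ((-α + qh φ V α t₀) / 2) with ha'
    have ha'1 : a' ∈ Ioo (-α) α := by
      constructor
      · apply lt_max_of_lt_right; linarith [hm.1]
      · apply max_lt (lt_trans ha hm.2); linarith [hm.1, hm.2]
    have ha'2 : a' < qh φ V α t₀ := max_lt ha (by linarith [hm.1])
    have hTa' : Tf φ V a' < t₀ := by
      have := c.Tf_mono ha'1 hm ha'2
      rwa [hT] at this
    filter_upwards [eventually_gt_nhds hTa'] with y hy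
    by_contra hle
    push_neg at hle
    have h2 : Tf φ V (qh φ V α y) ≤ Tf φ V a' := by
      rcases (le_trans hle (le_max_left a _)).eq_or_lt with he | he
      · rw [he]
      · exact (c.Tf_mono (c.qh_mem y) ha'1 he).le
    rw [c.qh_T y] at h2
    exact absurd hy (not_lt.2 h2)
  · intro b hb
    set b' := min b ((α + qh φ V α t₀) / 2) with hb'
    have hb'1 : b' ∈ Ioo (-α) α := by
      constructor
      · apply lt_min (lt_trans hm.1 hb); linarith [hm.1, hm.2]
      · apply min_lt_of_right_lt; linarith [hm.2]
    have hb'2 : qh φ V α t₀ < b' := lt_min hb (by linarith [hm.2])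
    have hTb' : t₀ < Tf φ V b' := by
      have := c.Tf_mono hm hb'1 hb'2
      rwa [hT] at this
    filter_upwards [eventually_lt_nhds hTb'] with y hy
    by_contra hle
    push_neg at hle
    have h2 : Tf φ V b' ≤ Tf φ V (qh φ V α y) := by
      rcases (le_trans (min_le_left b ((α + qh φ V α t₀) / 2)) hle).eq_or_lt with he | he
      · rw [hb', he]
      · exact (c.Tf_mono hb'1 (c.qh_mem y) he).le
    rw [c.qh_T y] at h2
    exact absurd hy (not_lt.2 h2)

lemma qh_hasDerivAt (c : Ctx φ V α) (t : ℝ) :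
    HasDerivAt (qh φ V α) (gf φ V (qh φ V α t)) t := by
  have h := HasDerivAt.of_local_left_inverse (c.qh_contAt t)
    (c.Tf_hasDerivAt (c.qh_mem t)) (inv_ne_zero (ne_of_gt (c.gf_pos (c.qh_mem t))))
    (Eventually.of_forall (c.qh_T))
  rwa [inv_inv] at h

lemma qh_top (c : Ctx φ V α) : Tendsto (qh φ V α) atTop (𝓝 α) := by
  apply tendsto_order.2
  constructor
  · intro a ha
    set a' := max a 0 with ha'
    have ha'1 : a' ∈ Ioo (-α) α := ⟨lt_max_of_lt_right (by linarith [c.hα]), max_lt ha c.hα⟩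
    filter_upwards [eventually_gt_atTop (Tf φ V a')] with t ht
    by_contra hle
    push_neg at hle
    have h2 : Tf φ V (qh φ V α t) ≤ Tf φ V a' := by
      rcases (le_trans hle (le_max_left a _)).eq_or_lt with he | he
      · rw [he]
      · exact (c.Tf_mono (c.qh_mem t) ha'1 he).le
    rw [c.qh_T t] at h2
    exact absurd ht (not_lt.2 h2)
  · intro b hb
    exact Eventually.of_forall (fun t => lt_trans (c.qh_mem t).2 hb)

lemma qh_bot (c : Ctx φ V α) : Tendsto (qh φ V α) atBot (𝓝 (-α)) := by
  apply tendsto_order.2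
  constructor
  · intro a ha
    exact Eventually.of_forall (fun t => lt_of_lt_of_le ha (c.qh_mem t).1.le)
  · intro b hb
    set b' := min b 0 with hb'
    have hb'1 : b' ∈ Ioo (-α) α := ⟨lt_min hb (by linarith [c.hα]), min_lt_of_right_lt c.hα⟩
    filter_upwards [eventually_lt_atBot (Tf φ V b')] with t ht
    by_contra hle
    push_neg at hle
    have h2 : Tf φ V b' ≤ Tf φ V (qh φ V α t) := by
      rcases (le_trans (min_le_left b 0) hle).eq_or_lt with he | he
      · rw [hb', he]
      · exact (c.Tf_mono hb'1 (c.qh_mem t) he).le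
    rw [c.qh_T t] at h2
    exact absurd ht (not_lt.2 h2)

lemma qh_deriv (c : Ctx φ V α) : deriv (qh φ V α) = fun t => gf φ V (qh φ V α t) :=
  funext (fun t => (c.qh_hasDerivAt t).deriv)


lemma qh_hetero (c : Ctx φ V α) : IsHeteroclinic φ V α (qh φ V α) := by
  have hdiff : Differentiable ℝ (qh φ V α) := fun t => (c.qh_hasDerivAt t).differentiableAt
  have hfe : (fun s => if deriv (qh φ V α) s = 0 then 0
      else φ |deriv (qh φ V α) s| * deriv (qh φ V α) s)
      = fun s => psi φ (gf φ V (qh φ V α s)) := by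
    funext s
    simp only [c.qh_deriv]
    have hg := c.gf_pos (c.qh_mem s)
    rw [if_neg hg.ne', abs_of_pos hg]
    rfl
  refine ⟨⟨hdiff, ?_⟩, ?_, ?_, c.qh_zero, c.qh_top, c.qh_bot⟩
  · intro t
    rw [hfe]
    have hgt := c.gf_pos (c.qh_mem t)
    have h1 : HasDerivAt (psi φ) (deriv (psi φ) (gf φ V (qh φ V α t))) (gf φ V (qh φ V α t)) :=
      c.psi_hasDerivAt hgt
    have h2 := c.gf_hasDerivAt (c.qh_mem t)
    have h3 := c.qh_hasDerivAt t
    have hg1 : HasDerivAt (fun s => gf φ V (qh φ V α s))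
        (((deriv (psi φ) (gf φ V (qh φ V α t)) * gf φ V (qh φ V α t))⁻¹
          * deriv V (qh φ V α t)) * gf φ V (qh φ V α t)) t := h2.comp t h3
    have h5 : HasDerivAt (fun s => psi φ (gf φ V (qh φ V α s)))
        (deriv (psi φ) (gf φ V (qh φ V α t)) *
          (((deriv (psi φ) (gf φ V (qh φ V α t)) * gf φ V (qh φ V α t))⁻¹
            * deriv V (qh φ V α t)) * gf φ V (qh φ V α t))) t := by have := h1.comp t hg1; exact this
    have hne1 : deriv (psi φ) (gf φ V (qh φ V α t)) ≠ 0 := (c.dpsi_pos hgt).ne'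
    have hval : deriv (psi φ) (gf φ V (qh φ V α t)) *
          (((deriv (psi φ) (gf φ V (qh φ V α t)) * gf φ V (qh φ V α t))⁻¹
            * deriv V (qh φ V α t)) * gf φ V (qh φ V α t)) = deriv V (qh φ V α t) := by
      field_simp
    rwa [hval] at h5
  · rw [c.qh_deriv]
    exact fun t => ((c.gf_hasDerivAt (c.qh_mem t)).comp t (c.qh_hasDerivAt t)).differentiableAt
  · rw [c.qh_deriv]
    have : Differentiable ℝ (fun t => gf φ V (qh φ V α t)) :=
      fun t => ((c.gf_hasDerivAt (c.qh_mem t)).comp t (c.qh_hasDerivAt t)).differentiableAt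
    exact this.continuous


end Ctx

noncomputable def Lam (φ : ℝ → ℝ) : ℝ → ℝ := fun x => if x = 0 then 0 else φ |x| * x

namespace Ctx

variable {φ V : ℝ → ℝ} {α : ℝ}

lemma Phi_zero : Phi φ 0 = 0 := by rw [Phi_eq, abs_zero, Phi0_zero]

lemma Phi_hasDerivAt (c : Ctx φ V α) (x : ℝ) : HasDerivAt (Phi φ) (Lam φ x) x := by
  rcases lt_trichotomy x 0 with hx | hx | hx
  · have h0 := c.Phi0_hasDerivAt (neg_pos.2 hx)
    have hneg : HasDerivAt (fun y : ℝ => -y) (-1) x := (hasDerivAt_id x).neg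
    have h1 := h0.comp x hneg
    have h2 : Phi φ =ᶠ[𝓝 x] (fun y => Phi0 φ (-y)) := by
      filter_upwards [eventually_lt_nhds hx] with y hy
      rw [Phi_eq, abs_of_neg hy]
    have h3 := h1.congr_of_eventuallyEq h2
    have hval : psi φ (-x) * (-1) = Lam φ x := by
      rw [Lam]
      simp only [if_neg hx.ne, abs_of_neg hx, psi]
      ring
    rwa [hval] at h3
  · subst hx
    rw [hasDerivAt_iff_tendsto]
    have hb : Tendsto (fun y : ℝ => c.c₂ / c.r * |y| ^ (c.r - 1)) (𝓝 0) (𝓝 0) := by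
      have hco : ContinuousAt (fun y : ℝ => |y| ^ (c.r - 1)) 0 := by
        apply ContinuousAt.comp (x := (0:ℝ)) (g := fun x : ℝ => x ^ (c.r - 1))
        · exact Real.continuousAt_rpow_const _ _ (Or.inr (by linarith [c.hr]))
        · exact continuous_abs.continuousAt
      have h2 := (hco.tendsto).const_mul (c.c₂ / c.r)
      simp only [abs_zero, Real.zero_rpow (by linarith [c.hr] : c.r - 1 ≠ 0), mul_zero] at h2
      exact h2
    apply squeeze_zero' ?_ ?_ hb
    · filter_upwards with y
      positivity
    · filter_upwards [eventually_abs_sub_lt 0 c.hδ₀] with y hy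
      simp only [sub_zero] at hy ⊢
      have hL0 : Lam φ 0 = 0 := by simp [Lam]
      rcases eq_or_ne y 0 with h0 | h0
      · rw [h0]
        have hz : c.c₂ / c.r * |(0:ℝ)| ^ (c.r - 1) = 0 := by
          rw [abs_zero, Real.zero_rpow (by linarith [c.hr] : c.r - 1 ≠ 0), mul_zero]
        rw [hz]
        simp [Phi_zero, hL0]
      · have hay : 0 < |y| := abs_pos.2 h0
        have hPnn : 0 ≤ Phi0 φ |y| := c.Phi0_nonneg hay.le
        have hPle : Phi0 φ |y| ≤ c.c₂ / c.r * |y| ^ c.r := c.Phi0_le hay.le hy.le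
        have hsplit : |y| ^ c.r = |y| ^ (c.r - 1) * |y| := by
          rw [← Real.rpow_add_one hay.ne' (c.r - 1)]
          norm_num
        rw [hL0, Phi_zero, smul_zero, sub_zero, sub_zero, Real.norm_eq_abs, Real.norm_eq_abs,
          Phi_eq, abs_of_nonneg hPnn]
        calc |y|⁻¹ * Phi0 φ |y| ≤ |y|⁻¹ * (c.c₂ / c.r * (|y| ^ (c.r - 1) * |y|)) := by
              apply mul_le_mul_of_nonneg_left _ (inv_nonneg.2 hay.le)
              rw [← hsplit]; exact hPle
          _ = (|y|⁻¹ * |y|) * (c.c₂ / c.r * |y| ^ (c.r - 1)) := by ring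
          _ = c.c₂ / c.r * |y| ^ (c.r - 1) := by
              rw [inv_mul_cancel₀ hay.ne', one_mul]
  · have h0 := c.Phi0_hasDerivAt hx
    have h2 : Phi φ =ᶠ[𝓝 x] Phi0 φ := by
      filter_upwards [eventually_gt_nhds hx] with y hy
      rw [Phi_eq, abs_of_pos hy]
    have h3 := h0.congr_of_eventuallyEq h2
    have hval : psi φ x = Lam φ x := by
      rw [Lam]
      simp only [if_neg hx.ne', abs_of_pos hx, psi]
    rwa [hval] at h3

lemma ham_iden (x : ℝ) : Lam φ x * x - Phi φ x = Ham φ |x| := by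
  rcases eq_or_ne x 0 with h0 | h0
  · simp [h0, Lam, Phi_zero, Ham_zero]
  · rw [Lam, if_neg h0, Phi_eq, Ham, psi]
    have h1 : |x| * |x| = x * x := abs_mul_abs_self x
    rw [mul_assoc, mul_assoc, h1]

end Ctx

lemma gronwall_right {h h' : ℝ → ℝ} {a b C : ℝ} (hC : 0 < C)
    (hcont : ContinuousOn h (Icc a b)) (hder : ∀ t ∈ Ioo a b, HasDerivAt h (h' t) t)
    (hbnd : ∀ t ∈ Ioo a b, |h' t| ≤ C * h t) (hb : h b = 0) :
    ∀ t ∈ Ioo a b, h t ≤ 0 := by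
  intro t ht
  have hsub : Icc t b ⊆ Icc a b := Icc_subset_Icc ht.1.le le_rfl
  have hsub2 : Ioo t b ⊆ Ioo a b := Ioo_subset_Ioo ht.1.le le_rfl
  have key := Het.Ctx.mono_aid (f := fun x => Real.exp (C*x) * h x)
    (f' := fun x => Real.exp (C*x) * C * h x + Real.exp (C*x) * h' x)
    (a := t) (b := b) ht.2.le ?_ ?_ ?_
  · simp only [hb, mul_zero] at key
    have he := Real.exp_pos (C * t)
    nlinarith [key]
  · apply ContinuousOn.mul _ (hcont.mono hsub)
    exact (Real.continuous_exp.comp (continuous_const.mul continuous_id)).continuousOn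
  · intro x hx
    have hCx : HasDerivAt (fun y : ℝ => C * y) C x := by
      simpa using (hasDerivAt_id x).const_mul C
    exact (hCx.exp.mul (hder x (hsub2 hx)))
  · intro x hx
    have he := Real.exp_pos (C * x)
    have hb1 := hbnd x (hsub2 hx)
    have hb2 := neg_abs_le (h' x)
    have h3 : 0 ≤ C * h x + h' x := by linarith
    show (0:ℝ) ≤ Real.exp (C*x) * C * h x + Real.exp (C*x) * h' x
    nlinarith [mul_nonneg he.le h3]

lemma gronwall_left {h h' : ℝ → ℝ} {a b C : ℝ} (hC : 0 < C)
    (hcont : ContinuousOn h (Icc a b)) (hder : ∀ t ∈ Ioo a b, HasDerivAt h (h' t) t)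
    (hbnd : ∀ t ∈ Ioo a b, |h' t| ≤ C * h t) (ha : h a = 0) :
    ∀ t ∈ Ioo a b, h t ≤ 0 := by
  intro t ht
  have hsub : Icc a t ⊆ Icc a b := Icc_subset_Icc le_rfl ht.2.le
  have hsub2 : Ioo a t ⊆ Ioo a b := Ioo_subset_Ioo le_rfl ht.2.le
  have key := Het.Ctx.mono_aid (f := fun x => -(Real.exp (-(C*x)) * h x))
    (f' := fun x => -(Real.exp (-(C*x)) * (-C) * h x + Real.exp (-(C*x)) * h' x))
    (a := a) (b := t) ht.1.le ?_ ?_ ?_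
  · simp only [ha, mul_zero, neg_zero] at key
    have he := Real.exp_pos (-(C * t))
    nlinarith [key]
  · apply ContinuousOn.neg
    apply ContinuousOn.mul _ (hcont.mono hsub)
    exact (Real.continuous_exp.comp (continuous_const.mul continuous_id).neg).continuousOn
  · intro x hx
    have hCx : HasDerivAt (fun y : ℝ => -(C * y)) (-C) x := by
      exact (((hasDerivAt_id' x).const_mul C).neg).congr_deriv (by ring)
    exact (hCx.exp.mul (hder x (hsub2 hx))).neg
  · intro x hx
    have he := Real.exp_pos (-(C * x))
    have hb1 := hbnd x (hsub2 hx)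
    have hb2 := le_abs_self (h' x)
    have h3 : 0 ≤ C * h x - h' x := by linarith
    show (0:ℝ) ≤ -(Real.exp (-(C*x)) * (-C) * h x + Real.exp (-(C*x)) * h' x)
    nlinarith [mul_nonneg he.le h3]

namespace Ctx

lemma no_touch (c : Ctx φ V α) {q : ℝ → ℝ} (hdiff : Differentiable ℝ q) (hq0 : q 0 = 0)
    (hV_eq : ∀ t, Ham φ |deriv q t| = V (q t)) {s : ℝ} (hs : q s = α ∨ q s = -α) : False := by
  classical
  set S := {t : ℝ | q t = α ∨ q t = -α} with hSdef
  have hScl : IsClosed S := by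
    have hSeq : S = q ⁻¹' ({α} ∪ {-α}) := by
      ext t
      simp [hSdef, mem_preimage]
      tauto
    rw [hSeq]
    exact (isClosed_singleton.union isClosed_singleton).preimage hdiff.continuous
  have h0S : (0:ℝ) ∉ S := by
    intro h
    rcases h with h | h <;> rw [hq0] at h
    · exact absurd h.symm (ne_of_gt c.hα)
    · exact absurd h.symm (ne_of_lt (by linarith [c.hα]))
  have hIVT : ∀ t₁ t₂ : ℝ, ¬(-α < q t₁ ∧ q t₁ < α) → (-α < q t₂ ∧ q t₂ < α) →
      ∃ s', s' ∈ uIcc t₁ t₂ ∧ s' ∈ S := by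
    intro t₁ t₂ hbad hgood
    rcases not_and_or.1 hbad with hb | hb
    · push_neg at hb
      have h9 : -α ∈ uIcc (q t₁) (q t₂) := by
        rw [mem_uIcc]
        left
        exact ⟨hb, hgood.1.le⟩
      obtain ⟨s', hs', hs2⟩ := intermediate_value_uIcc (hdiff.continuous.continuousOn) h9
      exact ⟨s', hs', Or.inr hs2⟩
    · push_neg at hb
      have h9 : α ∈ uIcc (q t₁) (q t₂) := by
        rw [mem_uIcc]
        right
        exact ⟨hgood.2.le, hb⟩
      obtain ⟨s', hs', hs2⟩ := intermediate_value_uIcc (hdiff.continuous.continuousOn) h9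
      exact ⟨s', hs', Or.inl hs2⟩
  have h0in : -α < q 0 ∧ q 0 < α := by
    rw [hq0]
    exact ⟨by linarith [c.hα], c.hα⟩
  rcases le_or_gt 0 s with hss | hss
  · have hne : (S ∩ Ici 0).Nonempty := ⟨s, hs, hss⟩
    have hbdd : BddBelow (S ∩ Ici 0) := ⟨0, fun x hx => hx.2⟩
    have hcl : IsClosed (S ∩ Ici 0) := hScl.inter isClosed_Ici
    set s₀ := sInf (S ∩ Ici 0) with hs₀def
    have hs₀S : s₀ ∈ S ∩ Ici 0 := hcl.csInf_mem hne hbdd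
    have hs₀0 : 0 < s₀ := by
      rcases (mem_Ici.1 hs₀S.2).eq_or_lt with h | h
      · exact absurd (h ▸ hs₀S.1) h0S
      · exact h
    have hlow : ∀ t, 0 ≤ t → t < s₀ → (-α < q t ∧ q t < α) := by
      intro t ht1 ht2
      by_contra hbad
      obtain ⟨s', hs'1, hs'2⟩ := hIVT t 0 hbad h0in
      rw [uIcc_comm, uIcc_of_le ht1] at hs'1
      have hle := csInf_le hbdd ⟨hs'2, hs'1.1⟩
      rw [← hs₀def] at hle
      linarith [hs'1.2]
    rcases hs₀S.1 with hα' | hα'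
    · have hevc : ∀ᶠ x in 𝓝 s₀, α - c.dd < q x :=
        (hdiff.continuous.continuousAt).eventually
          (eventually_gt_nhds (by rw [hα']; linarith [c.dd_pos]))
      obtain ⟨η, hη0, hball⟩ := Metric.eventually_nhds_iff.1 hevc
      set a := max 0 (s₀ - η/2) with hadef
      have ha0 : (0:ℝ) ≤ a := le_max_left _ _
      have ha1 : a < s₀ := max_lt hs₀0 (by linarith)
      have hmemball : ∀ x ∈ Ioo a s₀, dist x s₀ < η := by
        intro x hx
        rw [Real.dist_eq, abs_lt]
        have h2 := le_max_right 0 (s₀ - η/2)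
        constructor <;> [linarith [hx.1, le_trans h2 hx.1.le]; linarith [hx.2]]
      have key := gronwall_right (h := fun x => α - q x) (h' := fun x => -(deriv q x))
        (a := a) (b := s₀) c.CC_pos
        ((continuous_const.sub hdiff.continuous).continuousOn)
        (fun x _ => HasDerivAt.const_sub α ((hdiff x).hasDerivAt))
        ?_ (by simp [hα'])
        ((a + s₀)/2) ⟨by linarith, by linarith⟩
      · have hmid := hlow ((a + s₀)/2) (by linarith) (by linarith)
        linarith [hmid.2]
      · intro x hx
        have hxq := hlow x (le_trans ha0 hx.1.le) hx.2
        have hqx : α - c.dd < q x := hball (hmemball x hx)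
        have hVb := c.boundR (u := q x) (by linarith) hxq.2
        rw [← hV_eq x] at hVb
        have habs := c.Ham_le_le (abs_nonneg _)
          (mul_nonneg c.CC_pos.le (by show (0:ℝ) ≤ α - q x; linarith [hxq.2])) hVb
        rw [abs_neg]
        exact habs
    · have hevc : ∀ᶠ x in 𝓝 s₀, q x < -α + c.dd :=
        (hdiff.continuous.continuousAt).eventually
          (eventually_lt_nhds (by rw [hα']; linarith [c.dd_pos]))
      obtain ⟨η, hη0, hball⟩ := Metric.eventually_nhds_iff.1 hevc
      set a := max 0 (s₀ - η/2) with hadef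
      have ha0 : (0:ℝ) ≤ a := le_max_left _ _
      have ha1 : a < s₀ := max_lt hs₀0 (by linarith)
      have hmemball : ∀ x ∈ Ioo a s₀, dist x s₀ < η := by
        intro x hx
        rw [Real.dist_eq, abs_lt]
        have h2 := le_max_right 0 (s₀ - η/2)
        constructor <;> [linarith [hx.1, le_trans h2 hx.1.le]; linarith [hx.2]]
      have key := gronwall_right (h := fun x => q x + α) (h' := fun x => deriv q x)
        (a := a) (b := s₀) c.CC_pos
        ((hdiff.continuous.add continuous_const).continuousOn)
        (fun x _ => HasDerivAt.add_const α ((hdiff x).hasDerivAt))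
        ?_ (by simp [hα'])
        ((a + s₀)/2) ⟨by linarith, by linarith⟩
      · have hmid := hlow ((a + s₀)/2) (by linarith) (by linarith)
        linarith [hmid.1]
      · intro x hx
        have hxq := hlow x (le_trans ha0 hx.1.le) hx.2
        have hqx : q x < -α + c.dd := hball (hmemball x hx)
        have hVb := c.boundL (u := q x) hxq.1 (by linarith)
        rw [← hV_eq x] at hVb
        exact c.Ham_le_le (abs_nonneg _)
          (mul_nonneg c.CC_pos.le (by show (0:ℝ) ≤ q x + α; linarith [hxq.1])) hVb
  · have hne : (S ∩ Iic 0).Nonempty := ⟨s, hs, hss.le⟩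
    have hbdd : BddAbove (S ∩ Iic 0) := ⟨0, fun x hx => hx.2⟩
    have hcl : IsClosed (S ∩ Iic 0) := hScl.inter isClosed_Iic
    set s₀ := sSup (S ∩ Iic 0) with hs₀def
    have hs₀S : s₀ ∈ S ∩ Iic 0 := hcl.csSup_mem hne hbdd
    have hs₀0 : s₀ < 0 := by
      rcases (mem_Iic.1 hs₀S.2).eq_or_lt with h | h
      · exact absurd (h ▸ hs₀S.1) h0S
      · exact h
    have hlow : ∀ t, s₀ < t → t ≤ 0 → (-α < q t ∧ q t < α) := by
      intro t ht1 ht2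
      by_contra hbad
      obtain ⟨s', hs'1, hs'2⟩ := hIVT t 0 hbad h0in
      rw [uIcc_of_le ht2] at hs'1
      have hle := le_csSup hbdd (⟨hs'2, hs'1.2⟩ : s' ∈ S ∩ Iic 0)
      rw [← hs₀def] at hle
      linarith [hs'1.1]
    rcases hs₀S.1 with hα' | hα'
    · have hevc : ∀ᶠ x in 𝓝 s₀, α - c.dd < q x :=
        (hdiff.continuous.continuousAt).eventually
          (eventually_gt_nhds (by rw [hα']; linarith [c.dd_pos]))
      obtain ⟨η, hη0, hball⟩ := Metric.eventually_nhds_iff.1 hevc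
      set b := min 0 (s₀ + η/2) with hbdef
      have hb0 : b ≤ (0:ℝ) := min_le_left _ _
      have hb1 : s₀ < b := lt_min hs₀0 (by linarith)
      have hmemball : ∀ x ∈ Ioo s₀ b, dist x s₀ < η := by
        intro x hx
        rw [Real.dist_eq, abs_lt]
        have h2 := min_le_right 0 (s₀ + η/2)
        constructor <;> [linarith [hx.1]; linarith [hx.2, lt_of_lt_of_le hx.2 h2]]
      have key := gronwall_left (h := fun x => α - q x) (h' := fun x => -(deriv q x))
        (a := s₀) (b := b) c.CC_pos
        ((continuous_const.sub hdiff.continuous).continuousOn)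
        (fun x _ => HasDerivAt.const_sub α ((hdiff x).hasDerivAt))
        ?_ (by simp [hα'])
        ((s₀ + b)/2) ⟨by linarith, by linarith⟩
      · have hmid := hlow ((s₀ + b)/2) (by linarith) (by linarith)
        linarith [hmid.2]
      · intro x hx
        have hxq := hlow x hx.1 (le_trans hx.2.le hb0)
        have hqx : α - c.dd < q x := hball (hmemball x hx)
        have hVb := c.boundR (u := q x) (by linarith) hxq.2
        rw [← hV_eq x] at hVb
        have habs := c.Ham_le_le (abs_nonneg _)
          (mul_nonneg c.CC_pos.le (by show (0:ℝ) ≤ α - q x; linarith [hxq.2])) hVb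
        rw [abs_neg]
        exact habs
    · have hevc : ∀ᶠ x in 𝓝 s₀, q x < -α + c.dd :=
        (hdiff.continuous.continuousAt).eventually
          (eventually_lt_nhds (by rw [hα']; linarith [c.dd_pos]))
      obtain ⟨η, hη0, hball⟩ := Metric.eventually_nhds_iff.1 hevc
      set b := min 0 (s₀ + η/2) with hbdef
      have hb0 : b ≤ (0:ℝ) := min_le_left _ _
      have hb1 : s₀ < b := lt_min hs₀0 (by linarith)
      have hmemball : ∀ x ∈ Ioo s₀ b, dist x s₀ < η := by
        intro x hx
        rw [Real.dist_eq, abs_lt]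
        have h2 := min_le_right 0 (s₀ + η/2)
        constructor <;> [linarith [hx.1]; linarith [hx.2, lt_of_lt_of_le hx.2 h2]]
      have key := gronwall_left (h := fun x => q x + α) (h' := fun x => deriv q x)
        (a := s₀) (b := b) c.CC_pos
        ((hdiff.continuous.add continuous_const).continuousOn)
        (fun x _ => HasDerivAt.add_const α ((hdiff x).hasDerivAt))
        ?_ (by simp [hα'])
        ((s₀ + b)/2) ⟨by linarith, by linarith⟩
      · have hmid := hlow ((s₀ + b)/2) (by linarith) (by linarith)
        linarith [hmid.1]
      · intro x hx
        have hxq := hlow x hx.1 (le_trans hx.2.le hb0)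
        have hqx : q x < -α + c.dd := hball (hmemball x hx)
        have hVb := c.boundL (u := q x) hxq.1 (by linarith)
        rw [← hV_eq x] at hVb
        exact c.Ham_le_le (abs_nonneg _)
          (mul_nonneg c.CC_pos.le (by show (0:ℝ) ≤ q x + α; linarith [hxq.1])) hVb


lemma unique (c : Ctx φ V α) {q : ℝ → ℝ} (hq : IsHeteroclinic φ V α q) :
    q = qh φ V α := by
  obtain ⟨⟨hdiff, hP⟩, hq'diff, hq'cont, hq0, htop, hbot⟩ := hq
  have hq't : ∀ t, HasDerivAt q (deriv q t) t := fun t => (hdiff t).hasDerivAt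
  have hq''t : ∀ t, HasDerivAt (deriv q) (deriv (deriv q) t) t := fun t => (hq'diff t).hasDerivAt
  set E : ℝ → ℝ := fun s =>
    (if deriv q s = 0 then 0 else φ |deriv q s| * deriv q s) * deriv q s
      - Phi φ (deriv q s) - V (q s) with hEdef
  have hE : ∀ t, HasDerivAt E 0 t := by
    intro t
    have h1 := (hP t).mul (hq''t t)
    have h2 := (c.Phi_hasDerivAt (deriv q t)).comp t (hq''t t)
    have h3 := (c.V_hasDerivAt (q t)).comp t (hq't t)
    have h4 := (h1.sub h2).sub h3
    have hIF : (if deriv q t = 0 then 0 else φ |deriv q t| * deriv q t)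
        = Lam φ (deriv q t) := rfl
    have hv : deriv V (q t) * deriv q t
        + (if deriv q t = 0 then 0 else φ |deriv q t| * deriv q t) * deriv (deriv q) t
        - Lam φ (deriv q t) * deriv (deriv q) t - deriv V (q t) * deriv q t = 0 := by
      rw [hIF]
      ring
    rwa [hv] at h4
  have hEc : ∀ t, E t = E 0 := fun t =>
    is_const_of_deriv_eq_zero (fun s => (hE s).differentiableAt) (fun s => (hE s).deriv) t 0
  have hiden : ∀ t, Ham φ |deriv q t| = E 0 + V (q t) := by
    intro t
    have h5 : E t = Ham φ |deriv q t| - V (q t) := by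
      simp only [hEdef]
      have hIF : (if deriv q t = 0 then 0 else φ |deriv q t| * deriv q t)
          = Lam φ (deriv q t) := rfl
      rw [hIF, ham_iden (deriv q t)]
    linarith [hEc t, h5]
  obtain ⟨e₀, he₀⟩ : ∃ e₀ : ℝ, ∀ t, Ham φ |deriv q t| = e₀ + V (q t) := ⟨E 0, hiden⟩
  have hVq : Tendsto (fun t => V (q t)) atTop (𝓝 0) := by
    have h := (c.Vcont.tendsto α).comp htop
    rwa [c.hVα] at h
  have hHq : Tendsto (fun t => Ham φ |deriv q t|) atTop (𝓝 e₀) := by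
    have h := tendsto_const_nhds.add hVq (x := atTop) (f := fun _ : ℝ => e₀)
    rw [add_zero] at h
    exact h.congr (fun t => (he₀ t).symm)
  have hE0nn : 0 ≤ e₀ :=
    ge_of_tendsto hHq (Eventually.of_forall fun t => c.Ham_nonneg (abs_nonneg _))
  have hE0 : e₀ = 0 := by
    by_contra hne
    have hpos : 0 < e₀ := lt_of_le_of_ne hE0nn (Ne.symm hne)
    set ε := Hinv φ (e₀ / 2) with hεdef
    have hε : 0 < ε := c.Hinv_pos (by linarith)
    have hHε : Ham φ ε = e₀ / 2 := (c.Hinv_spec (by linarith : (0:ℝ) ≤ e₀ / 2)).2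
    have hev : ∀ᶠ t in atTop, Ham φ ε < Ham φ |deriv q t| :=
      hHq.eventually (eventually_gt_nhds (by linarith))
    obtain ⟨T₀, hT₀⟩ := eventually_atTop.1 hev
    have habs : ∀ t, T₀ ≤ t → ε < |deriv q t| := by
      intro t ht
      by_contra hle
      push_neg at hle
      have h7 : Ham φ |deriv q t| ≤ Ham φ ε :=
        (c.Ham_mono.monotoneOn (mem_Ici.2 (abs_nonneg _)) (mem_Ici.2 hε.le) hle)
      exact absurd (hT₀ t ht) (not_lt.2 h7)
    have hT0 := habs T₀ le_rfl
    rcases lt_trichotomy (deriv q T₀) 0 with hsgn | hsgn | hsgn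
    · -- always ≤ -ε on [T₀, ∞)
      have hneg : ∀ t, T₀ ≤ t → deriv q t ≤ -ε := by
        intro t ht
        rcases le_or_gt (deriv q t) (-ε) with h | h
        · exact h
        · exfalso
          have h8 : ε < deriv q t := by
            rcases abs_cases (deriv q t) with ⟨he1, _⟩ | ⟨he1, _⟩
            · have hh := habs t ht; rw [he1] at hh; exact hh
            · have hh := habs t ht; rw [he1] at hh; linarith
          have h9 : (0:ℝ) ∈ uIcc (deriv q T₀) (deriv q t) := by
            rw [mem_uIcc]; left; exact ⟨hsgn.le, by linarith⟩
          obtain ⟨s', hs', hs0⟩ := intermediate_value_uIcc (hq'cont.continuousOn) h9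
          rw [uIcc_of_le ht] at hs'
          have := habs s' hs'.1
          rw [hs0, abs_zero] at this
          linarith
      have hdec : ∀ t, T₀ ≤ t → q t ≤ q T₀ - ε * (t - T₀) := by
        intro t ht
        have h := mono_aid (f := fun s => -(q s) - ε * s) (f' := fun s => -(deriv q s) - ε)
          (a := T₀) (b := t) ht
          (((hdiff.continuous.neg).sub (continuous_const.mul continuous_id)).continuousOn)
          (fun x _ => ((hq't x).neg.sub (by simpa using (hasDerivAt_id x).const_mul ε)))
          (fun x hx => by
            have := hneg x hx.1.le
            simp only [sub_nonneg]
            linarith)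
        linarith [h]
      have hev2 : ∀ᶠ t in atTop, α - 1 < q t :=
        htop.eventually (eventually_gt_nhds (by linarith [c.hα]))
      have hlin : Tendsto (fun t => q T₀ + ε * T₀ - ε * t) atTop atBot := by
        apply tendsto_atBot_add_const_left
        exact (tendsto_neg_atTop_atBot).comp (Tendsto.const_mul_atTop hε tendsto_id)
      have hev3 : ∀ᶠ t in atTop, q T₀ + ε * T₀ - ε * t ≤ α - 1 :=
        hlin.eventually (eventually_le_atBot _)
      obtain ⟨t, h2', h3', h4'⟩ := (hev2.and (hev3.and (eventually_ge_atTop T₀))).exists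
      have hd := hdec t h4'
      nlinarith
    · rw [hsgn, abs_zero] at hT0
      linarith
    · have hposd : ∀ t, T₀ ≤ t → ε ≤ deriv q t := by
        intro t ht
        rcases le_or_gt ε (deriv q t) with h | h
        · exact h
        · exfalso
          have h8 : deriv q t < -ε := by
            rcases abs_cases (deriv q t) with ⟨he1, _⟩ | ⟨he1, _⟩
            · have hh := habs t ht; rw [he1] at hh; linarith
            · have hh := habs t ht; rw [he1] at hh; linarith
          have h9 : (0:ℝ) ∈ uIcc (deriv q T₀) (deriv q t) := by
            rw [mem_uIcc]; right; exact ⟨by linarith, hsgn.le⟩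
          obtain ⟨s', hs', hs0⟩ := intermediate_value_uIcc (hq'cont.continuousOn) h9
          rw [uIcc_of_le ht] at hs'
          have := habs s' hs'.1
          rw [hs0, abs_zero] at this
          linarith
      have hinc : ∀ t, T₀ ≤ t → q T₀ + ε * (t - T₀) ≤ q t := by
        intro t ht
        have h := mono_aid (f := fun s => q s - ε * s) (f' := fun s => deriv q s - ε)
          (a := T₀) (b := t) ht
          ((hdiff.continuous.sub (continuous_const.mul continuous_id)).continuousOn)
          (fun x _ => ((hq't x).sub (by simpa using (hasDerivAt_id x).const_mul ε)))
          (fun x hx => by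
            have := hposd x hx.1.le
            simp only [sub_nonneg]
            linarith)
        linarith [h]
      have hev2 : ∀ᶠ t in atTop, q t < α + 1 :=
        htop.eventually (eventually_lt_nhds (by linarith [c.hα]))
      have hlin : Tendsto (fun t => q T₀ - ε * T₀ + ε * t) atTop atTop := by
        apply tendsto_atTop_add_const_left
        exact Tendsto.const_mul_atTop hε tendsto_id
      have hev3 : ∀ᶠ t in atTop, α + 1 ≤ q T₀ - ε * T₀ + ε * t :=
        hlin.eventually (eventually_ge_atTop _)
      obtain ⟨t, h2', h3', h4'⟩ := (hev2.and (hev3.and (eventually_ge_atTop T₀))).exists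
      have hi := hinc t h4'
      nlinarith
  have hV_eq : ∀ t, Ham φ |deriv q t| = V (q t) := by
    intro t
    rw [he₀ t, hE0, zero_add]
  have hIn : ∀ t, -α < q t ∧ q t < α := by
    intro t
    by_contra hbad
    rcases not_and_or.1 hbad with hb | hb
    · push_neg at hb
      have h9 : -α ∈ uIcc (q 0) (q t) := by
        rw [mem_uIcc]; right; exact ⟨hb, by rw [hq0]; linarith [c.hα]⟩
      obtain ⟨s', _, hs2⟩ := intermediate_value_uIcc (hdiff.continuous.continuousOn) h9
      exact c.no_touch hdiff hq0 hV_eq (Or.inr hs2)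
    · push_neg at hb
      have h9 : α ∈ uIcc (q 0) (q t) := by
        rw [mem_uIcc]; left; exact ⟨by rw [hq0]; linarith [c.hα], hb⟩
      obtain ⟨s', _, hs2⟩ := intermediate_value_uIcc (hdiff.continuous.continuousOn) h9
      exact c.no_touch hdiff hq0 hV_eq (Or.inl hs2)
  have hq'ne : ∀ t, deriv q t ≠ 0 := by
    intro t h0
    have h := hV_eq t
    rw [h0, abs_zero, Ham_zero] at h
    exact absurd h.symm (ne_of_gt (c.hVpos _ (hIn t).1 (hIn t).2))
  have hq'pos : ∀ t, 0 < deriv q t := by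
    rcases lt_or_gt_of_ne (hq'ne 0) with hneg | hpos
    · exfalso
      have hall : ∀ t, deriv q t < 0 := by
        intro t
        rcases lt_or_gt_of_ne (hq'ne t) with h | h
        · exact h
        · exfalso
          have h9 : (0:ℝ) ∈ uIcc (deriv q 0) (deriv q t) := by
            rw [mem_uIcc]; left; exact ⟨hneg.le, h.le⟩
          obtain ⟨s', _, hs0⟩ := intermediate_value_uIcc (hq'cont.continuousOn) h9
          exact hq'ne s' hs0
      have hmono : ∀ a b : ℝ, a ≤ b → q b ≤ q a := by
        intro a b hab
        have h := mono_aid (f := fun s => -(q s)) (f' := fun s => -(deriv q s))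
          (a := a) (b := b) hab (hdiff.continuous.neg.continuousOn)
          (fun x _ => (hq't x).neg)
          (fun x _ => by linarith [hall x])
        linarith [h]
      have hlim : α ≤ q 1 := by
        apply le_of_tendsto htop
        filter_upwards [eventually_ge_atTop (1:ℝ)] with t ht
        exact hmono 1 t ht
      have h01 : q 1 ≤ q 0 := hmono 0 1 zero_le_one
      rw [hq0] at h01
      linarith [c.hα]
    · intro t
      rcases lt_or_gt_of_ne (hq'ne t) with h | h
      · exfalso
        have h9 : (0:ℝ) ∈ uIcc (deriv q 0) (deriv q t) := by
          rw [mem_uIcc]; right; exact ⟨h.le, hpos.le⟩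
        obtain ⟨s', _, hs0⟩ := intermediate_value_uIcc (hq'cont.continuousOn) h9
        exact hq'ne s' hs0
      · exact h
  have hq'g : ∀ t, deriv q t = gf φ V (q t) := by
    intro t
    have h1 : Ham φ (deriv q t) = V (q t) := by
      rw [← abs_of_pos (hq'pos t)]
      exact hV_eq t
    exact (c.Hinv_unique (hq'pos t).le h1).symm
  have hF : ∀ t, HasDerivAt (fun s => Tf φ V (q s) - s) 0 t := by
    intro t
    have h1 := (c.Tf_hasDerivAt (u := q t) ⟨(hIn t).1, (hIn t).2⟩).comp t (hq't t)
    have h2 := h1.sub (hasDerivAt_id t)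
    have hval : (gf φ V (q t))⁻¹ * deriv q t - 1 = 0 := by
      rw [hq'g t, inv_mul_cancel₀ (ne_of_gt (c.gf_pos ⟨(hIn t).1, (hIn t).2⟩))]
      ring
    rwa [hval] at h2
  have hFc : ∀ t, Tf φ V (q t) - t = Tf φ V (q 0) - 0 := fun t =>
    is_const_of_deriv_eq_zero (fun s => (hF s).differentiableAt) (fun s => (hF s).deriv) t 0
  have hTq : ∀ t, Tf φ V (q t) = t := by
    intro t
    have h := hFc t
    rw [hq0, Tf_zero] at h
    linarith
  funext t
  have h := c.qh_eq (u := q t) ⟨(hIn t).1, (hIn t).2⟩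
  rw [hTq t] at h
  exact h.symm

end Ctx

end Het

theorem statement0 (φ V : ℝ → ℝ) (l m α : ℝ)
    (hφC1 : ContDiffOn ℝ 1 φ (Set.Ioi 0))
    (hφpos : ∀ t > 0, 0 < φ t)
    (hφ1 : ∀ t > 0, 0 < deriv (fun s => φ s * s) t)
    (hl : 1 < l) (hlm : l ≤ m)
    (hφ2 : ∀ t > 0, l - 1 ≤ deriv (fun s => φ s * s) t / φ t ∧
      deriv (fun s => φ s * s) t / φ t ≤ m - 1)
    (hφ3 : ∃ c₁ c₂ δ₀ r : ℝ, 0 < c₁ ∧ 0 < c₂ ∧ 0 < δ₀ ∧ 1 < r ∧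
      ∀ t : ℝ, 0 < t → t ≤ δ₀ → c₁ * t ^ (r - 1) ≤ φ t * t ∧ φ t * t ≤ c₂ * t ^ (r - 1))
    (hα : 0 < α)
    (hV1 : ContDiff ℝ 1 V) (hVnn : ∀ t, 0 ≤ V t)
    (hV2 : V α = 0 ∧ V (-α) = 0 ∧ ∀ t, -α < t → t < α → 0 < V t)
    (hV3 : ∃ a₁ a₂ a₃ a₄ δ : ℝ, 0 < a₁ ∧ 0 < a₂ ∧ 0 < a₃ ∧ 0 < a₄ ∧ 0 < δ ∧ δ < α ∧
      (∀ t, α - δ < t → t ≤ α → a₁ * Phi φ |t - α| ≤ V t ∧ V t ≤ a₂ * Phi φ |t - α|) ∧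
      (∀ t, -α ≤ t → t < -α + δ → a₃ * Phi φ |t + α| ≤ V t ∧ V t ≤ a₄ * Phi φ |t + α|))
    (hV4 : ∃ k₁ k₂ k₃ k₄ k₅ k₆ k₇ k₈ : ℝ, 0 < k₁ ∧ 0 < k₂ ∧ 0 < k₃ ∧ 0 < k₄ ∧
      0 < k₅ ∧ 0 < k₆ ∧ 0 < k₇ ∧ 0 < k₈ ∧
      (∀ t, 0 ≤ t → t ≤ α →
        -(k₃ * t * φ (k₄ * |t - α|) * |t - α|) ≤ deriv V t ∧
        deriv V t ≤ -(k₁ * t * φ (k₂ * |t - α|) * |t - α|)) ∧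
      (∀ t, -α ≤ t → t ≤ 0 →
        -(k₇ * t * φ (k₈ * |t + α|) * |t + α|) ≤ deriv V t ∧
        deriv V t ≤ -(k₅ * t * φ (k₆ * |t + α|) * |t + α|)))
    (hV5 : ∃ ρ > 0, StrictConvexOn ℝ (Set.Ioo (-α - ρ) (-α + ρ)) V ∧
      StrictConvexOn ℝ (Set.Ioo (α - ρ) (α + ρ)) V)
    : ∃! q : ℝ → ℝ, IsHeteroclinic φ V α q := by
  obtain ⟨c₁, c₂, δ₀, r, hc₁, hc₂, hδ₀, hr, hφ3'⟩ := hφ3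
  obtain ⟨a₁, a₂, a₃, a₄, δ, ha₁, ha₂, ha₃, ha₄, hδ, hδα, hV3r', hV3l'⟩ := hV3
  have c : Het.Ctx φ V α := {
    l := l, c₁ := c₁, c₂ := c₂, δ₀ := δ₀, r := r, a₂ := a₂, a₄ := a₄, δ := δ,
    hl := hl, hφC1 := hφC1, hφpos := hφpos, hφ1 := hφ1,
    hφ2l := fun t ht => (hφ2 t ht).1,
    hc₁ := hc₁, hc₂ := hc₂, hδ₀ := hδ₀, hr := hr, hφ3 := hφ3',
    hα := hα, hV1 := hV1, hVnn := hVnn,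
    hVα := hV2.1, hVmα := hV2.2.1, hVpos := hV2.2.2,
    ha₂ := ha₂, ha₄ := ha₄, hδ := hδ, hδα := hδα,
    hV3r := by
      intro t h1 h2
      have h := (hV3r' t h1 h2).2
      rwa [Het.Phi_eq, abs_abs, abs_of_nonpos (by linarith), neg_sub] at h
    hV3l := by
      intro t h1 h2
      have h := (hV3l' t h1 h2).2
      rwa [Het.Phi_eq, abs_abs, abs_of_nonneg (by linarith)] at h }
  exact ⟨Het.qh φ V α, c.qh_hetero, fun q hq => c.unique hq⟩
end

section
/- Assume (φ1)–(φ3) and (V1)–(V5). If q₁ and q₂ are twice differentiable classical solutions with continuous derivative of −(φ(|u'|)u')' + V'(u) = 0 on ℝ satisfying qᵢ(t) → α as t → +∞ and qᵢ(t) → −α as t → −∞ for i = 1,2, then there exists τ ∈ ℝ such that q₂(t) = q₁(t + τ) for all t ∈ ℝ. -/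
open Real Filter Set MeasureTheory

namespace S1

noncomputable def F0 (φ : ℝ → ℝ) (p : ℝ) : ℝ := if p = 0 then 0 else φ |p| * p

noncomputable def G (φ : ℝ → ℝ) (p : ℝ) : ℝ := p * F0 φ p - Phi φ p

variable {φ : ℝ → ℝ} {l m c₁ c₂ δ₀ r p : ℝ}

lemma F0_of_pos (hp : 0 < p) : F0 φ p = φ p * p := by
  rw [F0, if_neg hp.ne', abs_of_pos hp]

lemma F0_neg (p : ℝ) : F0 φ (-p) = - F0 φ p := by
  rcases eq_or_ne p 0 with h | h
  · simp [h, F0]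
  · rw [F0, F0, if_neg (neg_ne_zero.mpr h), if_neg h, abs_neg]; ring

lemma Phi_abs (p : ℝ) : Phi φ |p| = Phi φ p := by rw [Phi, Phi, abs_abs]

lemma Phi_neg (p : ℝ) : Phi φ (-p) = Phi φ p := by rw [Phi, Phi, abs_neg]

lemma Phi_zero : Phi φ 0 = 0 := by simp [Phi]

lemma sphi_contOn (hφC1 : ContDiffOn ℝ 1 φ (Set.Ioi 0)) :
    ContinuousOn (fun s => s * φ s) (Set.Ioi 0) :=
  continuousOn_id.mul hφC1.continuousOn

lemma intInt (hφC1 : ContDiffOn ℝ 1 φ (Set.Ioi 0)) (hφpos : ∀ t > 0, 0 < φ t)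
    (hδ₀ : 0 < δ₀) (hr : 1 < r)
    (hb3 : ∀ t : ℝ, 0 < t → t ≤ δ₀ → c₁ * t ^ (r - 1) ≤ φ t * t ∧ φ t * t ≤ c₂ * t ^ (r - 1))
    {b : ℝ} (hb : 0 ≤ b) : IntervalIntegrable (fun s => s * φ s) volume 0 b := by
  rcases eq_or_lt_of_le hb with h | hb0
  · simp [← h]
  set d := min δ₀ b with hd
  have hd0 : 0 < d := lt_min hδ₀ hb0
  have h1 : IntervalIntegrable (fun s => s * φ s) volume 0 d := by
    rw [intervalIntegrable_iff_integrableOn_Ioc_of_le hd0.le]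
    refine ⟨((sphi_contOn hφC1).mono ?_).aestronglyMeasurable measurableSet_Ioc,
      MeasureTheory.HasFiniteIntegral.restrict_of_bounded (C := c₂ * δ₀ ^ (r - 1))
        measure_Ioc_lt_top ?_⟩
    · exact fun x hx => hx.1
    · rw [ae_restrict_iff' measurableSet_Ioc]
      refine Filter.Eventually.of_forall (fun x hx => ?_)
      have hx0 : 0 < x := hx.1
      have hxδ : x ≤ δ₀ := le_trans hx.2 (min_le_left _ _)
      have h2 := (hb3 x hx0 hxδ).2
      have h3 : x ^ (r - 1) ≤ δ₀ ^ (r - 1) :=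
        Real.rpow_le_rpow hx0.le hxδ (by linarith)
      have h4 : 0 < φ x := hφpos x hx0
      have : ‖x * φ x‖ = φ x * x := by
        rw [Real.norm_eq_abs, abs_of_pos (by positivity), mul_comm]
      rw [this]
      calc φ x * x ≤ c₂ * x ^ (r - 1) := h2
        _ ≤ c₂ * δ₀ ^ (r - 1) := by
            have hc₂ : 0 ≤ c₂ := by
              by_contra hc
              push_neg at hc
              nlinarith [Real.rpow_nonneg hx0.le (r - 1), mul_pos h4 hx0]
            nlinarith
  have h2 : IntervalIntegrable (fun s => s * φ s) volume d b := by
    apply ContinuousOn.intervalIntegrable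
    apply (sphi_contOn hφC1).mono
    rw [Set.uIcc_of_le (min_le_right δ₀ b)]
    exact fun x hx => lt_of_lt_of_le hd0 hx.1
  exact h1.trans h2

lemma Phi_nonneg (hφpos : ∀ t > 0, 0 < φ t) (p : ℝ) : 0 ≤ Phi φ p := by
  apply intervalIntegral.integral_nonneg (abs_nonneg p)
  intro u hu
  rcases eq_or_lt_of_le hu.1 with h | h
  · simp [← h]
  · exact le_of_lt (mul_pos h (hφpos u h))

lemma rpow_cont (hr : 1 < r) : Continuous (fun s : ℝ => s ^ (r - 1)) :=
  continuous_iff_continuousAt.mpr fun x =>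
    Real.continuousAt_rpow_const x _ (Or.inr (by linarith))

lemma rpow_intInt (hr : 1 < r) (a : ℝ) :
    IntervalIntegrable (fun s : ℝ => c₂ * s ^ (r - 1)) volume 0 a :=
  (continuous_const.mul (rpow_cont hr)).intervalIntegrable _ _

lemma integral_rpow_eval (hr : 1 < r) {a : ℝ} (ha : 0 ≤ a) :
    ∫ s in (0:ℝ)..a, c₂ * s ^ (r - 1) = c₂ / r * a ^ r := by
  rw [intervalIntegral.integral_const_mul,
    integral_rpow (Or.inl (by linarith : (-1:ℝ) < r - 1))]
  rw [sub_add_cancel, Real.zero_rpow (by intro h; rw [h] at hr; linarith : r ≠ 0)]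
  ring

lemma Phi_le (hφC1 : ContDiffOn ℝ 1 φ (Set.Ioi 0)) (hφpos : ∀ t > 0, 0 < φ t)
    (hδ₀ : 0 < δ₀) (hr : 1 < r)
    (hb3 : ∀ t : ℝ, 0 < t → t ≤ δ₀ → c₁ * t ^ (r - 1) ≤ φ t * t ∧ φ t * t ≤ c₂ * t ^ (r - 1))
    (hpδ : |p| ≤ δ₀) : Phi φ p ≤ c₂ / r * |p| ^ r := by
  rw [← integral_rpow_eval hr (abs_nonneg p), Phi]
  apply intervalIntegral.integral_mono_on (abs_nonneg p)
    (intInt hφC1 hφpos hδ₀ hr hb3 (abs_nonneg p)) (rpow_intInt hr _)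
  intro x hx
  rcases eq_or_lt_of_le hx.1 with h | h
  · rw [← h, Real.zero_rpow (sub_ne_zero_of_ne (ne_of_gt hr))]
    simp
  · rw [mul_comm]
    exact (hb3 x h (le_trans hx.2 hpδ)).2


lemma F0_abs_le (hφpos : ∀ t > 0, 0 < φ t) (hr : 1 < r)
    (hb3 : ∀ t : ℝ, 0 < t → t ≤ δ₀ → c₁ * t ^ (r - 1) ≤ φ t * t ∧ φ t * t ≤ c₂ * t ^ (r - 1))
    (hpδ : |p| ≤ δ₀) : |F0 φ p| ≤ c₂ * |p| ^ (r - 1) := by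
  rcases eq_or_ne p 0 with h | h
  · simp [h, F0, Real.zero_rpow (sub_ne_zero_of_ne (ne_of_gt hr))]
  · have hp0 : 0 < |p| := abs_pos.mpr h
    have := (hb3 |p| hp0 hpδ).2
    rw [F0, if_neg h]
    have hφ := hφpos |p| hp0
    calc |φ |p| * p| = φ |p| * |p| := by rw [abs_mul, abs_of_pos hφ]
      _ ≤ c₂ * |p| ^ (r - 1) := this

lemma mulF0_le (hφpos : ∀ t > 0, 0 < φ t) (hr : 1 < r)
    (hb3 : ∀ t : ℝ, 0 < t → t ≤ δ₀ → c₁ * t ^ (r - 1) ≤ φ t * t ∧ φ t * t ≤ c₂ * t ^ (r - 1))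
    (hpδ : |p| ≤ δ₀) : |p * F0 φ p| ≤ c₂ * |p| ^ r := by
  rcases eq_or_ne p 0 with h | h
  · simp [h, F0, Real.zero_rpow (by linarith : r ≠ 0)]
  · have hp0 : 0 < |p| := abs_pos.mpr h
    calc |p * F0 φ p| = |p| * |F0 φ p| := abs_mul _ _
      _ ≤ |p| * (c₂ * |p| ^ (r - 1)) := by
          have := F0_abs_le hφpos hr hb3 hpδ
          nlinarith [abs_nonneg (F0 φ p)]
      _ = c₂ * (|p| ^ (r - 1) * |p| ^ (1:ℝ)) := by rw [Real.rpow_one]; ring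
      _ = c₂ * |p| ^ r := by rw [← Real.rpow_add hp0]; norm_num

lemma F0_nonneg_of_pos (hφpos : ∀ t > 0, 0 < φ t) (hp : 0 < p) : 0 < F0 φ p := by
  rw [F0_of_pos hp]; exact mul_pos (hφpos p hp) hp

lemma Phi_hasDeriv (hφC1 : ContDiffOn ℝ 1 φ (Set.Ioi 0)) (hφpos : ∀ t > 0, 0 < φ t)
    (hδ₀ : 0 < δ₀) (hr : 1 < r)
    (hb3 : ∀ t : ℝ, 0 < t → t ≤ δ₀ → c₁ * t ^ (r - 1) ≤ φ t * t ∧ φ t * t ≤ c₂ * t ^ (r - 1))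
    (p : ℝ) : HasDerivAt (Phi φ) (F0 φ p) p := by
  rcases lt_trichotomy p 0 with hp | hp | hp
  · have hnp : 0 < -p := by linarith
    have H := intervalIntegral.integral_hasDerivAt_right
      (intInt hφC1 hφpos hδ₀ hr hb3 hnp.le)
      (ContinuousOn.stronglyMeasurableAtFilter isOpen_Ioi (sphi_contOn hφC1) (-p) hnp)
      ((sphi_contOn hφC1).continuousAt (Ioi_mem_nhds hnp))
    have H2 := H.comp p (hasDerivAt_neg p)
    have hev : Phi φ =ᶠ[nhds p] ((fun u => ∫ x in (0:ℝ)..u, x * φ x) ∘ (fun t => -t)) := by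
      filter_upwards [Iio_mem_nhds hp] with t ht
      have h1 : |t| = -t := abs_of_neg (mem_Iio.mp ht)
      simp only [Phi, Function.comp_apply, h1]
    have := H2.congr_of_eventuallyEq hev
    refine this.congr_deriv ?_
    rw [F0, if_neg hp.ne, abs_of_neg hp]
    ring
  · subst hp
    rw [show F0 φ 0 = 0 by simp [F0]]
    rw [hasDerivAt_iff_tendsto_slope]
    have hb : ∀ᶠ t in nhdsWithin (0:ℝ) {(0:ℝ)}ᶜ,
        ‖slope (Phi φ) 0 t‖ ≤ c₂ / r * |t| ^ (r - 1) := by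
      have : ∀ᶠ t in nhdsWithin (0:ℝ) {(0:ℝ)}ᶜ, |t| ≤ δ₀ ∧ t ≠ 0 := by
        filter_upwards [nhdsWithin_le_nhds (Metric.closedBall_mem_nhds (0:ℝ) hδ₀),
          self_mem_nhdsWithin] with t h1 h2
        exact ⟨by simpa [Real.dist_eq] using h1, h2⟩
      filter_upwards [this] with t ⟨h1, h2⟩
      rw [slope_def_field, Phi_zero, sub_zero, sub_zero, div_eq_mul_inv]
      have ht0 : 0 < |t| := abs_pos.mpr h2
      rw [norm_mul, Real.norm_eq_abs, Real.norm_eq_abs, abs_of_nonneg (Phi_nonneg hφpos t),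
        abs_inv]
      have h3 : Phi φ t ≤ c₂ / r * |t| ^ r := Phi_le hφC1 hφpos hδ₀ hr hb3 h1
      have h4 : |t| ^ r * |t|⁻¹ = |t| ^ (r - 1) := by
        rw [← Real.rpow_neg_one |t|, ← Real.rpow_add ht0]
        ring_nf
      calc Phi φ t * |t|⁻¹ ≤ c₂ / r * |t| ^ r * |t|⁻¹ := by
            have := inv_nonneg.mpr (abs_nonneg t)
            nlinarith [Phi_nonneg hφpos t]
        _ = c₂ / r * |t| ^ (r - 1) := by rw [mul_assoc, h4]
    have hg : Tendsto (fun t : ℝ => c₂ / r * |t| ^ (r - 1)) (nhds 0) (nhds 0) := by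
      have h1 : Tendsto (fun t : ℝ => |t| ^ (r - 1)) (nhds 0) (nhds 0) := by
        have := ((rpow_cont hr).comp continuous_abs).tendsto 0
        simpa [Function.comp_def, Real.zero_rpow (sub_ne_zero_of_ne (ne_of_gt hr))] using this
      simpa using h1.const_mul (c₂ / r)
    exact squeeze_zero_norm' hb (hg.mono_left nhdsWithin_le_nhds)
  · have H := intervalIntegral.integral_hasDerivAt_right
      (intInt hφC1 hφpos hδ₀ hr hb3 hp.le)
      (ContinuousOn.stronglyMeasurableAtFilter isOpen_Ioi (sphi_contOn hφC1) p hp)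
      ((sphi_contOn hφC1).continuousAt (Ioi_mem_nhds hp))
    have hev : Phi φ =ᶠ[nhds p] (fun u => ∫ x in (0:ℝ)..u, x * φ x) := by
      filter_upwards [Ioi_mem_nhds hp] with t ht
      have h1 : |t| = t := abs_of_pos (mem_Ioi.mp ht)
      simp only [Phi, h1]
    have := H.congr_of_eventuallyEq hev
    refine this.congr_deriv ?_
    rw [F0_of_pos hp]
    ring


lemma G_zero : G φ 0 = 0 := by simp [G, F0, Phi]

lemma G_neg (p : ℝ) : G φ (-p) = G φ p := by
  rw [G, G, F0_neg, Phi_neg]; ring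

lemma G_abs (p : ℝ) : G φ |p| = G φ p := by
  rcases abs_choice p with h | h
  · rw [h]
  · rw [h, G_neg]

lemma G_hasDeriv (hφC1 : ContDiffOn ℝ 1 φ (Set.Ioi 0)) (hφpos : ∀ t > 0, 0 < φ t)
    (hδ₀ : 0 < δ₀) (hr : 1 < r)
    (hb3 : ∀ t : ℝ, 0 < t → t ≤ δ₀ → c₁ * t ^ (r - 1) ≤ φ t * t ∧ φ t * t ≤ c₂ * t ^ (r - 1))
    (hp : 0 < p) :
    HasDerivAt (G φ) (p * deriv (fun s => φ s * s) p) p := by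
  have hφd : DifferentiableAt ℝ φ p :=
    ((hφC1.differentiableOn one_ne_zero).differentiableAt (Ioi_mem_nhds hp))
  have hFd : DifferentiableAt ℝ (fun s => φ s * s) p := hφd.mul differentiableAt_id
  have hF := hFd.hasDerivAt
  have h1 : HasDerivAt (fun s => s * (φ s * s))
      (1 * (φ p * p) + p * deriv (fun s => φ s * s) p) p :=
    (hasDerivAt_id p).mul hF
  have h2 := h1.sub (Phi_hasDeriv hφC1 hφpos hδ₀ hr hb3 p)
  have hev : G φ =ᶠ[nhds p] (fun s => s * (φ s * s) - Phi φ s) := by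
    filter_upwards [Ioi_mem_nhds hp] with t ht
    rw [G, F0_of_pos (mem_Ioi.mp ht)]
  have := h2.congr_of_eventuallyEq hev
  refine this.congr_deriv ?_
  rw [F0_of_pos hp]
  ring

lemma G_contAt_zero (hφC1 : ContDiffOn ℝ 1 φ (Set.Ioi 0)) (hφpos : ∀ t > 0, 0 < φ t)
    (hδ₀ : 0 < δ₀) (hr : 1 < r)
    (hb3 : ∀ t : ℝ, 0 < t → t ≤ δ₀ → c₁ * t ^ (r - 1) ≤ φ t * t ∧ φ t * t ≤ c₂ * t ^ (r - 1)) :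
    ContinuousAt (G φ) 0 := by
  have h1 : Tendsto (fun p : ℝ => p * F0 φ p) (nhds 0) (nhds 0) := by
    refine squeeze_zero_norm' (a := fun p : ℝ => c₂ * |p| ^ r) ?_ ?_
    · filter_upwards [Metric.closedBall_mem_nhds (0:ℝ) hδ₀] with t ht
      exact mulF0_le hφpos hr hb3 (by simpa [Real.dist_eq] using ht)
    · have h2 : Tendsto (fun t : ℝ => |t| ^ r) (nhds 0) (nhds 0) := by
        have hc : Continuous (fun s : ℝ => s ^ r) :=
          continuous_iff_continuousAt.mpr fun x =>
            Real.continuousAt_rpow_const x _ (Or.inr (by linarith))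
        have := (hc.comp continuous_abs).tendsto 0
        simpa [Function.comp_def, Real.zero_rpow (by linarith : r ≠ 0)] using this
      simpa using h2.const_mul c₂
  have h2 : Tendsto (Phi φ) (nhds 0) (nhds 0) := by
    have := (Phi_hasDeriv hφC1 hφpos hδ₀ hr hb3 0).continuousAt
    simpa [ContinuousAt, Phi_zero] using this
  have : Tendsto (G φ) (nhds 0) (nhds 0) := by
    have := h1.sub h2
    rw [sub_zero] at this
    exact this
  simpa [ContinuousAt, G_zero] using this

lemma G_strictMonoOn (hφC1 : ContDiffOn ℝ 1 φ (Set.Ioi 0)) (hφpos : ∀ t > 0, 0 < φ t)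
    (hφ1 : ∀ t > 0, 0 < deriv (fun s => φ s * s) t)
    (hδ₀ : 0 < δ₀) (hr : 1 < r)
    (hb3 : ∀ t : ℝ, 0 < t → t ≤ δ₀ → c₁ * t ^ (r - 1) ≤ φ t * t ∧ φ t * t ≤ c₂ * t ^ (r - 1)) :
    StrictMonoOn (G φ) (Set.Ici 0) := by
  apply strictMonoOn_of_deriv_pos (convex_Ici 0)
  · intro x hx
    rcases eq_or_lt_of_le (mem_Ici.mp hx) with h | h
    · rw [← h]
      exact (G_contAt_zero hφC1 hφpos hδ₀ hr hb3).continuousWithinAt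
    · exact (G_hasDeriv hφC1 hφpos hδ₀ hr hb3 h).continuousAt.continuousWithinAt
  · intro x hx
    rw [interior_Ici] at hx
    have hx0 : 0 < x := mem_Ioi.mp hx
    rw [(G_hasDeriv hφC1 hφpos hδ₀ hr hb3 hx0).deriv]
    exact mul_pos hx0 (hφ1 x hx0)

lemma G_pos (hφC1 : ContDiffOn ℝ 1 φ (Set.Ioi 0)) (hφpos : ∀ t > 0, 0 < φ t)
    (hφ1 : ∀ t > 0, 0 < deriv (fun s => φ s * s) t)
    (hδ₀ : 0 < δ₀) (hr : 1 < r)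
    (hb3 : ∀ t : ℝ, 0 < t → t ≤ δ₀ → c₁ * t ^ (r - 1) ≤ φ t * t ∧ φ t * t ≤ c₂ * t ^ (r - 1))
    (hp : 0 < p) : 0 < G φ p := by
  have := G_strictMonoOn hφC1 hφpos hφ1 hδ₀ hr hb3 (self_mem_Ici (a := (0:ℝ)))
    (mem_Ici.mpr hp.le) hp
  rwa [G_zero] at this

lemma G_eq_zero (hφC1 : ContDiffOn ℝ 1 φ (Set.Ioi 0)) (hφpos : ∀ t > 0, 0 < φ t)
    (hφ1 : ∀ t > 0, 0 < deriv (fun s => φ s * s) t)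
    (hδ₀ : 0 < δ₀) (hr : 1 < r)
    (hb3 : ∀ t : ℝ, 0 < t → t ≤ δ₀ → c₁ * t ^ (r - 1) ≤ φ t * t ∧ φ t * t ≤ c₂ * t ^ (r - 1))
    (hGp : G φ p = 0) : p = 0 := by
  by_contra h
  have h1 : 0 < |p| := abs_pos.mpr h
  have := G_pos hφC1 hφpos hφ1 hδ₀ hr hb3 h1
  rw [G_abs, hGp] at this
  exact lt_irrefl 0 this


lemma G_lower (hφC1 : ContDiffOn ℝ 1 φ (Set.Ioi 0)) (hφpos : ∀ t > 0, 0 < φ t)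
    (hl : 1 < l)
    (hφ2 : ∀ t > 0, l - 1 ≤ deriv (fun s => φ s * s) t / φ t ∧
      deriv (fun s => φ s * s) t / φ t ≤ m - 1)
    (hc₁ : 0 < c₁) (hc₂ : 0 < c₂) (hδ₀ : 0 < δ₀) (hr : 1 < r)
    (hb3 : ∀ t : ℝ, 0 < t → t ≤ δ₀ → c₁ * t ^ (r - 1) ≤ φ t * t ∧ φ t * t ≤ c₂ * t ^ (r - 1))
    (hp0 : 0 < p) (hpδ : p ≤ δ₀) :
    (l - 1) * c₁ / r * p ^ r ≤ G φ p := by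
  set κ := (l - 1) * c₁ / r with hκ
  set W := fun u => G φ u - κ * u ^ r with hW
  have hr0 : (0:ℝ) < r := by linarith
  have hWd : ∀ s, 0 < s → HasDerivAt W
      (s * deriv (fun u => φ u * u) s - κ * (r * s ^ (r - 1))) s := by
    intro s hs
    exact (G_hasDeriv hφC1 hφpos hδ₀ hr hb3 hs).sub
      ((Real.hasDerivAt_rpow_const (p := r) (Or.inl hs.ne')).const_mul κ)
  have hWnn : ∀ s, 0 < s → s ≤ δ₀ →
      0 ≤ s * deriv (fun u => φ u * u) s - κ * (r * s ^ (r - 1)) := by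
    intro s hs hsδ
    have hφs := hφpos s hs
    have h1 : (l - 1) * φ s ≤ deriv (fun u => φ u * u) s := by
      have := (hφ2 s hs).1
      rwa [le_div_iff₀ hφs] at this
    have h2 : (l - 1) * (φ s * s) ≤ s * deriv (fun u => φ u * u) s := by nlinarith
    have h3 : c₁ * s ^ (r - 1) ≤ φ s * s := (hb3 s hs hsδ).1
    have h4 : κ * (r * s ^ (r - 1)) = (l - 1) * (c₁ * s ^ (r - 1)) := by
      rw [hκ, div_mul_eq_mul_div, div_eq_iff hr0.ne']
      ring
    rw [h4]
    nlinarith [Real.rpow_nonneg hs.le (r - 1)]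
  have key : ∀ ε ∈ Ioo (0:ℝ) p, W ε ≤ W p := by
    intro ε hε
    have mono : MonotoneOn W (Icc ε p) := by
      apply monotoneOn_of_deriv_nonneg (convex_Icc ε p)
      · intro s hs
        exact (hWd s (lt_of_lt_of_le hε.1 hs.1)).continuousAt.continuousWithinAt
      · intro s hs
        rw [interior_Icc] at hs
        exact (hWd s (lt_trans hε.1 hs.1)).differentiableAt.differentiableWithinAt
      · intro s hs
        rw [interior_Icc] at hs
        have hs0 : 0 < s := lt_trans hε.1 hs.1
        rw [(hWd s hs0).deriv]
        exact hWnn s hs0 (le_trans hs.2.le hpδ)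
    exact mono (left_mem_Icc.mpr hε.2.le) (right_mem_Icc.mpr hε.2.le) hε.2.le
  have hlow : ∀ ε ∈ Ioo (0:ℝ) p, -((c₂ / r) + κ) * ε ^ r ≤ W p := by
    intro ε hε
    refine le_trans ?_ (key ε hε)
    have h1 : 0 ≤ ε * F0 φ ε := le_of_lt (mul_pos hε.1 (F0_nonneg_of_pos hφpos hε.1))
    have h2 : Phi φ ε ≤ c₂ / r * ε ^ r := by
      have := Phi_le hφC1 hφpos hδ₀ hr hb3 (p := ε)
        (by rw [abs_of_pos hε.1]; linarith [hε.2])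
      rwa [abs_of_pos hε.1] at this
    have : -((c₂ / r) + κ) * ε ^ r ≤ ε * F0 φ ε - Phi φ ε - κ * ε ^ r := by nlinarith
    simpa [hW, G] using this
  have htend : Tendsto (fun ε : ℝ => -((c₂ / r) + κ) * ε ^ r)
      (nhdsWithin 0 (Ioi 0)) (nhds 0) := by
    have hc : Continuous (fun s : ℝ => s ^ r) :=
      continuous_iff_continuousAt.mpr fun x =>
        Real.continuousAt_rpow_const x _ (Or.inr hr0.le)
    have := ((hc.tendsto 0).const_mul (-((c₂ / r) + κ))).mono_left
      (nhdsWithin_le_nhds (s := Ioi (0:ℝ)))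
    simpa [Real.zero_rpow hr0.ne'] using this
  have h0 : (0:ℝ) ≤ W p := by
    refine le_of_tendsto htend ?_
    filter_upwards [Ioo_mem_nhdsGT_of_mem (Set.left_mem_Ico.mpr hp0)] with ε hε
    exact hlow ε hε
  have : κ * p ^ r ≤ G φ p := by
    have := h0
    simp only [hW] at this
    linarith
  simpa [hκ] using this


lemma energy {V q : ℝ → ℝ} {α : ℝ}
    (hφC1 : ContDiffOn ℝ 1 φ (Set.Ioi 0)) (hφpos : ∀ t > 0, 0 < φ t)
    (hδ₀ : 0 < δ₀) (hr : 1 < r)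
    (hb3 : ∀ t : ℝ, 0 < t → t ≤ δ₀ → c₁ * t ^ (r - 1) ≤ φ t * t ∧ φ t * t ≤ c₂ * t ^ (r - 1))
    (hV1 : ContDiff ℝ 1 V) (hVα : V α = 0)
    (hq : Differentiable ℝ q)
    (hqd : ∀ t : ℝ, HasDerivAt
      (fun s => if deriv q s = 0 then 0 else φ |deriv q s| * deriv q s)
      (deriv V (q t)) t)
    (hq' : Differentiable ℝ (deriv q))
    (hqtop : Tendsto q atTop (nhds α)) :
    ∀ t, G φ (deriv q t) = V (q t) := by
  set E := fun t => deriv q t * F0 φ (deriv q t) - Phi φ (deriv q t) - V (q t) with hE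
  have hEd : ∀ t, HasDerivAt E 0 t := by
    intro t
    have h1 : HasDerivAt (deriv q) (deriv (deriv q) t) t := (hq' t).hasDerivAt
    have h2 : HasDerivAt (fun s => F0 φ (deriv q s)) (deriv V (q t)) t := hqd t
    have h3 : HasDerivAt (fun s => Phi φ (deriv q s))
        (F0 φ (deriv q t) * deriv (deriv q) t) t :=
      (Phi_hasDeriv hφC1 hφpos hδ₀ hr hb3 (deriv q t)).comp t h1
    have h4 : HasDerivAt (fun s => V (q s)) (deriv V (q t) * deriv q t) t :=
      ((hV1.differentiable one_ne_zero (q t)).hasDerivAt).comp t (hq t).hasDerivAt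
    have h5 := ((h1.mul h2).sub h3).sub h4
    refine h5.congr_deriv ?_
    ring
  have hconst : ∀ t, E t = E 0 := fun t =>
    is_const_of_deriv_eq_zero (fun s => (hEd s).differentiableAt) (fun s => (hEd s).deriv) t 0
  have hcq : Continuous q := hq.continuous
  have mvt : ∀ n : ℕ, ∃ ξ ∈ Ioo (n:ℝ) ((n:ℝ)+1),
      deriv q ξ = (q ((n:ℝ)+1) - q (n:ℝ)) / (((n:ℝ)+1) - (n:ℝ)) := by
    intro n
    exact exists_hasDerivAt_eq_slope q (deriv q) (by linarith)
      hcq.continuousOn (fun x _ => (hq x).hasDerivAt)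
  choose ξ hξmem hξ using mvt
  have hξtop : Tendsto ξ atTop atTop :=
    tendsto_atTop_mono (fun n => (hξmem n).1.le) tendsto_natCast_atTop_atTop
  have hdq : Tendsto (fun n => deriv q (ξ n)) atTop (nhds 0) := by
    have h5 : Tendsto (fun n : ℕ => q ((n:ℝ)+1) - q (n:ℝ)) atTop (nhds (α - α)) := by
      refine Tendsto.sub ?_ (hqtop.comp tendsto_natCast_atTop_atTop)
      exact hqtop.comp (tendsto_atTop_add_const_right _ 1 tendsto_natCast_atTop_atTop)
    have h6 : (fun n : ℕ => deriv q (ξ n)) = fun n : ℕ => q ((n:ℝ)+1) - q (n:ℝ) := by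
      funext n
      rw [hξ n]
      simp
    rw [h6]
    simpa using h5
  have habs : Tendsto (fun n => |deriv q (ξ n)|) atTop (nhds 0) := by
    have := hdq.abs
    simpa using this
  have t1 : Tendsto (fun n => deriv q (ξ n) * F0 φ (deriv q (ξ n))) atTop (nhds 0) := by
    refine squeeze_zero_norm' (a := fun n => c₂ * |deriv q (ξ n)| ^ r) ?_ ?_
    · filter_upwards [habs.eventually (eventually_le_nhds hδ₀)] with n hn
      exact mulF0_le hφpos hr hb3 hn
    · have hc : Continuous (fun s : ℝ => c₂ * s ^ r) :=
        continuous_const.mul (continuous_iff_continuousAt.mpr fun x =>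
          Real.continuousAt_rpow_const x _ (Or.inr (by linarith)))
      have := (hc.tendsto 0).comp habs
      simpa [Function.comp_def, Real.zero_rpow (by linarith : r ≠ 0)] using this
  have t2 : Tendsto (fun n => Phi φ (deriv q (ξ n))) atTop (nhds 0) := by
    have hPc : ContinuousAt (Phi φ) 0 :=
      (Phi_hasDeriv hφC1 hφpos hδ₀ hr hb3 0).continuousAt
    have := hPc.tendsto.comp hdq
    simpa [Function.comp_def, Phi_zero] using this
  have t3 : Tendsto (fun n => V (q (ξ n))) atTop (nhds 0) := by
    have hVc : Continuous V := hV1.continuous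
    have := (hVc.tendsto α).comp (hqtop.comp hξtop)
    simpa [Function.comp_def, hVα] using this
  have hE0 : E 0 = 0 := by
    have hEtend : Tendsto (fun n => E (ξ n)) atTop (nhds 0) := by
      have := (t1.sub t2).sub t3
      simpa [hE] using this
    have hEconst : Tendsto (fun n => E (ξ n)) atTop (nhds (E 0)) := by
      simp only [hconst]
      exact tendsto_const_nhds
    exact tendsto_nhds_unique hEconst hEtend
  intro t
  have := hconst t
  rw [hE0] at this
  simp only [hE] at this
  rw [G]
  linarith

lemma gronwall {u u' : ℝ → ℝ} {a b K : ℝ} (hab : a ≤ b) (hK : 0 ≤ K)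
    (hu : ∀ t ∈ Icc a b, HasDerivAt u (u' t) t)
    (hbound : ∀ t ∈ Icc a b, -(K * u t) ≤ u' t)
    (ha : 0 < u a) : 0 < u b := by
  set v := fun t => u t * Real.exp (K * t) with hv
  have hvd : ∀ t ∈ Icc a b, HasDerivAt v ((u' t + K * u t) * Real.exp (K * t)) t := by
    intro t ht
    have h1 := (hu t ht).mul (((hasDerivAt_id t).const_mul K).exp)
    refine h1.congr_deriv ?_
    simp only [id_eq]
    ring
  have mono : MonotoneOn v (Icc a b) := by
    apply monotoneOn_of_deriv_nonneg (convex_Icc a b)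
    · exact fun t ht => (hvd t ht).continuousAt.continuousWithinAt
    · intro t ht
      rw [interior_Icc] at ht
      exact (hvd t (Ioo_subset_Icc_self ht)).differentiableAt.differentiableWithinAt
    · intro t ht
      rw [interior_Icc] at ht
      have ht' := Ioo_subset_Icc_self ht
      rw [(hvd t ht').deriv]
      have := hbound t ht'
      have hexp : 0 < Real.exp (K * t) := Real.exp_pos _
      nlinarith
  have h1 : v a ≤ v b :=
    mono (left_mem_Icc.mpr hab) (right_mem_Icc.mpr hab) hab
  have h2 : 0 < v a := mul_pos ha (Real.exp_pos _)
  have h3 : 0 < v b := lt_of_lt_of_le h2 h1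
  have h4 : 0 < u b * Real.exp (K * b) := by simpa [hv] using h3
  have hexp : 0 < Real.exp (K * b) := Real.exp_pos _
  nlinarith [h4, hexp]


lemma upper {V q : ℝ → ℝ} {α a₂ δ : ℝ}
    (hφC1 : ContDiffOn ℝ 1 φ (Set.Ioi 0)) (hφpos : ∀ t > 0, 0 < φ t)
    (hφ1 : ∀ t > 0, 0 < deriv (fun s => φ s * s) t)
    (hl : 1 < l)
    (hφ2 : ∀ t > 0, l - 1 ≤ deriv (fun s => φ s * s) t / φ t ∧
      deriv (fun s => φ s * s) t / φ t ≤ m - 1)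
    (hc₁ : 0 < c₁) (hc₂ : 0 < c₂) (hδ₀ : 0 < δ₀) (hr : 1 < r)
    (hb3 : ∀ t : ℝ, 0 < t → t ≤ δ₀ → c₁ * t ^ (r - 1) ≤ φ t * t ∧ φ t * t ≤ c₂ * t ^ (r - 1))
    (hα : 0 < α) (hVα : V α = 0) (ha₂ : 0 ≤ a₂) (hδpos : 0 < δ)
    (hV3u : ∀ t, α - δ < t → t ≤ α → V t ≤ a₂ * Phi φ |t - α|)
    (hq : Differentiable ℝ q) (hqc : Continuous (deriv q))
    (hqbot : Tendsto q atBot (nhds (-α)))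
    (energy : ∀ t, G φ (deriv q t) = V (q t)) :
    ∀ t, q t < α := by
  have hr0 : (0:ℝ) < r := by linarith
  by_contra hcon
  push_neg at hcon
  obtain ⟨t₂, ht₂⟩ := hcon
  have h1 : q ⁻¹' (Iio α) ∈ atBot := hqbot (Iio_mem_nhds (by linarith : -α < α))
  obtain ⟨B, hB⟩ := Filter.mem_atBot_sets.mp h1
  set tb := min B (t₂ - 1) with htb
  have htbα : q tb < α := hB _ (min_le_left _ _)
  have htbt₂ : tb < t₂ := lt_of_le_of_lt (min_le_right _ _) (by linarith)
  set S := Icc tb t₂ ∩ q ⁻¹' {α} with hS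
  have hSne : S.Nonempty := by
    obtain ⟨s, hs1, hs2⟩ := intermediate_value_Icc htbt₂.le hq.continuous.continuousOn
      ⟨htbα.le, ht₂⟩
    exact ⟨s, hs1, by simp [hs2]⟩
  have hScl : IsClosed S := isClosed_Icc.inter (isClosed_singleton.preimage hq.continuous)
  have hSbd : BddBelow S := BddBelow.mono inter_subset_left bddBelow_Icc
  set t₃ := sInf S with ht₃
  have ht₃S : t₃ ∈ S := hScl.csInf_mem hSne hSbd
  have ht₃α : q t₃ = α := by simpa using ht₃S.2
  have htbt₃ : tb < t₃ := by
    rcases eq_or_lt_of_le ht₃S.1.1 with h | h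
    · rw [← h] at ht₃α; linarith
    · exact h
  have hlt : ∀ t, tb ≤ t → t < t₃ → q t < α := by
    intro t h2 h3
    by_contra h4
    push_neg at h4
    obtain ⟨s, hs1, hs2⟩ := intermediate_value_Icc h2 hq.continuous.continuousOn
      ⟨htbα.le, h4⟩
    have hsS : s ∈ S := ⟨⟨hs1.1, le_trans hs1.2 (le_trans h3.le ht₃S.1.2)⟩, by simp [hs2]⟩
    have := csInf_le hSbd hsS
    have : t₃ ≤ t := le_trans this hs1.2
    linarith
  have hq't₃ : deriv q t₃ = 0 := by
    apply G_eq_zero hφC1 hφpos hφ1 hδ₀ hr hb3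
    rw [energy t₃, ht₃α, hVα]
  set κ := (l - 1) * c₁ / r with hκ
  have hκ0 : 0 < κ := by
    apply div_pos (mul_pos (by linarith) hc₁) hr0
  set A := a₂ * c₂ / (r * κ) with hA
  have hA0 : 0 ≤ A := by positivity
  set K := A ^ r⁻¹ with hK
  have hK0 : 0 ≤ K := Real.rpow_nonneg hA0 _
  set ε := min δ δ₀ with hε
  have hεpos : 0 < ε := lt_min hδpos hδ₀
  have hc1 : Tendsto q (nhds t₃) (nhds α) := by
    rw [← ht₃α]; exact hq.continuous.continuousAt
  have hc2 : Tendsto (deriv q) (nhds t₃) (nhds 0) := by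
    rw [← hq't₃]; exact hqc.continuousAt
  have hev : ∀ᶠ t in nhds t₃, |q t - α| < ε ∧ |deriv q t| ≤ δ₀ := by
    filter_upwards [hc1 (Metric.ball_mem_nhds α hεpos),
      hc2 (Metric.closedBall_mem_nhds 0 hδ₀)] with t h5 h6
    constructor
    · simpa [Real.dist_eq] using h5
    · simpa [Real.dist_eq] using h6
  obtain ⟨η₀, hη₀, hball⟩ := Metric.eventually_nhds_iff.mp hev
  set a := max tb (t₃ - η₀/2) with ha
  have ha1 : tb ≤ a := le_max_left _ _
  have ha2 : a < t₃ := max_lt htbt₃ (by linarith)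
  have haI : ∀ t, a ≤ t → t ≤ t₃ → |q t - α| < ε ∧ |deriv q t| ≤ δ₀ := by
    intro t h2 h3
    apply hball
    rw [Real.dist_eq, abs_of_nonpos (by linarith)]
    have : t₃ - η₀/2 ≤ a := le_max_right _ _
    linarith
  have claim : ∀ t ∈ Icc a t₃, |deriv q t| ≤ K * (α - q t) := by
    intro t ht
    obtain ⟨h5, h6⟩ := haI t ht.1 ht.2
    have hqtle : q t ≤ α := by
      rcases eq_or_lt_of_le ht.2 with h7 | h7
      · rw [h7, ht₃α]
      · exact (hlt t (le_trans ha1 ht.1) h7).le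
    have habs : |q t - α| = α - q t := by
      rw [abs_of_nonpos (by linarith)]; ring
    have hu1 : α - q t < ε := by rw [← habs]; exact h5
    have hun : 0 ≤ α - q t := by linarith
    rcases eq_or_ne (deriv q t) 0 with h7 | h7
    · rw [h7, abs_zero]
      exact mul_nonneg hK0 hun
    · have h8 : 0 < |deriv q t| := abs_pos.mpr h7
      have h9 : κ * |deriv q t| ^ r ≤ G φ |deriv q t| :=
        G_lower hφC1 hφpos hl hφ2 hc₁ hc₂ hδ₀ hr hb3 h8 h6
      have h10 : G φ |deriv q t| = V (q t) := by rw [G_abs, energy t]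
      have h11 : V (q t) ≤ a₂ * Phi φ |q t - α| :=
        hV3u (q t) (by have : ε ≤ δ := min_le_left _ _; linarith) hqtle
      have h12 : Phi φ (α - q t) ≤ c₂ / r * |α - q t| ^ r := by
        apply Phi_le hφC1 hφpos hδ₀ hr hb3
        rw [abs_of_nonneg hun]
        have : ε ≤ δ₀ := min_le_right _ _
        linarith
    
      have h13 : κ * |deriv q t| ^ r ≤ a₂ * (c₂ / r) * (α - q t) ^ r := by
        rw [abs_of_nonneg hun] at h12
        calc κ * |deriv q t| ^ r ≤ V (q t) := by rw [← h10]; exact h9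
          _ ≤ a₂ * Phi φ |q t - α| := h11
          _ = a₂ * Phi φ (α - q t) := by rw [habs]
          _ ≤ a₂ * (c₂ / r * (α - q t) ^ r) := by nlinarith [Phi_nonneg hφpos (α - q t)]
          _ = a₂ * (c₂ / r) * (α - q t) ^ r := by ring
      have h14 : |deriv q t| ^ r ≤ A * (α - q t) ^ r := by
        have heq : κ * (A * (α - q t) ^ r) = a₂ * (c₂ / r) * (α - q t) ^ r := by
          rw [hA]
          field_simp
        have := h13
        rw [← heq] at this
        exact (mul_le_mul_iff_of_pos_left hκ0).mp this
      calc |deriv q t| = (|deriv q t| ^ r) ^ r⁻¹ :=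
            (Real.rpow_rpow_inv (abs_nonneg _) hr0.ne').symm
        _ ≤ (A * (α - q t) ^ r) ^ r⁻¹ :=
            Real.rpow_le_rpow (Real.rpow_nonneg (abs_nonneg _) r) h14
              (inv_nonneg.mpr hr0.le)
        _ = A ^ r⁻¹ * ((α - q t) ^ r) ^ r⁻¹ :=
            Real.mul_rpow hA0 (Real.rpow_nonneg hun r)
        _ = K * (α - q t) := by rw [Real.rpow_rpow_inv hun hr0.ne']
  have hgr := gronwall (u := fun t => α - q t) (u' := fun t => -deriv q t)
    (a := a) (b := t₃) ha2.le hK0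
    (fun t _ => ((hq t).hasDerivAt.const_sub α))
    (fun t ht => by
      have := (abs_le.mp (claim t ht)).2
      simp only [neg_le_neg_iff]
      linarith)
    (sub_pos.mpr (hlt a ha1 ha2))
  simp only [ht₃α] at hgr
  linarith


lemma deriv_reflect {q : ℝ → ℝ} (hq : Differentiable ℝ q) :
    deriv (fun t => -q (-t)) = fun t => deriv q (-t) := by
  funext t
  have h := ((hq (-t)).hasDerivAt.comp t (hasDerivAt_neg t)).neg
  have h2 : -(deriv q (-t) * -1) = deriv q (-t) := by ring
  rw [h2] at h
  exact h.deriv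

lemma confine {V q : ℝ → ℝ} {α a₂ a₄ δ : ℝ}
    (hφC1 : ContDiffOn ℝ 1 φ (Set.Ioi 0)) (hφpos : ∀ t > 0, 0 < φ t)
    (hφ1 : ∀ t > 0, 0 < deriv (fun s => φ s * s) t)
    (hl : 1 < l)
    (hφ2 : ∀ t > 0, l - 1 ≤ deriv (fun s => φ s * s) t / φ t ∧
      deriv (fun s => φ s * s) t / φ t ≤ m - 1)
    (hc₁ : 0 < c₁) (hc₂ : 0 < c₂) (hδ₀ : 0 < δ₀) (hr : 1 < r)
    (hb3 : ∀ t : ℝ, 0 < t → t ≤ δ₀ → c₁ * t ^ (r - 1) ≤ φ t * t ∧ φ t * t ≤ c₂ * t ^ (r - 1))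
    (hα : 0 < α) (hVα : V α = 0) (hVmα : V (-α) = 0)
    (ha₂ : 0 ≤ a₂) (ha₄ : 0 ≤ a₄) (hδpos : 0 < δ)
    (hV3u : ∀ t, α - δ < t → t ≤ α → V t ≤ a₂ * Phi φ |t - α|)
    (hV3l : ∀ t, -α ≤ t → t < -α + δ → V t ≤ a₄ * Phi φ |t + α|)
    (hq : Differentiable ℝ q) (hqc : Continuous (deriv q))
    (hqtop : Tendsto q atTop (nhds α)) (hqbot : Tendsto q atBot (nhds (-α)))
    (energy : ∀ t, G φ (deriv q t) = V (q t)) :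
    ∀ t, -α < q t ∧ q t < α := by
  have hupper : ∀ t, q t < α :=
    upper hφC1 hφpos hφ1 hl hφ2 hc₁ hc₂ hδ₀ hr hb3 hα hVα ha₂ hδpos hV3u
      hq hqc hqbot energy
  have hder := deriv_reflect hq
  have hlower : ∀ t, (fun t => -q (-t)) t < α := by
    apply upper hφC1 hφpos hφ1 hl hφ2 hc₁ hc₂ hδ₀ hr hb3 hα (V := fun x => V (-x))
      (by simpa using hVmα) ha₄ hδpos
    · intro t h1 h2
      have h3 : -α ≤ -t := by linarith
      have h4 : -t < -α + δ := by linarith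
      have := hV3l (-t) h3 h4
      calc V (-t) ≤ a₄ * Phi φ |-t + α| := this
        _ = a₄ * Phi φ |t - α| := by
            congr 1
            rw [show -t + α = -(t - α) by ring, abs_neg]
    · exact (hq.comp differentiable_neg).neg
    · rw [hder]
      exact hqc.comp continuous_neg
    · have h1 : Tendsto (fun t : ℝ => -t) atBot atTop := tendsto_neg_atBot_atTop
      have := (hqtop.comp h1).neg
      simpa using this
    · intro t
      rw [hder]
      simp only
      rw [energy (-t), neg_neg]
  intro t
  refine ⟨?_, hupper t⟩
  have := hlower (-t)
  simp only [neg_neg] at this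
  linarith

lemma deriv_pos {V q : ℝ → ℝ} {α : ℝ}
    (hφC1 : ContDiffOn ℝ 1 φ (Set.Ioi 0)) (hφpos : ∀ t > 0, 0 < φ t)
    (hφ1 : ∀ t > 0, 0 < deriv (fun s => φ s * s) t)
    (hδ₀ : 0 < δ₀) (hr : 1 < r)
    (hb3 : ∀ t : ℝ, 0 < t → t ≤ δ₀ → c₁ * t ^ (r - 1) ≤ φ t * t ∧ φ t * t ≤ c₂ * t ^ (r - 1))
    (hV2 : ∀ t, -α < t → t < α → 0 < V t)
    (hconf : ∀ t, -α < q t ∧ q t < α)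
    (hqc : Continuous (deriv q))
    (hqbot : Tendsto q atBot (nhds (-α)))
    (energy : ∀ t, G φ (deriv q t) = V (q t)) :
    ∀ t, 0 < deriv q t := by
  have hne : ∀ t, deriv q t ≠ 0 := by
    intro t h
    have h1 := energy t
    rw [h, G_zero] at h1
    have h2 := hV2 (q t) (hconf t).1 (hconf t).2
    linarith
  intro t
  rcases lt_or_gt_of_ne (hne t) with hneg | hpos
  · exfalso
    have hall : ∀ s, deriv q s < 0 := by
      intro s
      rcases lt_or_gt_of_ne (hne s) with h | h
      · exact h
      · exfalso
        have h0 : (0:ℝ) ∈ uIcc (deriv q t) (deriv q s) := by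
          rw [mem_uIcc]
          left
          exact ⟨hneg.le, h.le⟩
        obtain ⟨x, _, hx⟩ := intermediate_value_uIcc (hqc.continuousOn (s := uIcc t s)) h0
        exact hne x hx
    have hanti : StrictAnti q := strictAnti_of_deriv_neg hall
    have hle : -α ≥ q t := by
      apply ge_of_tendsto hqbot
      rw [Filter.eventually_atBot]
      exact ⟨t - 1, fun s hs => (hanti (show s < t by linarith)).le⟩
    have := (hconf t).1
    linarith
  · exact hpos

end S1

theorem statement1 (φ V : ℝ → ℝ) (l m α : ℝ) (q₁ q₂ : ℝ → ℝ)
    (hφC1 : ContDiffOn ℝ 1 φ (Set.Ioi 0))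
    (hφpos : ∀ t > 0, 0 < φ t)
    (hφ1 : ∀ t > 0, 0 < deriv (fun s => φ s * s) t)
    (hl : 1 < l) (hlm : l ≤ m)
    (hφ2 : ∀ t > 0, l - 1 ≤ deriv (fun s => φ s * s) t / φ t ∧
      deriv (fun s => φ s * s) t / φ t ≤ m - 1)
    (hφ3 : ∃ c₁ c₂ δ₀ r : ℝ, 0 < c₁ ∧ 0 < c₂ ∧ 0 < δ₀ ∧ 1 < r ∧
      ∀ t : ℝ, 0 < t → t ≤ δ₀ → c₁ * t ^ (r - 1) ≤ φ t * t ∧ φ t * t ≤ c₂ * t ^ (r - 1))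
    (hα : 0 < α)
    (hV1 : ContDiff ℝ 1 V) (hVnn : ∀ t, 0 ≤ V t)
    (hV2 : V α = 0 ∧ V (-α) = 0 ∧ ∀ t, -α < t → t < α → 0 < V t)
    (hV3 : ∃ a₁ a₂ a₃ a₄ δ : ℝ, 0 < a₁ ∧ 0 < a₂ ∧ 0 < a₃ ∧ 0 < a₄ ∧ 0 < δ ∧ δ < α ∧
      (∀ t, α - δ < t → t ≤ α → a₁ * Phi φ |t - α| ≤ V t ∧ V t ≤ a₂ * Phi φ |t - α|) ∧
      (∀ t, -α ≤ t → t < -α + δ → a₃ * Phi φ |t + α| ≤ V t ∧ V t ≤ a₄ * Phi φ |t + α|))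
    (hV4 : ∃ k₁ k₂ k₃ k₄ k₅ k₆ k₇ k₈ : ℝ, 0 < k₁ ∧ 0 < k₂ ∧ 0 < k₃ ∧ 0 < k₄ ∧
      0 < k₅ ∧ 0 < k₆ ∧ 0 < k₇ ∧ 0 < k₈ ∧
      (∀ t, 0 ≤ t → t ≤ α →
        -(k₃ * t * φ (k₄ * |t - α|) * |t - α|) ≤ deriv V t ∧
        deriv V t ≤ -(k₁ * t * φ (k₂ * |t - α|) * |t - α|)) ∧
      (∀ t, -α ≤ t → t ≤ 0 →
        -(k₇ * t * φ (k₈ * |t + α|) * |t + α|) ≤ deriv V t ∧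
        deriv V t ≤ -(k₅ * t * φ (k₆ * |t + α|) * |t + α|)))
    (hV5 : ∃ ρ > 0, StrictConvexOn ℝ (Set.Ioo (-α - ρ) (-α + ρ)) V ∧
      StrictConvexOn ℝ (Set.Ioo (α - ρ) (α + ρ)) V)
    (hq₁ : IsClassicalSolution φ V q₁)
    (hq₁' : Differentiable ℝ (deriv q₁)) (hq₁c : Continuous (deriv q₁))
    (hq₁top : Tendsto q₁ atTop (nhds α)) (hq₁bot : Tendsto q₁ atBot (nhds (-α)))
    (hq₂ : IsClassicalSolution φ V q₂)
    (hq₂' : Differentiable ℝ (deriv q₂)) (hq₂c : Continuous (deriv q₂))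
    (hq₂top : Tendsto q₂ atTop (nhds α)) (hq₂bot : Tendsto q₂ atBot (nhds (-α))) :
    ∃ τ : ℝ, ∀ t : ℝ, q₂ t = q₁ (t + τ) := by
  obtain ⟨c₁, c₂, δ₀, r, hc₁, hc₂, hδ₀, hr, hb3⟩ := hφ3
  obtain ⟨hVα, hVmα, hV2i⟩ := hV2
  obtain ⟨a₁, a₂, a₃, a₄, δ, ha₁, ha₂, ha₃, ha₄, hδpos, hδα, hV3u', hV3l'⟩ := hV3
  have hV3u : ∀ t, α - δ < t → t ≤ α → V t ≤ a₂ * Phi φ |t - α| :=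
    fun t h1 h2 => (hV3u' t h1 h2).2
  have hV3l : ∀ t, -α ≤ t → t < -α + δ → V t ≤ a₄ * Phi φ |t + α| :=
    fun t h1 h2 => (hV3l' t h1 h2).2
  have energy1 : ∀ t, S1.G φ (deriv q₁ t) = V (q₁ t) :=
    S1.energy hφC1 hφpos hδ₀ hr hb3 hV1 hVα hq₁.1 hq₁.2 hq₁' hq₁top
  have energy2 : ∀ t, S1.G φ (deriv q₂ t) = V (q₂ t) :=
    S1.energy hφC1 hφpos hδ₀ hr hb3 hV1 hVα hq₂.1 hq₂.2 hq₂' hq₂top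
  have conf1 := S1.confine hφC1 hφpos hφ1 hl hφ2 hc₁ hc₂ hδ₀ hr hb3 hα hVα hVmα
    ha₂.le ha₄.le hδpos hV3u hV3l hq₁.1 hq₁c hq₁top hq₁bot energy1
  have conf2 := S1.confine hφC1 hφpos hφ1 hl hφ2 hc₁ hc₂ hδ₀ hr hb3 hα hVα hVmα
    ha₂.le ha₄.le hδpos hV3u hV3l hq₂.1 hq₂c hq₂top hq₂bot energy2
  have pos1 := S1.deriv_pos hφC1 hφpos hφ1 hδ₀ hr hb3 hV2i conf1 hq₁c hq₁bot energy1
  have pos2 := S1.deriv_pos hφC1 hφpos hφ1 hδ₀ hr hb3 hV2i conf2 hq₂c hq₂bot energy2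
  have mono1 : StrictMono q₁ := strictMono_of_deriv_pos pos1
  have hcq₁ : Continuous q₁ := hq₁.1.continuous
  have surj : ∀ y, -α < y → y < α → ∃ t, q₁ t = y := by
    intro y hy1 hy2
    obtain ⟨B1, hB1⟩ := Filter.mem_atBot_sets.mp (hq₁bot (Iio_mem_nhds hy1))
    obtain ⟨B2, hB2⟩ := Filter.mem_atTop_sets.mp (hq₁top (Ioi_mem_nhds hy2))
    have h1 : q₁ B1 < y := hB1 B1 le_rfl
    have h2 : y < q₁ B2 := hB2 B2 le_rfl
    have hAB : B1 < B2 := mono1.lt_iff_lt.mp (lt_trans h1 h2)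
    obtain ⟨s, _, hs⟩ := intermediate_value_Icc hAB.le hcq₁.continuousOn ⟨h1.le, h2.le⟩
    exact ⟨s, hs⟩
  classical
  set w : ℝ → ℝ := fun y => if h : ∃ t, q₁ t = y then h.choose else 0 with hw
  have hwspec : ∀ y, (∃ t, q₁ t = y) → q₁ (w y) = y := by
    intro y h
    simp only [hw, dif_pos h]
    exact h.choose_spec
  have hwI : ∀ y, -α < y → y < α → q₁ (w y) = y := fun y h1 h2 => hwspec y (surj y h1 h2)
  have hcontw : ∀ y, -α < y → y < α → ContinuousAt w y := by
    intro y hy1 hy2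
    rw [Metric.continuousAt_iff]
    intro ε hε
    have hq₁t₀ : q₁ (w y) = y := hwI y hy1 hy2
    set t₀ := w y with ht₀
    have hy₁lt : q₁ (t₀ - ε/2) < y := by rw [← hq₁t₀]; exact mono1 (by linarith)
    have hy₂gt : y < q₁ (t₀ + ε/2) := by rw [← hq₁t₀]; exact mono1 (by linarith)
    refine ⟨min (y - q₁ (t₀ - ε/2)) (q₁ (t₀ + ε/2) - y),
      lt_min (by linarith) (by linarith), ?_⟩
    intro z hz
    rw [Real.dist_eq] at hz
    have hz' := abs_lt.mp hz
    have hm1 : min (y - q₁ (t₀ - ε/2)) (q₁ (t₀ + ε/2) - y) ≤ y - q₁ (t₀ - ε/2) :=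
      min_le_left _ _
    have hm2 : min (y - q₁ (t₀ - ε/2)) (q₁ (t₀ + ε/2) - y) ≤ q₁ (t₀ + ε/2) - y :=
      min_le_right _ _
    have hz1 : q₁ (t₀ - ε/2) < z := by linarith [hz'.1]
    have hz2 : z < q₁ (t₀ + ε/2) := by linarith [hz'.2]
    have hzI1 : -α < z := lt_trans (conf1 (t₀ - ε/2)).1 hz1
    have hzI2 : z < α := lt_trans hz2 (conf1 (t₀ + ε/2)).2
    have hq₁wz : q₁ (w z) = z := hwI z hzI1 hzI2
    have hw1 : t₀ - ε/2 < w z := mono1.lt_iff_lt.mp (by rw [hq₁wz]; exact hz1)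
    have hw2 : w z < t₀ + ε/2 := mono1.lt_iff_lt.mp (by rw [hq₁wz]; exact hz2)
    rw [Real.dist_eq, abs_lt]
    constructor <;> [linarith; linarith]
  have hGinj := (S1.G_strictMonoOn hφC1 hφpos hφ1 hδ₀ hr hb3).injOn
  have key : ∀ t, deriv q₂ t = deriv q₁ (w (q₂ t)) := by
    intro t
    apply hGinj (mem_Ici.mpr (pos2 t).le) (mem_Ici.mpr (pos1 _).le)
    rw [energy2 t, energy1 (w (q₂ t)), hwI (q₂ t) (conf2 t).1 (conf2 t).2]
  have hwd : ∀ t, HasDerivAt w (deriv q₁ (w (q₂ t)))⁻¹ (q₂ t) := by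
    intro t
    apply HasDerivAt.of_local_left_inverse (hcontw (q₂ t) (conf2 t).1 (conf2 t).2)
      ((hq₁.1 (w (q₂ t))).hasDerivAt) (ne_of_gt (pos1 _))
    filter_upwards [IsOpen.mem_nhds isOpen_Ioo
      (show q₂ t ∈ Ioo (-α) α from ⟨(conf2 t).1, (conf2 t).2⟩)] with z hz
    exact hwI z hz.1 hz.2
  have hD : ∀ t, HasDerivAt (fun s => w (q₂ s) - s) 0 t := by
    intro t
    have h1 := (hwd t).comp t (hq₂.1 t).hasDerivAt
    have h2 := h1.sub (hasDerivAt_id t)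
    have h3 : (deriv q₁ (w (q₂ t)))⁻¹ * deriv q₂ t - 1 = 0 := by
      rw [key t, inv_mul_cancel₀ (ne_of_gt (pos1 _))]
      ring
    rw [h3] at h2
    exact h2
  have hconst : ∀ t, w (q₂ t) - t = w (q₂ 0) - 0 := fun t =>
    is_const_of_deriv_eq_zero (fun s => (hD s).differentiableAt)
      (fun s => (hD s).deriv) t 0
  refine ⟨w (q₂ 0), fun t => ?_⟩
  have h1 := hconst t
  have h2 : w (q₂ t) = t + w (q₂ 0) := by linarith
  rw [← h2]
  exact (hwI (q₂ t) (conf2 t).1 (conf2 t).2).symm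
end

section
/- Assume (φ1)–(φ4) and (V1)–(V5), and let q be a heteroclinic solution of problem (P). Then there exist constants θ₁, θ₂, θ₃, θ₄ > 0 such that 0 < α − q(t) ≤ θ₁ e^{−θ₂ t} for all t ≥ 0 and 0 < α + q(t) ≤ θ₃ e^{θ₄ t} for all t ≤ 0. -/
open Real Filter Set MeasureTheory

section auxlemmas
set_option linter.unusedVariables false
set_option linter.unusedSectionVars false

lemma cont_rho {φ : ℝ → ℝ} (hc : ContinuousOn φ (Set.Ici 0)) :
    Continuous (fun s : ℝ => s * φ |s|) := by
  have : Continuous (fun s : ℝ => φ |s|) :=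
    ContinuousOn.comp_continuous hc continuous_abs (fun x => abs_nonneg x)
  exact continuous_id.mul this

lemma Phi_eq (φ : ℝ → ℝ) (t : ℝ) : Phi φ t = ∫ s in (0:ℝ)..t, s * φ |s| := by
  have habs : ∀ x : ℝ, 0 ≤ x → Phi φ x = ∫ s in (0:ℝ)..x, s * φ |s| := by
    intro x hx
    rw [Phi, abs_of_nonneg hx]
    apply intervalIntegral.integral_congr
    intro s hs
    rw [uIcc_of_le hx] at hs
    simp [abs_of_nonneg hs.1]
  rcases le_or_gt 0 t with h | h
  · exact habs t h
  · have h1 : Phi φ t = Phi φ (-t) := by rw [Phi, Phi, abs_neg]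
    rw [h1, habs (-t) (by linarith)]
    have key := intervalIntegral.integral_comp_neg (a := (0:ℝ)) (b := -t) (fun s => s * φ |s|)
    simp only [neg_neg, abs_neg, neg_zero] at key
    have h2 : (∫ s in (0:ℝ)..(-t), (-s) * φ |s|) = -∫ s in (0:ℝ)..(-t), s * φ |s| := by
      rw [← intervalIntegral.integral_neg]; congr 1; ext s; ring
    have h3 : (∫ s in t..(0:ℝ), s * φ |s|) = -∫ s in (0:ℝ)..t, s * φ |s| :=
      intervalIntegral.integral_symm 0 t
    rw [h2, h3] at key
    linarith [key]

lemma Phi_hasDerivAt {φ : ℝ → ℝ} (hc : ContinuousOn φ (Set.Ici 0)) (x : ℝ) :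
    HasDerivAt (Phi φ) (x * φ |x|) x := by
  have hfun : Phi φ = fun t => ∫ s in (0:ℝ)..t, s * φ |s| := funext (Phi_eq φ)
  rw [hfun]
  exact ((cont_rho hc).integral_hasStrictDerivAt 0 x).hasDerivAt

lemma phi0_nonneg {φ : ℝ → ℝ} (hc : ContinuousOn φ (Set.Ici 0))
    (hp : ∀ t > (0:ℝ), 0 < φ t) : 0 ≤ φ 0 := by
  have h1 : Tendsto φ (nhdsWithin 0 (Set.Ioi 0)) (nhds (φ 0)) :=
    ((hc 0 (Set.mem_Ici.mpr le_rfl)).mono (fun x (hx : x ∈ Set.Ioi (0:ℝ)) => Set.mem_Ici.mpr (le_of_lt hx))).tendsto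
  exact ge_of_tendsto h1 (eventually_nhdsWithin_of_forall (fun x hx => (hp x hx).le))

lemma phi_nonneg {φ : ℝ → ℝ} (hc : ContinuousOn φ (Set.Ici 0))
    (hp : ∀ t > (0:ℝ), 0 < φ t) : ∀ t : ℝ, 0 ≤ t → 0 ≤ φ t := by
  intro t ht
  rcases eq_or_lt_of_le ht with h | h
  · rw [← h]; exact phi0_nonneg hc hp
  · exact (hp t h).le

lemma Phi_nonneg {φ : ℝ → ℝ} (hc : ContinuousOn φ (Set.Ici 0))
    (hp : ∀ t > (0:ℝ), 0 < φ t) (s : ℝ) : 0 ≤ Phi φ s := by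
  rw [Phi]
  apply intervalIntegral.integral_nonneg (abs_nonneg s)
  intro u hu
  exact mul_nonneg hu.1 (phi_nonneg hc hp u hu.1)

lemma Phi_le_half {φ : ℝ → ℝ} (hc : ContinuousOn φ (Set.Ici 0))
    (hm : MonotoneOn φ (Set.Ici 0)) (s : ℝ) : Phi φ s ≤ φ |s| * s ^ 2 / 2 := by
  rw [Phi]
  have h1 : (∫ u in (0:ℝ)..|s|, u * φ u) ≤ ∫ u in (0:ℝ)..|s|, u * φ |s| := by
    apply intervalIntegral.integral_mono_on (abs_nonneg s)
    · apply ContinuousOn.intervalIntegrable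
      rw [uIcc_of_le (abs_nonneg s)]
      have := (cont_rho hc).continuousOn (s := Set.Icc 0 |s|)
      apply this.congr
      intro u hu
      simp [abs_of_nonneg hu.1]
    · exact (continuous_id.mul continuous_const).intervalIntegrable _ _
    · intro u hu
      rcases eq_or_lt_of_le hu.1 with h | h
      · simp [← h]
      · exact mul_le_mul_of_nonneg_left (hm (le_of_lt h) (abs_nonneg s) hu.2) hu.1
  calc (∫ u in (0:ℝ)..|s|, u * φ u) ≤ ∫ u in (0:ℝ)..|s|, u * φ |s| := h1
    _ = φ |s| * s ^ 2 / 2 := by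
        rw [intervalIntegral.integral_mul_const, integral_id]
        rw [sq_abs]; ring

lemma Phi_rpow_bounds {φ : ℝ → ℝ} (hc : ContinuousOn φ (Set.Ici 0))
    {c₁ c₂ δ₀ r : ℝ} (hc₁ : 0 < c₁) (hr : 1 < r)
    (h3 : ∀ t : ℝ, 0 < t → t ≤ δ₀ → c₁ * t ^ (r - 1) ≤ φ t * t ∧ φ t * t ≤ c₂ * t ^ (r - 1))
    {w : ℝ} (hw0 : 0 ≤ w) (hwδ : w ≤ δ₀) :
    c₁ * w ^ r / r ≤ Phi φ w ∧ Phi φ w ≤ c₂ * w ^ r / r := by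
  have hrm : (0:ℝ) < r - 1 := by linarith
  have hint : ∀ c : ℝ, (∫ u in (0:ℝ)..w, c * u ^ (r-1)) = c * w ^ r / r := by
    intro c
    rw [intervalIntegral.integral_const_mul, integral_rpow (Or.inl (by linarith))]
    rw [Real.zero_rpow (by linarith : r - 1 + 1 ≠ 0)]
    rw [show r - 1 + 1 = r by ring]
    ring
  have hI1 : IntervalIntegrable (fun u : ℝ => c₁ * u ^ (r-1)) volume 0 w :=
    (intervalIntegral.intervalIntegrable_rpow (Or.inl hrm.le)).const_mul c₁
  have hI2 : IntervalIntegrable (fun u : ℝ => c₂ * u ^ (r-1)) volume 0 w :=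
    (intervalIntegral.intervalIntegrable_rpow (Or.inl hrm.le)).const_mul c₂
  have hIρ : IntervalIntegrable (fun u : ℝ => u * φ |u|) volume 0 w :=
    (cont_rho hc).intervalIntegrable _ _
  have hPhiw : Phi φ w = ∫ u in (0:ℝ)..w, u * φ |u| := Phi_eq φ w
  constructor
  · rw [hPhiw, ← hint c₁]
    apply intervalIntegral.integral_mono_on hw0 hI1 hIρ
    intro u hu
    rcases eq_or_lt_of_le hu.1 with h | h
    · rw [← h]; simp [Real.zero_rpow (ne_of_gt hrm)]
    · rw [abs_of_nonneg hu.1]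
      have := (h3 u h (le_trans hu.2 hwδ)).1
      linarith [this]
  · rw [hPhiw, ← hint c₂]
    apply intervalIntegral.integral_mono_on hw0 hIρ hI2
    intro u hu
    rcases eq_or_lt_of_le hu.1 with h | h
    · rw [← h]; simp [Real.zero_rpow (ne_of_gt hrm)]
    · rw [abs_of_nonneg hu.1]
      have := (h3 u h (le_trans hu.2 hwδ)).2
      linarith [this]

lemma energy_const {φ V q : ℝ → ℝ} (hc : ContinuousOn φ (Set.Ici 0))
    (hVd : Differentiable ℝ V) (hq1 : Differentiable ℝ q)
    (hqF : ∀ t : ℝ, HasDerivAt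
      (fun s => if deriv q s = 0 then 0 else φ |deriv q s| * deriv q s)
      (deriv V (q t)) t)
    (hq2 : Differentiable ℝ (deriv q)) :
    ∀ t : ℝ, φ |deriv q t| * (deriv q t)^2 - Phi φ (deriv q t) - V (q t)
      = φ |deriv q 0| * (deriv q 0)^2 - Phi φ (deriv q 0) - V (q 0) := by
  set F : ℝ → ℝ := fun s => if deriv q s = 0 then 0 else φ |deriv q s| * deriv q s with hF
  have hqF' : ∀ t, deriv q t * F t = φ |deriv q t| * (deriv q t)^2 := by
    intro t
    by_cases h : deriv q t = 0
    · simp [hF, h]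
    · simp only [hF, if_neg h]; ring
  set E : ℝ → ℝ := fun t => deriv q t * F t - Phi φ (deriv q t) - V (q t) with hE
  have hEd : ∀ t, HasDerivAt E 0 t := by
    intro t
    have h1 : HasDerivAt (fun s => deriv q s * F s)
        (deriv (deriv q) t * F t + deriv q t * deriv V (q t)) t :=
      ((hq2 t).hasDerivAt).mul (hqF t)
    have h2 : HasDerivAt (fun s => Phi φ (deriv q s))
        ((deriv q t * φ |deriv q t|) * deriv (deriv q) t) t :=
      (Phi_hasDerivAt hc (deriv q t)).comp t ((hq2 t).hasDerivAt)
    have h3 : HasDerivAt (fun s => V (q s)) (deriv V (q t) * deriv q t) t :=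
      ((hVd (q t)).hasDerivAt).comp t ((hq1 t).hasDerivAt)
    have h4 := (h1.sub h2).sub h3
    refine h4.congr_deriv ?_
    by_cases h : deriv q t = 0
    · simp [hF, h]
    · simp only [hF, if_neg h]; ring
  have hconst := is_const_of_deriv_eq_zero (fun t => (hEd t).differentiableAt)
    (fun t => (hEd t).deriv)
  intro t
  have := hconst t 0
  simp only [hE] at this
  rw [← hqF' t, ← hqF' 0]
  linarith [this]

lemma gronwall_back {w : ℝ → ℝ} {Λ a b : ℝ} (hw : Differentiable ℝ w)
    (hΛ : 0 ≤ Λ) (hab : a < b) (hwb : w b = 0)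
    (hpos : ∀ t ∈ Set.Ico a b, 0 < w t)
    (hder : ∀ t ∈ Set.Icc a b, |deriv w t| ≤ Λ * w t) : False := by
  set g : ℝ → ℝ := fun t => w t * Real.exp (Λ * t) with hg
  have hgd : ∀ t, HasDerivAt g ((deriv w t + Λ * w t) * Real.exp (Λ * t)) t := by
    intro t
    have h1 := ((hw t).hasDerivAt).mul
      (((hasDerivAt_id t).const_mul Λ).exp)
    refine h1.congr_deriv ?_
    simp only [id_eq]
    ring
  have hmono : MonotoneOn g (Set.Icc a b) := by
    apply monotoneOn_of_deriv_nonneg (convex_Icc a b)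
    · exact (Continuous.continuousOn (continuous_iff_continuousAt.mpr fun t => (hgd t).continuousAt))
    · intro t ht
      exact (hgd t).differentiableAt.differentiableWithinAt
    · intro t ht
      rw [interior_Icc] at ht
      rw [(hgd t).deriv]
      have hd := hder t (Set.mem_Icc.mpr ⟨ht.1.le, ht.2.le⟩)
      have : -(Λ * w t) ≤ deriv w t := by
        have := neg_abs_le (deriv w t); linarith [abs_le.mp (le_refl |deriv w t|)]
      nlinarith [Real.exp_pos (Λ * t), neg_abs_le (deriv w t)]
  have h1 : g a ≤ g b := hmono (Set.mem_Icc.mpr ⟨le_rfl, hab.le⟩)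
    (Set.mem_Icc.mpr ⟨hab.le, le_rfl⟩) hab.le
  have h2 : g b = 0 := by simp [hg, hwb]
  have h3 : 0 < g a := mul_pos (hpos a (Set.mem_Ico.mpr ⟨le_rfl, hab⟩)) (Real.exp_pos _)
  linarith

lemma gronwall_fwd {w : ℝ → ℝ} {Λ a b : ℝ} (hw : Differentiable ℝ w)
    (hΛ : 0 ≤ Λ) (hab : a < b) (hwa : w a = 0)
    (hpos : ∀ t ∈ Set.Ioc a b, 0 < w t)
    (hder : ∀ t ∈ Set.Icc a b, |deriv w t| ≤ Λ * w t) : False := by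
  have hwc : Differentiable ℝ (fun t => w (-t)) := hw.comp (differentiable_neg)
  apply gronwall_back (w := fun t => w (-t)) (Λ := Λ) (a := -b) (b := -a) hwc hΛ
    (by linarith) (by simpa using hwa)
  · intro t ht
    apply hpos
    constructor <;> [linarith [ht.2]; linarith [ht.1]]
  · intro t ht
    have hd : deriv (fun t => w (-t)) t = -deriv w (-t) := by
      have h := ((hw (-t)).hasDerivAt).comp t (hasDerivAt_neg t)
      have h2 : HasDerivAt (fun t => w (-t)) (deriv w (-t) * -1) t := h
      rw [h2.deriv]; ring
    rw [hd, abs_neg]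
    exact hder (-t) ⟨by linarith [ht.2], by linarith [ht.1]⟩

lemma rpow_ineq {x y B r : ℝ} (hx : 0 ≤ x) (hy : 0 ≤ y) (hB : 0 < B) (hr : 0 < r)
    (h : x ^ r ≤ B * y ^ r) : x ≤ B ^ r⁻¹ * y := by
  have h2 : (B ^ r⁻¹ * y) ^ r = B * y ^ r := by
    rw [Real.mul_rpow (Real.rpow_nonneg hB.le _) hy, Real.rpow_inv_rpow hB.le hr.ne']
  rw [← Real.rpow_le_rpow_iff hx (mul_nonneg (Real.rpow_nonneg hB.le _) hy) hr, h2]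
  exact h

section keys
variable {φ : ℝ → ℝ} {c₁ c₂ δ₀ r : ℝ}
  (hc : ContinuousOn φ (Set.Ici 0)) (hm : MonotoneOn φ (Set.Ici 0))
  (hp : ∀ t > (0:ℝ), 0 < φ t)
  (hc₁ : 0 < c₁) (hc₂ : 0 < c₂) (hδ₀ : 0 < δ₀) (hr : 1 < r)
  (h3 : ∀ t : ℝ, 0 < t → t ≤ δ₀ → c₁ * t ^ (r - 1) ≤ φ t * t ∧ φ t * t ≤ c₂ * t ^ (r - 1))

include hc hm hp hc₁ hc₂ hδ₀ hr h3 in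
lemma key_ub {s w A : ℝ} (hA : 0 < A) (hs : |s| ≤ δ₀) (hw0 : 0 ≤ w) (hw : w ≤ δ₀)
    (hmain : φ |s| * s ^ 2 - Phi φ s ≤ A * Phi φ w) :
    |s| ≤ (2 * A * c₂ / (r * c₁)) ^ r⁻¹ * w := by
  have hr0 : (0:ℝ) < r := lt_trans one_pos hr
  have hB : (0:ℝ) < 2 * A * c₂ / (r * c₁) := by positivity
  apply rpow_ineq (abs_nonneg s) hw0 hB hr0
  rcases eq_or_ne s 0 with h | h
  · rw [h]
    simp only [abs_zero]
    rw [Real.zero_rpow hr0.ne']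
    positivity
  · have hsa : 0 < |s| := abs_pos.mpr h
    have hpow : |s| ^ (r - 1) * |s| = |s| ^ r := by
      rw [Real.rpow_sub hsa, Real.rpow_one]
      field_simp
    have e1 : c₁ * |s| ^ r ≤ φ |s| * s ^ 2 := by
      have hmul := (h3 |s| hsa hs).1
      rw [← hpow, ← sq_abs]
      calc c₁ * (|s| ^ (r-1) * |s|) = (c₁ * |s| ^ (r-1)) * |s| := by ring
        _ ≤ (φ |s| * |s|) * |s| := mul_le_mul_of_nonneg_right hmul (abs_nonneg s)
        _ = φ |s| * |s| ^ 2 := by ring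
    have e2 : Phi φ s ≤ φ |s| * s ^ 2 / 2 := Phi_le_half hc hm s
    have e3 : A * Phi φ w ≤ A * (c₂ * w ^ r / r) :=
      mul_le_mul_of_nonneg_left (Phi_rpow_bounds hc hc₁ hr h3 hw0 hw).2 hA.le
    have e4 : c₁ * |s| ^ r / 2 ≤ A * (c₂ * w ^ r / r) := by linarith
    have key : c₁ * |s| ^ r * r ≤ 2 * A * c₂ * w ^ r := by
      have h' := mul_le_mul_of_nonneg_left e4 (by positivity : (0:ℝ) ≤ 2*r)
      calc c₁ * |s| ^ r * r = 2*r*(c₁ * |s| ^ r/2) := by ring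
        _ ≤ 2*r*(A * (c₂ * w ^ r / r)) := h'
        _ = 2 * A * c₂ * w ^ r := by field_simp
    rw [div_mul_eq_mul_div, le_div_iff₀ (by positivity)]
    linarith

include hc hm hp hc₁ hc₂ hδ₀ hr h3 in
lemma key_lb {s w A : ℝ} (hA : 0 < A) (hs : |s| ≤ δ₀) (hw0 : 0 ≤ w) (hw : w ≤ δ₀)
    (hmain : A * Phi φ w ≤ φ |s| * s ^ 2 - Phi φ s) :
    w ≤ (r * c₂ / (A * c₁)) ^ r⁻¹ * |s| := by
  have hr0 : (0:ℝ) < r := lt_trans one_pos hr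
  have hB : (0:ℝ) < r * c₂ / (A * c₁) := by positivity
  apply rpow_ineq hw0 (abs_nonneg s) hB hr0
  have hlow := (Phi_rpow_bounds hc hc₁ hr h3 hw0 hw).1
  rcases eq_or_ne s 0 with h | h
  · subst h
    have hP0 : Phi φ 0 = 0 := by simp [Phi]
    have hmain2 : A * Phi φ w ≤ 0 := by
      simpa [hP0] using hmain
    have hPw : Phi φ w ≤ 0 := by nlinarith
    have h6 : c₁ * w ^ r / r ≤ 0 := le_trans hlow hPw
    rw [div_le_iff₀ hr0] at h6
    have hwr : w ^ r ≤ 0 := by nlinarith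
    simp only [abs_zero, Real.zero_rpow hr0.ne', mul_zero]
    exact hwr
  · have hsa : 0 < |s| := abs_pos.mpr h
    have hpow : |s| ^ (r - 1) * |s| = |s| ^ r := by
      rw [Real.rpow_sub hsa, Real.rpow_one]
      field_simp
    have e1 : φ |s| * s ^ 2 ≤ c₂ * |s| ^ r := by
      have hmul := (h3 |s| hsa hs).2
      rw [← hpow, ← sq_abs]
      calc φ |s| * |s| ^ 2 = (φ |s| * |s|) * |s| := by ring
        _ ≤ (c₂ * |s| ^ (r-1)) * |s| := mul_le_mul_of_nonneg_right hmul (abs_nonneg s)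
        _ = c₂ * (|s| ^ (r-1) * |s|) := by ring
    have e2 : 0 ≤ Phi φ s := Phi_nonneg hc hp s
    have e4 : A * (c₁ * w ^ r / r) ≤ c₂ * |s| ^ r := by
      have := mul_le_mul_of_nonneg_left hlow hA.le
      linarith
    have key : A * c₁ * w ^ r ≤ r * c₂ * |s| ^ r := by
      have h' := mul_le_mul_of_nonneg_left e4 hr0.le
      calc A * c₁ * w ^ r = r * (A * (c₁ * w ^ r / r)) := by field_simp
        _ ≤ r * (c₂ * |s| ^ r) := h'
        _ = r * c₂ * |s| ^ r := by ring
    rw [div_mul_eq_mul_div, le_div_iff₀ (by positivity)]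
    linarith

end keys

lemma touch_back {w : ℝ → ℝ} {Λ tc a : ℝ} (hwd : Differentiable ℝ w) (hΛ : 0 ≤ Λ)
    (ha : a < tc) (hwt : w tc = 0) (hpos : ∀ t, a ≤ t → t < tc → 0 < w t)
    (hkey : ∀ᶠ t in nhds tc, a ≤ t → t ≤ tc → |deriv w t| ≤ Λ * w t) : False := by
  rw [Metric.eventually_nhds_iff] at hkey
  obtain ⟨η₀, hη₀, hkey⟩ := hkey
  set η := min (η₀/2) ((tc - a)/2) with hη
  have hηpos : 0 < η := by
    apply lt_min (by linarith) (by linarith)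
  have h1 : a < tc - η := by
    have : η ≤ (tc - a)/2 := min_le_right _ _
    linarith
  apply gronwall_back (w := w) (Λ := Λ) (a := tc - η) (b := tc) hwd hΛ (by linarith) hwt
  · intro t ht
    exact hpos t (by linarith [ht.1]) ht.2
  · intro t ht
    have hd : dist t tc < η₀ := by
      rw [Real.dist_eq, abs_lt]
      constructor
      · linarith [ht.1, min_le_left (η₀/2) ((tc - a)/2)]
      · linarith [ht.2, hη₀]
    exact hkey hd (by linarith [ht.1, hηpos]) ht.2

lemma touch_fwd {w : ℝ → ℝ} {Λ tc b : ℝ} (hwd : Differentiable ℝ w) (hΛ : 0 ≤ Λ)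
    (hb : tc < b) (hwt : w tc = 0) (hpos : ∀ t, tc < t → t ≤ b → 0 < w t)
    (hkey : ∀ᶠ t in nhds tc, tc ≤ t → t ≤ b → |deriv w t| ≤ Λ * w t) : False := by
  rw [Metric.eventually_nhds_iff] at hkey
  obtain ⟨η₀, hη₀, hkey⟩ := hkey
  set η := min (η₀/2) ((b - tc)/2) with hη
  have hηpos : 0 < η := by
    apply lt_min (by linarith) (by linarith)
  have h1 : tc + η < b := by
    have : η ≤ (b - tc)/2 := min_le_right _ _
    linarith
  apply gronwall_fwd (w := w) (Λ := Λ) (a := tc) (b := tc + η) hwd hΛ (by linarith) hwt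
  · intro t ht
    exact hpos t ht.1 (by linarith [ht.2])
  · intro t ht
    have hd : dist t tc < η₀ := by
      rw [Real.dist_eq]
      rw [abs_lt]
      constructor <;> [linarith [ht.1, min_le_left (η₀/2) ((b-tc)/2), hη₀];
        linarith [ht.2, min_le_left (η₀/2) ((b-tc)/2)]]
    exact hkey hd ht.1 (by linarith [ht.2, h1])

end auxlemmas

set_option maxHeartbeats 1000000 in
theorem statement2 (φ V : ℝ → ℝ) (l m α : ℝ) (q : ℝ → ℝ)
    (hφC1 : ContDiffOn ℝ 1 φ (Set.Ioi 0))
    (hφpos : ∀ t > 0, 0 < φ t)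
    (hφ1 : ∀ t > 0, 0 < deriv (fun s => φ s * s) t)
    (hl : 1 < l) (hlm : l ≤ m)
    (hφ2 : ∀ t > 0, l - 1 ≤ deriv (fun s => φ s * s) t / φ t ∧
      deriv (fun s => φ s * s) t / φ t ≤ m - 1)
    (hφ3 : ∃ c₁ c₂ δ₀ r : ℝ, 0 < c₁ ∧ 0 < c₂ ∧ 0 < δ₀ ∧ 1 < r ∧
      ∀ t : ℝ, 0 < t → t ≤ δ₀ → c₁ * t ^ (r - 1) ≤ φ t * t ∧ φ t * t ≤ c₂ * t ^ (r - 1))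
    (hφ4 : ContinuousOn φ (Set.Ici 0) ∧ MonotoneOn φ (Set.Ici 0))
    (hα : 0 < α)
    (hV1 : ContDiff ℝ 1 V) (hVnn : ∀ t, 0 ≤ V t)
    (hV2 : V α = 0 ∧ V (-α) = 0 ∧ ∀ t, -α < t → t < α → 0 < V t)
    (hV3 : ∃ a₁ a₂ a₃ a₄ δ : ℝ, 0 < a₁ ∧ 0 < a₂ ∧ 0 < a₃ ∧ 0 < a₄ ∧ 0 < δ ∧ δ < α ∧
      (∀ t, α - δ < t → t ≤ α → a₁ * Phi φ |t - α| ≤ V t ∧ V t ≤ a₂ * Phi φ |t - α|) ∧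
      (∀ t, -α ≤ t → t < -α + δ → a₃ * Phi φ |t + α| ≤ V t ∧ V t ≤ a₄ * Phi φ |t + α|))
    (hV4 : ∃ k₁ k₂ k₃ k₄ k₅ k₆ k₇ k₈ : ℝ, 0 < k₁ ∧ 0 < k₂ ∧ 0 < k₃ ∧ 0 < k₄ ∧
      0 < k₅ ∧ 0 < k₆ ∧ 0 < k₇ ∧ 0 < k₈ ∧
      (∀ t, 0 ≤ t → t ≤ α →
        -(k₃ * t * φ (k₄ * |t - α|) * |t - α|) ≤ deriv V t ∧
        deriv V t ≤ -(k₁ * t * φ (k₂ * |t - α|) * |t - α|)) ∧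
      (∀ t, -α ≤ t → t ≤ 0 →
        -(k₇ * t * φ (k₈ * |t + α|) * |t + α|) ≤ deriv V t ∧
        deriv V t ≤ -(k₅ * t * φ (k₆ * |t + α|) * |t + α|)))
    (hV5 : ∃ ρ > 0, StrictConvexOn ℝ (Set.Ioo (-α - ρ) (-α + ρ)) V ∧
      StrictConvexOn ℝ (Set.Ioo (α - ρ) (α + ρ)) V)
    (hq : IsHeteroclinic φ V α q) :
    ∃ θ₁ θ₂ θ₃ θ₄ : ℝ, 0 < θ₁ ∧ 0 < θ₂ ∧ 0 < θ₃ ∧ 0 < θ₄ ∧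
      (∀ t : ℝ, 0 ≤ t → 0 < α - q t ∧ α - q t ≤ θ₁ * Real.exp (-θ₂ * t)) ∧
      (∀ t : ℝ, t ≤ 0 → 0 < α + q t ∧ α + q t ≤ θ₃ * Real.exp (θ₄ * t)) := by
  classical
  obtain ⟨c₁, c₂, δ₀, r, hc₁, hc₂, hδ₀, hr, h3⟩ := hφ3
  obtain ⟨a₁, a₂, a₃, a₄, δ, ha₁, ha₂, ha₃, ha₄, hδ, hδα, hV3p, hV3m⟩ := hV3
  obtain ⟨hVα, hVmα, hVpos⟩ := hV2
  obtain ⟨⟨hq1, hqF⟩, hq2, hq'c, hq0, htop, hbot⟩ := hq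
  have hc := hφ4.1
  have hm := hφ4.2
  have hp := hφpos
  have hVd : Differentiable ℝ V := hV1.differentiable one_ne_zero
  set Psi : ℝ → ℝ := fun s => φ |s| * s ^ 2 - Phi φ s with hPsidef
  -- basic Psi facts
  have hPsi_half : ∀ s : ℝ, φ |s| * s ^ 2 / 2 ≤ Psi s := by
    intro s
    have := Phi_le_half hc hm s
    simp only [hPsidef]
    linarith
  have hPsi_le : ∀ s : ℝ, Psi s ≤ φ |s| * s ^ 2 := by
    intro s
    have := Phi_nonneg hc hp s
    simp only [hPsidef]
    linarith
  have hPsi_nonneg : ∀ s : ℝ, 0 ≤ Psi s := by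
    intro s
    refine le_trans ?_ (hPsi_half s)
    have h0 := phi_nonneg hc hp |s| (abs_nonneg s)
    positivity
  have hPsi_pos : ∀ s : ℝ, s ≠ 0 → 0 < Psi s := by
    intro s hs
    refine lt_of_lt_of_le ?_ (hPsi_half s)
    have h0 := hp |s| (abs_pos.mpr hs)
    have h1 : 0 < s ^ 2 := by positivity
    positivity
  have hPsi0 : Psi 0 = 0 := by simp [hPsidef, Phi]
  -- energy
  have henergy := energy_const hc hVd hq1 hqF hq2
  have hVq_top : Tendsto (fun t => V (q t)) atTop (nhds 0) := by
    have := (hV1.continuous.tendsto α).comp htop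
    rwa [hVα] at this
  have hVq_bot : Tendsto (fun t => V (q t)) atBot (nhds 0) := by
    have := (hV1.continuous.tendsto (-α)).comp hbot
    rwa [hVmα] at this
  have hqbddtop : ∀ᶠ t in atTop, q t < α + 1 := htop.eventually_lt_const (by linarith)
  -- energy constant is zero
  have hcE : ∀ t, Psi (deriv q t) - V (q t) = Psi (deriv q 0) - V (q 0) := by
    intro t
    have h := henergy t
    simp only [hPsidef]
    linarith [h]
  have hczero : ∀ t : ℝ, Psi (deriv q t) = V (q t) := by
    set cE := Psi (deriv q 0) - V (q 0) with hcEdef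
    have h0le : (0:ℝ) ≤ cE := by
      have hlim : Tendsto (fun t => -V (q t)) atTop (nhds 0) := by
        simpa using hVq_top.neg
      refine le_of_tendsto hlim (Eventually.of_forall ?_)
      intro t
      have h1 := hcE t
      have h2 := hPsi_nonneg (deriv q t)
      linarith
    rcases eq_or_lt_of_le h0le with hzero | hpos'
    · intro t
      have h1 := hcE t
      rw [← hzero] at h1
      linarith
    · exfalso
      have hK := hp 1 one_pos
      set ε := min 1 (Real.sqrt (cE / (2 * φ 1))) with hε
      have hεpos : 0 < ε := lt_min one_pos (Real.sqrt_pos.mpr (by positivity))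
      have hPsi_small : ∀ s : ℝ, |s| ≤ ε → Psi s < cE := by
        intro s hs
        have h1 : φ |s| ≤ φ 1 := hm (abs_nonneg s) (Set.mem_Ici.mpr zero_le_one)
          (le_trans hs (min_le_left _ _))
        have h2 : s ^ 2 ≤ cE / (2 * φ 1) := by
          have ha : |s| ≤ Real.sqrt (cE / (2 * φ 1)) := le_trans hs (min_le_right _ _)
          have hb : |s| ^ 2 ≤ Real.sqrt (cE / (2 * φ 1)) ^ 2 :=
            pow_le_pow_left₀ (abs_nonneg s) ha 2
          rwa [sq_abs, Real.sq_sqrt (by positivity : (0:ℝ) ≤ cE / (2 * φ 1))] at hb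
        calc Psi s ≤ φ |s| * s ^ 2 := hPsi_le s
          _ ≤ φ 1 * s ^ 2 := mul_le_mul_of_nonneg_right h1 (sq_nonneg s)
          _ ≤ φ 1 * (cE / (2 * φ 1)) := mul_le_mul_of_nonneg_left h2 hK.le
          _ = cE / 2 := by
              field_simp
          _ < cE := by linarith
      have hbig : ∀ t, ε < |deriv q t| := by
        intro t
        by_contra hcon
        push_neg at hcon
        have h1 := hPsi_small _ hcon
        have h2 := hcE t
        have h3 := hVnn (q t)
        linarith
      have hne : ∀ t, deriv q t ≠ 0 := by
        intro t h
        have h1 := hbig t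
        rw [h, abs_zero] at h1
        linarith
      have hcase : ∀ t, ε ≤ deriv q t ∨ deriv q t ≤ -ε := by
        intro t
        rcases le_total 0 (deriv q t) with h | h
        · left
          have h1 := hbig t
          rw [abs_of_nonneg h] at h1
          linarith
        · right
          have h1 := hbig t
          rw [abs_of_nonpos h] at h1
          linarith
      have hss : (∀ t, ε ≤ deriv q t) ∨ (∀ t, deriv q t ≤ -ε) := by
        rcases hcase 0 with h0 | h0
        · left
          intro t
          rcases hcase t with h | h
          · exact h
          · exfalso
            have hsub := intermediate_value_uIcc (a := t) (b := 0)
              (Continuous.continuousOn hq'c)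
            have hmem : (0:ℝ) ∈ uIcc (deriv q t) (deriv q 0) := by
              rw [Set.mem_uIcc]
              left
              constructor <;> linarith
            obtain ⟨t', _, ht'⟩ := hsub hmem
            exact hne t' ht'
        · right
          intro t
          rcases hcase t with h | h
          · exfalso
            have hsub := intermediate_value_uIcc (a := 0) (b := t)
              (Continuous.continuousOn hq'c)
            have hmem : (0:ℝ) ∈ uIcc (deriv q 0) (deriv q t) := by
              rw [Set.mem_uIcc]
              left
              constructor <;> linarith
            obtain ⟨t', _, ht'⟩ := hsub hmem
            exact hne t' ht'
          · exact h
      obtain ⟨T, hT⟩ := eventually_atTop.mp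
        ((htop.eventually_lt_const (show α < α + 1 by linarith)).and
          (htop.eventually_const_lt (show α - 1 < α by linarith)))
      have hεid : ∀ x : ℝ, HasDerivAt (fun t : ℝ => ε * t) ε x := fun x => by
        simpa using (hasDerivAt_id x).const_mul ε
      rcases hss with hup | hdn
      · have hd : ∀ x, HasDerivAt (fun t => q t - ε * t) (deriv q x - ε) x := fun x =>
          ((hq1 x).hasDerivAt).sub (hεid x)
        have hmono2 : Monotone (fun t => q t - ε * t) := by
          apply monotone_of_deriv_nonneg (fun x => (hd x).differentiableAt)
          intro x
          rw [(hd x).deriv]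
          linarith [hup x]
        set t₀ := max T (max 0 ((α + 1 - q 0) / ε + 1)) with ht₀
        have ht₀T : T ≤ t₀ := le_max_left _ _
        have ht₀0 : (0:ℝ) ≤ t₀ := le_trans (le_max_left _ _) (le_max_right _ _)
        have ht₀b : (α + 1 - q 0) / ε + 1 ≤ t₀ := le_trans (le_max_right _ _) (le_max_right _ _)
        have h1 := hmono2 ht₀0
        simp only [mul_zero, sub_zero] at h1
        have hεt : ε * ((α + 1 - q 0) / ε + 1) ≤ ε * t₀ :=
          mul_le_mul_of_nonneg_left ht₀b hεpos.le
        have heq : ε * ((α + 1 - q 0) / ε + 1) = α + 1 - q 0 + ε := by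
          field_simp
        have h2 := (hT t₀ ht₀T).1
        linarith
      · have hd : ∀ x, HasDerivAt (fun t => -q t - ε * t) (-deriv q x - ε) x := fun x =>
          ((hq1 x).hasDerivAt).neg.sub (hεid x)
        have hmono2 : Monotone (fun t => -q t - ε * t) := by
          apply monotone_of_deriv_nonneg (fun x => (hd x).differentiableAt)
          intro x
          rw [(hd x).deriv]
          linarith [hdn x]
        set t₀ := max T (max 0 ((q 0 - (α - 1)) / ε + 1)) with ht₀
        have ht₀T : T ≤ t₀ := le_max_left _ _
        have ht₀0 : (0:ℝ) ≤ t₀ := le_trans (le_max_left _ _) (le_max_right _ _)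
        have ht₀b : (q 0 - (α - 1)) / ε + 1 ≤ t₀ := le_trans (le_max_right _ _) (le_max_right _ _)
        have h1 := hmono2 ht₀0
        simp only [mul_zero, sub_zero] at h1
        have hεt : ε * ((q 0 - (α - 1)) / ε + 1) ≤ ε * t₀ :=
          mul_le_mul_of_nonneg_left ht₀b hεpos.le
        have heq : ε * ((q 0 - (α - 1)) / ε + 1) = q 0 - (α - 1) + ε := by
          field_simp
        have h2 := (hT t₀ ht₀T).2
        linarith
  -- no touching
  have hqcont : Continuous q := hq1.continuous
  have hKU : ∀ (A : ℝ), 0 < A →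
      (∀ x, α - δ < x → x ≤ α → V x ≤ A * Phi φ |x - α|) →
      ∀ tc : ℝ, q tc = α → deriv q tc = 0 →
      ∀ᶠ t in nhds tc, q t ≤ α →
        |deriv (fun s => α - q s) t| ≤ (2 * A * c₂ / (r * c₁)) ^ r⁻¹ * (α - q t) := by
    intro A hA hVb tc hqtc hdtc
    have h1 : ∀ᶠ t in nhds tc, |deriv q t| < δ₀ := by
      have hcont : Tendsto (fun t => |deriv q t|) (nhds tc) (nhds |deriv q tc|) :=
        (hq'c.abs).continuousAt
      rw [hdtc, abs_zero] at hcont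
      exact hcont.eventually_lt_const hδ₀
    have h2 : ∀ᶠ t in nhds tc, α - q t < min δ δ₀ := by
      have hcont : Tendsto (fun t => α - q t) (nhds tc) (nhds (α - q tc)) :=
        (continuous_const.sub hqcont).continuousAt
      rw [hqtc, sub_self] at hcont
      exact hcont.eventually_lt_const (lt_min hδ hδ₀)
    filter_upwards [h1, h2] with t h1t h2t hqle
    have hw0 : 0 ≤ α - q t := by linarith
    have hderw : deriv (fun s => α - q s) t = -deriv q t := by
      rw [deriv_const_sub]
    rw [hderw, abs_neg]
    have hqgt : α - δ < q t := by
      have := lt_of_lt_of_le h2t (min_le_left _ _)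
      linarith
    have hVbt := hVb (q t) hqgt hqle
    have habs : |q t - α| = α - q t := by
      rw [abs_of_nonpos (by linarith)]
      ring
    rw [habs] at hVbt
    have hmain : φ |deriv q t| * (deriv q t) ^ 2 - Phi φ (deriv q t)
        ≤ A * Phi φ (α - q t) := by
      have hcz := hczero t
      simp only [hPsidef] at hcz
      calc φ |deriv q t| * (deriv q t) ^ 2 - Phi φ (deriv q t) = V (q t) := hcz
        _ ≤ A * Phi φ (α - q t) := hVbt
    exact key_ub hc hm hp hc₁ hc₂ hδ₀ hr h3 hA h1t.le hw0
      (le_trans h2t.le (min_le_right _ _)) hmain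
  have hKD : ∀ (A : ℝ), 0 < A →
      (∀ x, -α ≤ x → x < -α + δ → V x ≤ A * Phi φ |x + α|) →
      ∀ tc : ℝ, q tc = -α → deriv q tc = 0 →
      ∀ᶠ t in nhds tc, -α ≤ q t →
        |deriv (fun s => q s + α) t| ≤ (2 * A * c₂ / (r * c₁)) ^ r⁻¹ * (q t + α) := by
    intro A hA hVb tc hqtc hdtc
    have h1 : ∀ᶠ t in nhds tc, |deriv q t| < δ₀ := by
      have hcont : Tendsto (fun t => |deriv q t|) (nhds tc) (nhds |deriv q tc|) :=
        (hq'c.abs).continuousAt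
      rw [hdtc, abs_zero] at hcont
      exact hcont.eventually_lt_const hδ₀
    have h2 : ∀ᶠ t in nhds tc, q t + α < min δ δ₀ := by
      have hcont : Tendsto (fun t => q t + α) (nhds tc) (nhds (q tc + α)) :=
        (hqcont.add continuous_const).continuousAt
      rw [hqtc, neg_add_cancel] at hcont
      exact hcont.eventually_lt_const (lt_min hδ hδ₀)
    filter_upwards [h1, h2] with t h1t h2t hqge
    have hw0 : 0 ≤ q t + α := by linarith
    have hderw : deriv (fun s => q s + α) t = deriv q t := by
      rw [deriv_add_const]
    rw [hderw]
    have hqlt : q t < -α + δ := by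
      have := lt_of_lt_of_le h2t (min_le_left _ _)
      linarith
    have hVbt := hVb (q t) hqge hqlt
    have habs : |q t + α| = q t + α := abs_of_nonneg hw0
    rw [habs] at hVbt
    have hmain : φ |deriv q t| * (deriv q t) ^ 2 - Phi φ (deriv q t)
        ≤ A * Phi φ (q t + α) := by
      have hcz := hczero t
      simp only [hPsidef] at hcz
      linarith
    exact key_ub hc hm hp hc₁ hc₂ hδ₀ hr h3 hA h1t.le hw0
      (le_trans h2t.le (min_le_right _ _)) hmain
  have hΛU : (0:ℝ) ≤ (2 * a₂ * c₂ / (r * c₁)) ^ r⁻¹ := Real.rpow_nonneg (by positivity) _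
  have hΛD : (0:ℝ) ≤ (2 * a₄ * c₂ / (r * c₁)) ^ r⁻¹ := Real.rpow_nonneg (by positivity) _
  have hup : ∀ t : ℝ, q t < α := by
    by_contra hcon
    push_neg at hcon
    obtain ⟨t₀, ht₀⟩ := hcon
    have ht₀ne : t₀ ≠ 0 := by
      intro h
      rw [h, hq0] at ht₀
      linarith
    rcases lt_or_gt_of_ne ht₀ne with ht₀neg | ht₀pos
    · -- t₀ < 0, touch from the right side
      set S := {t | α ≤ q t} ∩ Icc t₀ 0 with hS
      have hSclosed : IsClosed S :=
        (isClosed_le continuous_const hqcont).inter isClosed_Icc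
      have hSne : S.Nonempty := ⟨t₀, ht₀, le_rfl, ht₀neg.le⟩
      have hSbdd : BddAbove S := ⟨0, fun x hx => hx.2.2⟩
      set tc := sSup S with htc
      have htcS : tc ∈ S := hSclosed.csSup_mem hSne hSbdd
      have htcne : tc ≠ 0 := by
        intro h
        have h2 := htcS.1
        simp only [Set.mem_setOf_eq] at h2
        rw [h, hq0] at h2
        linarith
      have htcneg : tc < 0 := lt_of_le_of_ne htcS.2.2 htcne
      have hlt' : ∀ t, tc < t → t ≤ 0 → q t < α := by
        intro t h1 h2
        by_contra hge
        push_neg at hge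
        have hmem : t ∈ S := ⟨hge, le_trans htcS.2.1 h1.le, h2⟩
        exact absurd (le_csSup hSbdd hmem) (not_le.mpr h1)
      have hqtc : q tc = α := by
        have hS1 := htcS.1
        simp only [Set.mem_setOf_eq] at hS1
        refine le_antisymm ?_ hS1
        have hto : Tendsto q (nhdsWithin tc (Ioi tc)) (nhds (q tc)) :=
          (hqcont.continuousAt).continuousWithinAt.tendsto
        refine le_of_tendsto hto ?_
        have hmem : Ioo tc 0 ∈ nhdsWithin tc (Ioi tc) :=
          Ioo_mem_nhdsGT_of_mem ⟨le_rfl, htcneg⟩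
        filter_upwards [hmem] with t ht
        exact (hlt' t ht.1 ht.2.le).le
      have hdtc : deriv q tc = 0 := by
        by_contra hne0
        have h1 := hPsi_pos _ hne0
        have h2 := hczero tc
        rw [hqtc, hVα] at h2
        linarith
      refine touch_fwd (w := fun s => α - q s) (Λ := (2 * a₂ * c₂ / (r * c₁)) ^ r⁻¹)
        (b := 0) ((differentiable_const α).sub hq1) hΛU htcneg (by simp [hqtc]) ?_ ?_
      · intro t h1 h2
        show 0 < α - q t
        have := hlt' t h1 h2
        linarith
      · have hkn := hKU a₂ ha₂ (fun x h1 h2 => (hV3p x h1 h2).2) tc hqtc hdtc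
        filter_upwards [hkn] with t hknt hge hle
        rcases eq_or_lt_of_le hge with h | h
        · apply hknt
          rw [← h, hqtc]
        · exact hknt (hlt' t h hle).le
    · -- t₀ > 0, touch from the left side
      set S := {t | α ≤ q t} ∩ Icc 0 t₀ with hS
      have hSclosed : IsClosed S :=
        (isClosed_le continuous_const hqcont).inter isClosed_Icc
      have hSne : S.Nonempty := ⟨t₀, ht₀, ht₀pos.le, le_rfl⟩
      have hSbdd : BddBelow S := ⟨0, fun x hx => hx.2.1⟩
      set tc := sInf S with htc
      have htcS : tc ∈ S := hSclosed.csInf_mem hSne hSbdd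
      have htcne : tc ≠ 0 := by
        intro h
        have h2 := htcS.1
        simp only [Set.mem_setOf_eq] at h2
        rw [h, hq0] at h2
        linarith
      have htcpos : 0 < tc := lt_of_le_of_ne htcS.2.1 (Ne.symm htcne)
      have hlt' : ∀ t, 0 ≤ t → t < tc → q t < α := by
        intro t h1 h2
        by_contra hge
        push_neg at hge
        have hmem : t ∈ S := ⟨hge, h1, le_trans h2.le htcS.2.2⟩
        exact absurd (csInf_le hSbdd hmem) (not_le.mpr h2)
      have hqtc : q tc = α := by
        have hS1 := htcS.1
        simp only [Set.mem_setOf_eq] at hS1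
        refine le_antisymm ?_ hS1
        have hto : Tendsto q (nhdsWithin tc (Iio tc)) (nhds (q tc)) :=
          (hqcont.continuousAt).continuousWithinAt.tendsto
        refine le_of_tendsto hto ?_
        have hmem : Ioo 0 tc ∈ nhdsWithin tc (Iio tc) :=
          Ioo_mem_nhdsLT_of_mem ⟨htcpos, le_rfl⟩
        filter_upwards [hmem] with t ht
        exact (hlt' t ht.1.le ht.2).le
      have hdtc : deriv q tc = 0 := by
        by_contra hne0
        have h1 := hPsi_pos _ hne0
        have h2 := hczero tc
        rw [hqtc, hVα] at h2
        linarith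
      refine touch_back (w := fun s => α - q s) (Λ := (2 * a₂ * c₂ / (r * c₁)) ^ r⁻¹)
        (a := 0) ((differentiable_const α).sub hq1) hΛU htcpos (by simp [hqtc]) ?_ ?_
      · intro t h1 h2
        show 0 < α - q t
        have := hlt' t h1 h2
        linarith
      · have hkn := hKU a₂ ha₂ (fun x h1 h2 => (hV3p x h1 h2).2) tc hqtc hdtc
        filter_upwards [hkn] with t hknt hge hle
        rcases eq_or_lt_of_le hle with h | h
        · apply hknt
          rw [h, hqtc]
        · exact hknt (hlt' t hge h).le
  have hdown : ∀ t : ℝ, -α < q t := by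
    by_contra hcon
    push_neg at hcon
    obtain ⟨t₀, ht₀⟩ := hcon
    have ht₀ne : t₀ ≠ 0 := by
      intro h
      rw [h, hq0] at ht₀
      linarith
    rcases lt_or_gt_of_ne ht₀ne with ht₀neg | ht₀pos
    · set S := {t | q t ≤ -α} ∩ Icc t₀ 0 with hS
      have hSclosed : IsClosed S :=
        (isClosed_le hqcont continuous_const).inter isClosed_Icc
      have hSne : S.Nonempty := ⟨t₀, ht₀, le_rfl, ht₀neg.le⟩
      have hSbdd : BddAbove S := ⟨0, fun x hx => hx.2.2⟩
      set tc := sSup S with htc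
      have htcS : tc ∈ S := hSclosed.csSup_mem hSne hSbdd
      have htcne : tc ≠ 0 := by
        intro h
        have h2 := htcS.1
        simp only [Set.mem_setOf_eq] at h2
        rw [h, hq0] at h2
        linarith
      have htcneg : tc < 0 := lt_of_le_of_ne htcS.2.2 htcne
      have hlt' : ∀ t, tc < t → t ≤ 0 → -α < q t := by
        intro t h1 h2
        by_contra hge
        push_neg at hge
        have hmem : t ∈ S := ⟨hge, le_trans htcS.2.1 h1.le, h2⟩
        exact absurd (le_csSup hSbdd hmem) (not_le.mpr h1)
      have hqtc : q tc = -α := by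
        have hS1 := htcS.1
        simp only [Set.mem_setOf_eq] at hS1
        refine le_antisymm hS1 ?_
        have hto : Tendsto q (nhdsWithin tc (Ioi tc)) (nhds (q tc)) :=
          (hqcont.continuousAt).continuousWithinAt.tendsto
        refine ge_of_tendsto hto ?_
        have hmem : Ioo tc 0 ∈ nhdsWithin tc (Ioi tc) :=
          Ioo_mem_nhdsGT_of_mem ⟨le_rfl, htcneg⟩
        filter_upwards [hmem] with t ht
        exact (hlt' t ht.1 ht.2.le).le
      have hdtc : deriv q tc = 0 := by
        by_contra hne0
        have h1 := hPsi_pos _ hne0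
        have h2 := hczero tc
        rw [hqtc, hVmα] at h2
        linarith
      refine touch_fwd (w := fun s => q s + α) (Λ := (2 * a₄ * c₂ / (r * c₁)) ^ r⁻¹)
        (b := 0) (hq1.add_const α) hΛD htcneg (by simp [hqtc]) ?_ ?_
      · intro t h1 h2
        show 0 < q t + α
        have := hlt' t h1 h2
        linarith
      · have hkn := hKD a₄ ha₄ (fun x h1 h2 => (hV3m x h1 h2).2) tc hqtc hdtc
        filter_upwards [hkn] with t hknt hge hle
        rcases eq_or_lt_of_le hge with h | h
        · apply hknt
          rw [← h, hqtc]
        · exact hknt (hlt' t h hle).le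
    · set S := {t | q t ≤ -α} ∩ Icc 0 t₀ with hS
      have hSclosed : IsClosed S :=
        (isClosed_le hqcont continuous_const).inter isClosed_Icc
      have hSne : S.Nonempty := ⟨t₀, ht₀, ht₀pos.le, le_rfl⟩
      have hSbdd : BddBelow S := ⟨0, fun x hx => hx.2.1⟩
      set tc := sInf S with htc
      have htcS : tc ∈ S := hSclosed.csInf_mem hSne hSbdd
      have htcne : tc ≠ 0 := by
        intro h
        have h2 := htcS.1
        simp only [Set.mem_setOf_eq] at h2
        rw [h, hq0] at h2
        linarith
      have htcpos : 0 < tc := lt_of_le_of_ne htcS.2.1 (Ne.symm htcne)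
      have hlt' : ∀ t, 0 ≤ t → t < tc → -α < q t := by
        intro t h1 h2
        by_contra hge
        push_neg at hge
        have hmem : t ∈ S := ⟨hge, h1, le_trans h2.le htcS.2.2⟩
        exact absurd (csInf_le hSbdd hmem) (not_le.mpr h2)
      have hqtc : q tc = -α := by
        have hS1 := htcS.1
        simp only [Set.mem_setOf_eq] at hS1
        refine le_antisymm hS1 ?_
        have hto : Tendsto q (nhdsWithin tc (Iio tc)) (nhds (q tc)) :=
          (hqcont.continuousAt).continuousWithinAt.tendsto
        refine ge_of_tendsto hto ?_
        have hmem : Ioo 0 tc ∈ nhdsWithin tc (Iio tc) :=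
          Ioo_mem_nhdsLT_of_mem ⟨htcpos, le_rfl⟩
        filter_upwards [hmem] with t ht
        exact (hlt' t ht.1.le ht.2).le
      have hdtc : deriv q tc = 0 := by
        by_contra hne0
        have h1 := hPsi_pos _ hne0
        have h2 := hczero tc
        rw [hqtc, hVmα] at h2
        linarith
      refine touch_back (w := fun s => q s + α) (Λ := (2 * a₄ * c₂ / (r * c₁)) ^ r⁻¹)
        (a := 0) (hq1.add_const α) hΛD htcpos (by simp [hqtc]) ?_ ?_
      · intro t h1 h2
        show 0 < q t + α
        have := hlt' t h1 h2
        linarith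
      · have hkn := hKD a₄ ha₄ (fun x h1 h2 => (hV3m x h1 h2).2) tc hqtc hdtc
        filter_upwards [hkn] with t hknt hge hle
        rcases eq_or_lt_of_le hle with h | h
        · apply hknt
          rw [h, hqtc]
        · exact hknt (hlt' t hge h).le
  have hrange : ∀ t : ℝ, -α < q t ∧ q t < α := fun t => ⟨hdown t, hup t⟩
  -- derivative positive
  have hVqpos : ∀ t, 0 < V (q t) := fun t => hVpos _ (hrange t).1 (hrange t).2
  have hq'ne : ∀ t, deriv q t ≠ 0 := by
    intro t h
    have h1 := hczero t
    rw [h, hPsi0] at h1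
    linarith [hVqpos t]
  have hq'pos : ∀ t : ℝ, 0 < deriv q t := by
    have hall : (∀ t, 0 < deriv q t) ∨ (∀ t, deriv q t < 0) := by
      rcases lt_or_gt_of_ne (hq'ne 0) with h0 | h0
      · right
        intro t
        rcases lt_or_gt_of_ne (hq'ne t) with h | h
        · exact h
        · exfalso
          have hsub := intermediate_value_uIcc (a := (0:ℝ)) (b := t)
            (Continuous.continuousOn hq'c)
          have hmem : (0:ℝ) ∈ uIcc (deriv q 0) (deriv q t) := by
            rw [Set.mem_uIcc]
            left
            exact ⟨h0.le, h.le⟩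
          obtain ⟨t', _, ht'⟩ := hsub hmem
          exact hq'ne t' ht'
      · left
        intro t
        rcases lt_or_gt_of_ne (hq'ne t) with h | h
        · exfalso
          have hsub := intermediate_value_uIcc (a := t) (b := (0:ℝ))
            (Continuous.continuousOn hq'c)
          have hmem : (0:ℝ) ∈ uIcc (deriv q t) (deriv q 0) := by
            rw [Set.mem_uIcc]
            left
            exact ⟨h.le, h0.le⟩
          obtain ⟨t', _, ht'⟩ := hsub hmem
          exact hq'ne t' ht'
        · exact h
    rcases hall with h | h
    · exact h
    · exfalso
      have hanti : StrictAnti q := strictAnti_of_deriv_neg h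
      obtain ⟨T, hT⟩ := eventually_atTop.mp
        (htop.eventually_const_lt (show α / 2 < α by linarith))
      set t₁ := max T 1 with ht₁
      have h1 : q t₁ < q 0 := hanti (lt_of_lt_of_le one_pos (le_max_right T 1))
      have h2 := hT t₁ (le_max_left T 1)
      rw [hq0] at h1
      linarith
  have hmono : StrictMono q := strictMono_of_deriv_pos hq'pos
  -- decay
  have hq'abs : ∀ t : ℝ, V (q t) < φ δ₀ * δ₀ ^ 2 / 2 → |deriv q t| ≤ δ₀ := by
    intro t hVt
    by_contra hgt
    push_neg at hgt
    have h1 : φ δ₀ ≤ φ |deriv q t| :=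
      hm (Set.mem_Ici.mpr hδ₀.le) (Set.mem_Ici.mpr (abs_nonneg _)) hgt.le
    have h2 : δ₀ ^ 2 ≤ (deriv q t) ^ 2 := by
      rw [← sq_abs (deriv q t)]
      exact pow_le_pow_left₀ hδ₀.le hgt.le 2
    have h3 : φ δ₀ * δ₀ ^ 2 ≤ φ |deriv q t| * (deriv q t) ^ 2 := by
      apply mul_le_mul h1 h2 (by positivity) (le_trans (hp δ₀ hδ₀).le h1)
    have h4 := hPsi_half (deriv q t)
    have h5 := hczero t
    simp only [hPsidef] at h5 h4
    linarith
  have hq0le : ∀ t : ℝ, 0 ≤ t → 0 ≤ q t := by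
    intro t ht
    rcases eq_or_lt_of_le ht with h | h
    · rw [← h, hq0]
    · have := hmono h
      rw [hq0] at this
      linarith
  have hqle0 : ∀ t : ℝ, t ≤ 0 → q t ≤ 0 := by
    intro t ht
    rcases eq_or_lt_of_le ht with h | h
    · rw [h, hq0]
    · have := hmono h
      rw [hq0] at this
      linarith
  have hφδ₀pos : 0 < φ δ₀ * δ₀ ^ 2 / 2 := by
    have := hp δ₀ hδ₀
    positivity
  have hdecay_pos : ∃ θ₁ θ₂ : ℝ, 0 < θ₁ ∧ 0 < θ₂ ∧
      ∀ t : ℝ, 0 ≤ t → α - q t ≤ θ₁ * Real.exp (-θ₂ * t) := by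
    set C := (r * c₂ / (a₁ * c₁)) ^ r⁻¹ with hCdef
    have hCpos : 0 < C := Real.rpow_pos_of_pos (by positivity) _
    obtain ⟨T₀, hT⟩ := eventually_atTop.mp
      ((htop.eventually_const_lt (show α - min δ δ₀ < α by
          have := lt_min hδ hδ₀
          linarith)).and
        (hVq_top.eventually_lt_const hφδ₀pos))
    set T := max T₀ 0 with hTdef
    have hT0 : (0:ℝ) ≤ T := le_max_right _ _
    have hwest : ∀ t : ℝ, T ≤ t → α - q t ≤ C * deriv q t := by
      intro t ht
      have hTt := hT t (le_trans (le_max_left _ _) ht)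
      have hq'le := hq'abs t hTt.2
      have hw0 : 0 ≤ α - q t := (sub_nonneg.mpr (hup t).le)
      have hwδ : α - q t ≤ δ₀ := by
        have h1 := hTt.1
        have h2 : min δ δ₀ ≤ δ₀ := min_le_right _ _
        linarith
      have hVlow : a₁ * Phi φ (α - q t) ≤ V (q t) := by
        have h1 := hTt.1
        have h2 : min δ δ₀ ≤ δ := min_le_left _ _
        have h3 := (hV3p (q t) (by linarith) (hup t).le).1
        have habs : |q t - α| = α - q t := by
          rw [abs_of_nonpos (by linarith [(hup t).le])]
          ring
        rwa [habs] at h3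
      have hmain : a₁ * Phi φ (α - q t)
          ≤ φ |deriv q t| * (deriv q t) ^ 2 - Phi φ (deriv q t) := by
        have hcz := hczero t
        simp only [hPsidef] at hcz
        linarith
      have := key_lb hc hm hp hc₁ hc₂ hδ₀ hr h3 ha₁ hq'le hw0 hwδ hmain
      rwa [abs_of_pos (hq'pos t)] at this
    set θ₂ := C⁻¹ with hθ₂def
    have hθ₂pos : 0 < θ₂ := inv_pos.mpr hCpos
    set g : ℝ → ℝ := fun t => (α - q t) * Real.exp (θ₂ * t) with hgdef
    have hgd : ∀ x : ℝ, HasDerivAt g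
        ((-(deriv q x) + θ₂ * (α - q x)) * Real.exp (θ₂ * x)) x := by
      intro x
      have h1 : HasDerivAt (fun t => α - q t) (-(deriv q x)) x := by
        exact ((hasDerivAt_const x α).sub ((hq1 x).hasDerivAt)).congr_deriv (by ring)
      have h2 : HasDerivAt (fun t : ℝ => Real.exp (θ₂ * t))
          (Real.exp (θ₂ * x) * θ₂) x := by
        simpa using (((hasDerivAt_id x).const_mul θ₂).exp)
      have := h1.mul h2
      refine this.congr_deriv ?_
      ring
    have hanti : AntitoneOn g (Set.Ici T) := by
      apply antitoneOn_of_deriv_nonpos (convex_Ici T)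
      · exact Continuous.continuousOn (continuous_iff_continuousAt.mpr fun x => (hgd x).continuousAt)
      · intro x hx
        exact (hgd x).differentiableAt.differentiableWithinAt
      · intro x hx
        rw [interior_Ici] at hx
        rw [(hgd x).deriv]
        have hw := hwest x (le_of_lt hx)
        have h1 : θ₂ * (α - q x) ≤ deriv q x := by
          rw [hθ₂def]
          calc C⁻¹ * (α - q x) ≤ C⁻¹ * (C * deriv q x) :=
              mul_le_mul_of_nonneg_left hw (inv_pos.mpr hCpos).le
            _ = deriv q x := by field_simp
        have h2 : -(deriv q x) + θ₂ * (α - q x) ≤ 0 := by linarith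
        exact mul_nonpos_of_nonpos_of_nonneg h2 (Real.exp_pos _).le
    refine ⟨α * Real.exp (θ₂ * T), θ₂, by positivity, hθ₂pos, ?_⟩
    intro t ht
    rcases le_total t T with hcase | hcase
    · have h1 : α - q t ≤ α := by linarith [hq0le t ht]
      have h2 : Real.exp (θ₂ * T) * Real.exp (-θ₂ * t) = Real.exp (θ₂ * (T - t)) := by
        rw [← Real.exp_add]
        congr 1
        ring
      have h3 : (1:ℝ) ≤ Real.exp (θ₂ * (T - t)) :=
        Real.one_le_exp (mul_nonneg hθ₂pos.le (by linarith))
      calc α - q t ≤ α := h1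
        _ = α * 1 := by ring
        _ ≤ α * Real.exp (θ₂ * (T - t)) := mul_le_mul_of_nonneg_left h3 hα.le
        _ = α * Real.exp (θ₂ * T) * Real.exp (-θ₂ * t) := by rw [← h2]; ring
    · have hh : (α - q t) * Real.exp (θ₂ * t) ≤ α * Real.exp (θ₂ * T) := by
        have h1 : g t ≤ g T := hanti (Set.mem_Ici.mpr le_rfl) (Set.mem_Ici.mpr hcase) hcase
        have h2 : g T ≤ α * Real.exp (θ₂ * T) := by
          simp only [hgdef]
          have := hq0le T hT0
          have hexp := Real.exp_pos (θ₂ * T)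
          nlinarith
        exact le_trans h1 h2
      calc α - q t = ((α - q t) * Real.exp (θ₂ * t)) * Real.exp (-θ₂ * t) := by
            rw [mul_assoc, ← Real.exp_add]
            simp
        _ ≤ (α * Real.exp (θ₂ * T)) * Real.exp (-θ₂ * t) :=
            mul_le_mul_of_nonneg_right hh (Real.exp_pos _).le
        _ = α * Real.exp (θ₂ * T) * Real.exp (-θ₂ * t) := by ring
  have hdecay_neg : ∃ θ₃ θ₄ : ℝ, 0 < θ₃ ∧ 0 < θ₄ ∧
      ∀ t : ℝ, t ≤ 0 → α + q t ≤ θ₃ * Real.exp (θ₄ * t) := by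
    set C := (r * c₂ / (a₃ * c₁)) ^ r⁻¹ with hCdef
    have hCpos : 0 < C := Real.rpow_pos_of_pos (by positivity) _
    obtain ⟨T₀, hT⟩ := eventually_atBot.mp
      ((hbot.eventually_lt_const (show -α < -α + min δ δ₀ by
          have := lt_min hδ hδ₀
          linarith)).and
        (hVq_bot.eventually_lt_const hφδ₀pos))
    set T := min T₀ 0 with hTdef
    have hT0 : T ≤ (0:ℝ) := min_le_right _ _
    have heast : ∀ t : ℝ, t ≤ T → q t + α ≤ C * deriv q t := by
      intro t ht
      have hTt := hT t (le_trans ht (min_le_left _ _))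
      have hq'le := hq'abs t hTt.2
      have hw0 : 0 ≤ q t + α := by linarith [(hdown t)]
      have hwδ : q t + α ≤ δ₀ := by
        have h1 := hTt.1
        have h2 : min δ δ₀ ≤ δ₀ := min_le_right _ _
        linarith
      have hVlow : a₃ * Phi φ (q t + α) ≤ V (q t) := by
        have h1 := hTt.1
        have h2 : min δ δ₀ ≤ δ := min_le_left _ _
        have h3 := (hV3m (q t) (hdown t).le (by linarith)).1
        have habs : |q t + α| = q t + α := abs_of_nonneg hw0
        rwa [habs] at h3
      have hmain : a₃ * Phi φ (q t + α)
          ≤ φ |deriv q t| * (deriv q t) ^ 2 - Phi φ (deriv q t) := by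
        have hcz := hczero t
        simp only [hPsidef] at hcz
        linarith
      have := key_lb hc hm hp hc₁ hc₂ hδ₀ hr h3 ha₃ hq'le hw0 hwδ hmain
      rwa [abs_of_pos (hq'pos t)] at this
    set θ₄ := C⁻¹ with hθ₄def
    have hθ₄pos : 0 < θ₄ := inv_pos.mpr hCpos
    set g : ℝ → ℝ := fun t => (q t + α) * Real.exp (-θ₄ * t) with hgdef
    have hgd : ∀ x : ℝ, HasDerivAt g
        ((deriv q x - θ₄ * (q x + α)) * Real.exp (-θ₄ * x)) x := by
      intro x
      have h1 : HasDerivAt (fun t => q t + α) (deriv q x) x :=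
        ((hq1 x).hasDerivAt).add_const α
      have h2 : HasDerivAt (fun t : ℝ => Real.exp (-θ₄ * t))
          (Real.exp (-θ₄ * x) * (-θ₄)) x := by
        simpa using (((hasDerivAt_id x).const_mul (-θ₄)).exp)
      have := h1.mul h2
      refine this.congr_deriv ?_
      ring
    have hmono3 : MonotoneOn g (Set.Iic T) := by
      apply monotoneOn_of_deriv_nonneg (convex_Iic T)
      · exact Continuous.continuousOn (continuous_iff_continuousAt.mpr fun x => (hgd x).continuousAt)
      · intro x hx
        exact (hgd x).differentiableAt.differentiableWithinAt
      · intro x hx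
        rw [interior_Iic] at hx
        rw [(hgd x).deriv]
        have hw := heast x (le_of_lt hx)
        have h1 : θ₄ * (q x + α) ≤ deriv q x := by
          rw [hθ₄def]
          calc C⁻¹ * (q x + α) ≤ C⁻¹ * (C * deriv q x) :=
              mul_le_mul_of_nonneg_left hw (inv_pos.mpr hCpos).le
            _ = deriv q x := by field_simp
        exact mul_nonneg (by linarith) (Real.exp_pos _).le
    refine ⟨α * Real.exp (-θ₄ * T), θ₄, by positivity, hθ₄pos, ?_⟩
    intro t ht
    rcases le_total T t with hcase | hcase
    · have h1 : α + q t ≤ α := by linarith [hqle0 t ht]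
      have h2 : Real.exp (-θ₄ * T) * Real.exp (θ₄ * t) = Real.exp (θ₄ * (t - T)) := by
        rw [← Real.exp_add]
        congr 1
        ring
      have h3 : (1:ℝ) ≤ Real.exp (θ₄ * (t - T)) :=
        Real.one_le_exp (mul_nonneg hθ₄pos.le (by linarith))
      calc α + q t ≤ α := h1
        _ = α * 1 := by ring
        _ ≤ α * Real.exp (θ₄ * (t - T)) := mul_le_mul_of_nonneg_left h3 hα.le
        _ = α * Real.exp (-θ₄ * T) * Real.exp (θ₄ * t) := by rw [← h2]; ring
    · have hh : (q t + α) * Real.exp (-θ₄ * t) ≤ α * Real.exp (-θ₄ * T) := by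
        have h1 : g t ≤ g T := hmono3 (Set.mem_Iic.mpr hcase) (Set.mem_Iic.mpr le_rfl) hcase
        have h2 : g T ≤ α * Real.exp (-θ₄ * T) := by
          simp only [hgdef]
          have := hqle0 T hT0
          have hexp := Real.exp_pos (-θ₄ * T)
          nlinarith
        exact le_trans h1 h2
      calc α + q t = ((q t + α) * Real.exp (-θ₄ * t)) * Real.exp (θ₄ * t) := by
            rw [mul_assoc, ← Real.exp_add]
            simp
            ring
        _ ≤ (α * Real.exp (-θ₄ * T)) * Real.exp (θ₄ * t) :=
            mul_le_mul_of_nonneg_right hh (Real.exp_pos _).le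
        _ = α * Real.exp (-θ₄ * T) * Real.exp (θ₄ * t) := by ring
  obtain ⟨θ₁, θ₂, hθ₁, hθ₂, hd1⟩ := hdecay_pos
  obtain ⟨θ₃, θ₄, hθ₃, hθ₄, hd2⟩ := hdecay_neg
  refine ⟨θ₁, θ₂, θ₃, θ₄, hθ₁, hθ₂, hθ₃, hθ₄, ?_, ?_⟩
  · intro t ht
    exact ⟨by linarith [(hrange t).2], hd1 t ht⟩
  · intro t ht
    exact ⟨by linarith [(hrange t).1], hd2 t ht⟩
end
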